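/- arXiv:1712.09019 — 7 statements merged into one kernel-verified Lean document; each statement's English description precedes it below -/
import Mathlib

section
/- Let m be a positive integer and let n, x, y be rational integers satisfying n ≥ 3, max{|x|,|y|} ≥ 2 and Φ_n(x,y) = m. Then φ(n) ≤ (2/log 3)·log m and max{|x|,|y|} ≤ (2/√3)·m^{1/φ(n)}. -/
/-- The cyclotomic binary form `Φₙ(X,Y) = Y^{φ(n)} φₙ(X/Y)`, evaluated at integers. -/
noncomputable def cycBinaryForm (n : ℕ) (x y : ℤ) : ℤ :=
  ∑ i ∈ Finset.range (n.totient + 1),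
    (Polynomial.cyclotomic n ℤ).coeff i * x ^ i * y ^ (n.totient - i)

namespace CBFAux

open Polynomial

noncomputable def c : ℝ := Real.sqrt 3 / 2

lemma sqrt3_sq : Real.sqrt 3 ^ 2 = 3 := Real.sq_sqrt (by norm_num)

lemma sqrt3_nonneg : 0 ≤ Real.sqrt 3 := Real.sqrt_nonneg 3

lemma c_nonneg : 0 ≤ c := by unfold c; positivity

lemma c_sq : c ^ 2 = 3 / 4 := by
  unfold c; rw [div_pow, sqrt3_sq]; norm_num

lemma c_le_one : c ≤ 1 := by
  nlinarith [sqrt3_sq, sqrt3_nonneg, c_sq, c_nonneg]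

lemma c_pos : 0 < c := by
  have h := c_sq
  nlinarith [c_nonneg]

lemma c_pow6 : c ^ 6 = 27 / 64 := by
  have : c ^ 6 = (c ^ 2) ^ 3 := by ring
  rw [this, c_sq]; norm_num

lemma c_pow6_le_half : c ^ 6 ≤ 1 / 2 := by rw [c_pow6]; norm_num

lemma two_c_pow6_le_c : 2 * c ^ 6 ≤ c := by
  rw [c_pow6]
  unfold c
  nlinarith [sqrt3_sq, sqrt3_nonneg]

/-- `max 1 |t|` facts -/
lemma T_one_le (t : ℝ) : (1:ℝ) ≤ max 1 |t| := le_max_left _ _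
lemma T_abs_le (t : ℝ) : |t| ≤ max 1 |t| := le_max_right _ _
lemma T_nonneg (t : ℝ) : (0:ℝ) ≤ max 1 |t| := le_trans zero_le_one (T_one_le t)

lemma max_one_pow (a : ℝ) (ha : 0 ≤ a) (p : ℕ) : (max 1 a) ^ p = max 1 (a ^ p) := by
  rcases le_total a 1 with h | h
  · rw [max_eq_left h, one_pow, max_eq_left (pow_le_one₀ ha h)]
  · rw [max_eq_right h, max_eq_right (one_le_pow₀ h)]

lemma T_pow (t : ℝ) (p : ℕ) : (max 1 |t|) ^ p = max 1 |t ^ p| := by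
  rw [abs_pow]; exact max_one_pow |t| (abs_nonneg t) p

/-- Convert `(c*T)^(2j)` to `(3/4)^j * T^(2j)`. -/
lemma cT_pow_even (t : ℝ) (j : ℕ) :
    (c * max 1 |t|) ^ (2 * j) = (3/4) ^ j * (max 1 |t|) ^ (2 * j) := by
  have h1 : (c * max 1 |t|) ^ (2 * j) = ((c * max 1 |t|) ^ 2) ^ j := by
    rw [← pow_mul]
  have h2 : (c * max 1 |t|) ^ 2 = 3/4 * (max 1 |t|) ^ 2 := by
    rw [mul_pow, c_sq]
  rw [h1, h2, mul_pow, ← pow_mul]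

/-! ### Base polynomial inequalities -/

lemma b3 (t : ℝ) : (3/4) ^ 1 * (max 1 |t|) ^ (2*1) ≤ t^2 + t + 1 := by
  rcases le_total |t| 1 with h | h
  · rw [max_eq_left h]
    have h1 := abs_le.mp h
    nlinarith [sq_nonneg (2*t+1)]
  · rw [max_eq_right h]
    rcases abs_cases t with ⟨he, _⟩ | ⟨he, _⟩ <;> rw [he] <;> nlinarith [sq_nonneg (t+2), sq_nonneg (t-2)]

lemma b4 (t : ℝ) : (3/4) ^ 1 * (max 1 |t|) ^ (2*1) ≤ t^2 + 1 := by
  rcases le_total |t| 1 with h | h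
  · rw [max_eq_left h]; nlinarith [sq_nonneg t]
  · rw [max_eq_right h, sq_abs]; nlinarith [sq_nonneg t]

lemma b5 (t : ℝ) : (3/4) ^ 2 * (max 1 |t|) ^ (2*2) ≤ t^4 + t^3 + t^2 + t + 1 := by
  rcases le_total |t| 1 with h | h
  · rw [max_eq_left h]
    have h1 := abs_le.mp h
    nlinarith [sq_nonneg (t+1), sq_nonneg t, sq_nonneg (t^2+t), sq_nonneg (t^2-1)]
  · rw [max_eq_right h]
    rcases abs_cases t with ⟨he, ht⟩ | ⟨he, ht⟩ <;> rw [he]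
    · nlinarith [sq_nonneg (t-1), sq_nonneg t]
    · nlinarith [sq_nonneg (t^2 + 8/7*t), sq_nonneg (t+1), sq_nonneg (t^2-1), sq_nonneg t]

lemma b6 (t : ℝ) : (3/4) ^ 1 * (max 1 |t|) ^ (2*1) ≤ t^2 - t + 1 := by
  have h := b3 (-t)
  rw [abs_neg] at h
  nlinarith [h]

lemma b10 (t : ℝ) : (3/4) ^ 2 * (max 1 |t|) ^ (2*2) ≤ t^4 - t^3 + t^2 - t + 1 := by
  have h := b5 (-t)
  rw [abs_neg] at h
  nlinarith [h]

lemma b15 (t : ℝ) :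
    (3/4) ^ 4 * (max 1 |t|) ^ (2*4) ≤ t^8 - t^7 + t^5 - t^4 + t^3 - t + 1 := by
  rcases le_total |t| 1 with h | h
  · rw [max_eq_left h]
    have h1 := abs_le.mp h
    nlinarith [sq_nonneg (t-1), sq_nonneg (t+1), sq_nonneg t, sq_nonneg (t^2-1),
      sq_nonneg (t^3-t), sq_nonneg (t^4-t^2), (pow_le_one₀ (abs_nonneg t) h : |t|^8 ≤ 1),
      sq_nonneg (t^3 - 1/2), sq_nonneg (t^4 - 1/2)]
  · rw [max_eq_right h]
    rcases abs_cases t with ⟨he, ht⟩ | ⟨he, ht⟩ <;> rw [he]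
    · nlinarith [sq_nonneg (t^4 - t^3), sq_nonneg (t^2 - t), sq_nonneg (t^3-t^2),
        (one_le_pow₀ (by linarith : (1:ℝ) ≤ t) : 1 ≤ t^4), sq_nonneg (t^4-1)]
    · nlinarith [sq_nonneg (t^4 + t^3), sq_nonneg (t^2 + t), sq_nonneg (t^3+t^2),
        sq_nonneg (t^4-1), sq_nonneg (t^4 + 128/175*t), sq_nonneg t]

lemma b30 (t : ℝ) :
    (3/4) ^ 4 * (max 1 |t|) ^ (2*4) ≤ t^8 + t^7 - t^5 - t^4 - t^3 + t + 1 := by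
  have h := b15 (-t)
  rw [abs_neg] at h
  nlinarith [h]

/-! ### Evaluations of small cyclotomic polynomials -/

lemma e2 (t : ℝ) : (cyclotomic 2 ℝ).eval t = t + 1 := by
  rw [cyclotomic_two]; simp

lemma e3 (t : ℝ) : (cyclotomic 3 ℝ).eval t = t^2 + t + 1 := by
  haveI : Fact (Nat.Prime 3) := ⟨by norm_num⟩
  rw [cyclotomic_prime]
  simp [Finset.sum_range_succ]
  ring

lemma e5 (t : ℝ) : (cyclotomic 5 ℝ).eval t = t^4 + t^3 + t^2 + t + 1 := by
  haveI : Fact (Nat.Prime 5) := ⟨by norm_num⟩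
  rw [cyclotomic_prime]
  simp [Finset.sum_range_succ]
  ring

lemma e3pos (t : ℝ) : 0 < t^2 + t + 1 := by nlinarith [sq_nonneg (2*t+1)]

lemma e4 (t : ℝ) : (cyclotomic 4 ℝ).eval t = t^2 + 1 := by
  have h := cyclotomic_expand_eq_cyclotomic (p := 2) (n := 2) (by norm_num) (dvd_refl 2) ℝ
  have h2 : (cyclotomic 4 ℝ).eval t = (cyclotomic 2 ℝ).eval (t^2) := by
    rw [show (4:ℕ) = 2*2 from rfl, ← h, expand_eval]
  rw [h2, e2]

lemma e6 (t : ℝ) : (cyclotomic 6 ℝ).eval t = t^2 - t + 1 := by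
  have h := cyclotomic_expand_eq_cyclotomic_mul (p := 2) (n := 3) (by norm_num) (by norm_num) ℝ
  have h2 : (cyclotomic 3 ℝ).eval (t^2) = (cyclotomic 6 ℝ).eval t * (cyclotomic 3 ℝ).eval t := by
    rw [← expand_eval, h, show (3*2 : ℕ) = 6 from rfl, eval_mul]
  rw [e3, e3] at h2
  have h3 : 0 < t^2 + t + 1 := e3pos t
  have h4 : (t^2)^2 + t^2 + 1 = (t^2 - t + 1) * (t^2 + t + 1) := by ring
  rw [h4] at h2
  exact (mul_right_cancel₀ (ne_of_gt h3) h2.symm)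

lemma e5pos (t : ℝ) : 0 < t^4 + t^3 + t^2 + t + 1 := by
  rw [← e5]; exact cyclotomic_pos (by norm_num) t

lemma e10 (t : ℝ) : (cyclotomic 10 ℝ).eval t = t^4 - t^3 + t^2 - t + 1 := by
  have h := cyclotomic_expand_eq_cyclotomic_mul (p := 2) (n := 5) (by norm_num) (by norm_num) ℝ
  have h2 : (cyclotomic 5 ℝ).eval (t^2) = (cyclotomic 10 ℝ).eval t * (cyclotomic 5 ℝ).eval t := by
    rw [← expand_eval, h, show (5*2 : ℕ) = 10 from rfl, eval_mul]
  rw [e5, e5] at h2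
  have h3 := e5pos t
  have h4 : (t^2)^4 + (t^2)^3 + (t^2)^2 + t^2 + 1
      = (t^4 - t^3 + t^2 - t + 1) * (t^4 + t^3 + t^2 + t + 1) := by ring
  rw [h4] at h2
  exact (mul_right_cancel₀ (ne_of_gt h3) h2.symm)

lemma e15 (t : ℝ) :
    (cyclotomic 15 ℝ).eval t = t^8 - t^7 + t^5 - t^4 + t^3 - t + 1 := by
  have h := cyclotomic_expand_eq_cyclotomic_mul (p := 5) (n := 3) (by norm_num) (by norm_num) ℝ
  have h2 : (cyclotomic 3 ℝ).eval (t^5) = (cyclotomic 15 ℝ).eval t * (cyclotomic 3 ℝ).eval t := by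
    rw [← expand_eval, h, show (3*5 : ℕ) = 15 from rfl, eval_mul]
  rw [e3, e3] at h2
  have h3 := e3pos t
  have h4 : (t^5)^2 + t^5 + 1 = (t^8 - t^7 + t^5 - t^4 + t^3 - t + 1) * (t^2 + t + 1) := by ring
  rw [h4] at h2
  exact (mul_right_cancel₀ (ne_of_gt h3) h2.symm)

lemma e15pos (t : ℝ) : 0 < t^8 - t^7 + t^5 - t^4 + t^3 - t + 1 := by
  rw [← e15]; exact cyclotomic_pos (by norm_num) t

lemma e30 (t : ℝ) :
    (cyclotomic 30 ℝ).eval t = t^8 + t^7 - t^5 - t^4 - t^3 + t + 1 := by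
  have h := cyclotomic_expand_eq_cyclotomic_mul (p := 2) (n := 15) (by norm_num) (by norm_num) ℝ
  have h2 : (cyclotomic 15 ℝ).eval (t^2)
      = (cyclotomic 30 ℝ).eval t * (cyclotomic 15 ℝ).eval t := by
    rw [← expand_eval, h, show (15*2 : ℕ) = 30 from rfl, eval_mul]
  rw [e15, e15] at h2
  have h3 := e15pos t
  have h4 : (t^2)^8 - (t^2)^7 + (t^2)^5 - (t^2)^4 + (t^2)^3 - t^2 + 1
      = (t^8 + t^7 - t^5 - t^4 - t^3 + t + 1) * (t^8 - t^7 + t^5 - t^4 + t^3 - t + 1) := by ring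
  rw [h4] at h2
  exact (mul_right_cancel₀ (ne_of_gt h3) h2.symm)

/-! ### Generic bounds -/

/-- Evaluation at an integer is at least 1 (for `n ≥ 3`). -/
lemma eval_int_ge_one (n : ℕ) (hn : 2 < n) (x : ℤ) :
    (1:ℝ) ≤ (cyclotomic n ℝ).eval (x : ℝ) := by
  have h : (0:ℤ) < (cyclotomic n ℤ).eval x := cyclotomic_pos hn x
  have h1 : (1:ℤ) ≤ (cyclotomic n ℤ).eval x := h
  have h2 : (cyclotomic n ℝ).eval (x:ℝ) = (((cyclotomic n ℤ).eval x : ℤ) : ℝ) := by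
    rw [← map_cyclotomic_int n ℝ, eval_intCast_map]
    rfl
  rw [h2]
  exact_mod_cast h1

/-- Upper bound via the complex roots. -/
lemma eval_upper (r : ℕ) (hr : r ≠ 0) (t : ℝ) :
    (cyclotomic r ℝ).eval t ≤ (1 + |t|) ^ r.totient := by
  have hζ := Complex.isPrimitiveRoot_exp r hr
  have hprod := cyclotomic_eq_prod_X_sub_primitiveRoots hζ
  have hcard := hζ.card_primitiveRoots
  have hcast : (↑((cyclotomic r ℝ).eval t) : ℂ) = (cyclotomic r ℂ).eval (t : ℂ) := by
    have h0 : (cyclotomic r ℂ).eval ((algebraMap ℝ ℂ) t) = (algebraMap ℝ ℂ) ((cyclotomic r ℝ).eval t) := by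
      rw [← map_cyclotomic r (algebraMap ℝ ℂ), eval_map, eval₂_at_apply]
    simpa using h0.symm
  have hnorm : ‖(cyclotomic r ℂ).eval (t : ℂ)‖ ≤ (1 + |t|) ^ r.totient := by
    rw [hprod, eval_prod]
    simp only [eval_sub, eval_X, eval_C]
    rw [norm_prod, ← hcard]
    rw [← Finset.prod_const]
    apply Finset.prod_le_prod
    · intro i _; exact norm_nonneg _
    · intro μ hμ
      have hμ' : IsPrimitiveRoot μ r := (mem_primitiveRoots (Nat.pos_of_ne_zero hr)).mp hμ
      have hone : ‖μ‖ = 1 :=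
        Complex.norm_eq_one_of_pow_eq_one hμ'.pow_eq_one hr
      calc ‖(t:ℂ) - μ‖ ≤ ‖(t:ℂ)‖ + ‖μ‖ := norm_sub_le _ _
        _ = |t| + 1 := by rw [hone, Complex.norm_real, Real.norm_eq_abs]
        _ = 1 + |t| := by ring
  calc (cyclotomic r ℝ).eval t ≤ |(cyclotomic r ℝ).eval t| := le_abs_self _
    _ = ‖(↑((cyclotomic r ℝ).eval t) : ℂ)‖ := by rw [Complex.norm_real, Real.norm_eq_abs]
    _ = ‖(cyclotomic r ℂ).eval (t : ℂ)‖ := by rw [hcast]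
    _ ≤ (1 + |t|) ^ r.totient := hnorm

/-! ### The case `n = p` prime, `p ≥ 7` -/

lemma prime_case (p : ℕ) (hp : p.Prime) (hp7 : 7 ≤ p) (t : ℝ) :
    (c * max 1 |t|) ^ (p - 1) ≤ (cyclotomic p ℝ).eval t := by
  haveI : Fact p.Prime := ⟨hp⟩
  obtain ⟨k, rfl⟩ : ∃ k, p = k + 1 := ⟨p - 1, by omega⟩
  have hk6 : 6 ≤ k := by omega
  simp only [Nat.add_sub_cancel]
  have hodd : Odd (k+1) := hp.odd_of_ne_two (by omega)
  have hG : (cyclotomic (k+1) ℝ).eval t = ∑ i ∈ Finset.range (k+1), t ^ i := by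
    rw [cyclotomic_prime, eval_geom_sum]
  have hgm : (cyclotomic (k+1) ℝ).eval t * (t - 1) = t ^ (k+1) - 1 := by
    rw [hG]; exact geom_sum_mul t (k+1)
  have hck : c ^ k ≤ 1/2 :=
    le_trans (pow_le_pow_of_le_one c_nonneg c_le_one hk6) c_pow6_le_half
  rcases le_or_gt 1 t with ht | ht
  · -- t ≥ 1
    have hT : max 1 |t| = t := by rw [abs_of_nonneg (by linarith), max_eq_right ht]
    rw [hT, hG]
    calc (c*t)^k ≤ t^k := by
          apply pow_le_pow_left₀ (mul_nonneg c_nonneg (by linarith))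
          nlinarith [c_le_one, c_nonneg]
      _ ≤ ∑ i ∈ Finset.range (k+1), t^i :=
          Finset.single_le_sum (f := fun i => t^i)
            (fun i _ => pow_nonneg (by linarith) i) (Finset.self_mem_range_succ k)
  · rcases le_or_gt t (-1) with ht' | ht'
    · -- t ≤ -1
      obtain ⟨u, htu⟩ : ∃ u, t = -u := ⟨-t, by ring⟩
      subst htu
      have hu1 : 1 ≤ u := by linarith
      have hT : max 1 |(-u)| = u := by
        rw [abs_neg, abs_of_nonneg (by linarith), max_eq_right hu1]
      rw [hT]
      set G := (cyclotomic (k+1) ℝ).eval (-u) with hGdef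
      have hop : (-u)^(k+1) = -(u^(k+1)) := hodd.neg_pow u
      rw [hop] at hgm
      have hid : G * (u + 1) = u^(k+1) + 1 := by linear_combination -hgm
      have hupow : u^k * u = u^(k+1) := by rw [← pow_succ]
      have hule : u^k ≤ u^(k+1) := pow_le_pow_right₀ hu1 (by omega)
      have h3 : ((1/2) * u^k) * (u+1) ≤ G * (u+1) := by
        rw [hid]; nlinarith [one_le_pow₀ hu1 (n := k)]
      have h4 : (1/2) * u^k ≤ G :=
        le_of_mul_le_mul_right h3 (show (0:ℝ) < u + 1 by linarith)
      calc (c*u)^k = c^k * u^k := mul_pow c u k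
        _ ≤ (1/2) * u^k := mul_le_mul_of_nonneg_right hck (pow_nonneg (by linarith) k)
        _ ≤ G := h4
    · -- -1 < t < 1
      have hT : max 1 |t| = 1 := max_eq_left (abs_le.mpr ⟨by linarith, by linarith⟩)
      rw [hT, mul_one]
      set G := (cyclotomic (k+1) ℝ).eval t with hGdef
      have hclaim : t^(k+1) ≤ (1+t)/2 := by
        rcases le_or_gt 0 t with h0 | h0
        · have h1 : t^(k+1) ≤ t^1 := pow_le_pow_of_le_one h0 (by linarith) (by omega)
          simp only [pow_one] at h1; linarith
        · have h1 : t^(k+1) ≤ 0 := hodd.pow_nonpos (by linarith)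
          linarith
      have hid2 : G * (1 - t) = 1 - t^(k+1) := by linear_combination -hgm
      have h3 : (1/2) * (1-t) ≤ G * (1-t) := by rw [hid2]; linarith
      have h4 : (1/2 : ℝ) ≤ G :=
        le_of_mul_le_mul_right h3 (show (0:ℝ) < 1 - t by linarith)
      calc c^k ≤ 1/2 := hck
        _ ≤ G := h4

/-! ### The case `n = 2p`, `p ≥ 7` prime -/

lemma twop_case (p : ℕ) (hp : p.Prime) (hp7 : 7 ≤ p) (t : ℝ)
    (hid : t ^ p + 1 = (cyclotomic (2*p) ℝ).eval t * (t + 1)) :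
    (c * max 1 |t|) ^ (p - 1) ≤ (cyclotomic (2*p) ℝ).eval t := by
  obtain ⟨k, rfl⟩ : ∃ k, p = k + 1 := ⟨p - 1, by omega⟩
  have hk6 : 6 ≤ k := by omega
  simp only [Nat.add_sub_cancel]
  have hodd : Odd (k+1) := hp.odd_of_ne_two (by omega)
  have hck : c ^ k ≤ 1/2 :=
    le_trans (pow_le_pow_of_le_one c_nonneg c_le_one hk6) c_pow6_le_half
  rcases le_or_gt 1 t with ht | ht
  · -- t ≥ 1
    have hT : max 1 |t| = t := by rw [abs_of_nonneg (by linarith), max_eq_right ht]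
    rw [hT]
    set G := (cyclotomic (2*(k+1)) ℝ).eval t with hGdef
    have hupow : t^k * t = t^(k+1) := by rw [← pow_succ]
    have hule : t^k ≤ t^(k+1) := pow_le_pow_right₀ ht (by omega)
    have h3 : ((1/2) * t^k) * (t+1) ≤ G * (t+1) := by
      rw [← hid]; nlinarith [one_le_pow₀ ht (n := k)]
    have h4 : (1/2) * t^k ≤ G :=
      le_of_mul_le_mul_right h3 (show (0:ℝ) < t + 1 by linarith)
    calc (c*t)^k = c^k * t^k := mul_pow c t k
      _ ≤ (1/2) * t^k := mul_le_mul_of_nonneg_right hck (pow_nonneg (by linarith) k)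
      _ ≤ G := h4
  · rcases lt_or_ge t (-1) with ht' | ht'
    · -- t < -1
      obtain ⟨u, htu⟩ : ∃ u, t = -u := ⟨-t, by ring⟩
      subst htu
      have hu1 : 1 < u := by linarith
      have hT : max 1 |(-u)| = u := by
        rw [abs_neg, abs_of_nonneg (by linarith), max_eq_right (le_of_lt hu1)]
      rw [hT]
      set G := (cyclotomic (2*(k+1)) ℝ).eval (-u) with hGdef
      have hop : (-u)^(k+1) = -(u^(k+1)) := hodd.neg_pow u
      rw [hop] at hid
      have hid2 : G * (u - 1) = u^(k+1) - 1 := by linear_combination hid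
      have hupow : u^k * u = u^(k+1) := by rw [← pow_succ]
      have hone : (1:ℝ) ≤ u^k := one_le_pow₀ (by linarith)
      have h3 : u^k * (u-1) ≤ G * (u-1) := by rw [hid2]; nlinarith
      have h4 : u^k ≤ G :=
        le_of_mul_le_mul_right h3 (show (0:ℝ) < u - 1 by linarith)
      calc (c*u)^k ≤ u^k := by
            apply pow_le_pow_left₀ (mul_nonneg c_nonneg (by linarith))
            nlinarith [c_le_one, c_nonneg]
        _ ≤ G := h4
    · -- -1 ≤ t < 1
      have hT : max 1 |t| = 1 := max_eq_left (abs_le.mpr ⟨by linarith, by linarith⟩)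
      rw [hT, mul_one]
      set G := (cyclotomic (2*(k+1)) ℝ).eval t with hGdef
      rcases eq_or_lt_of_le ht' with hteq | ht''
      · -- t = -1 : integrality
        have hint : (1:ℝ) ≤ (cyclotomic (2*(k+1)) ℝ).eval ((-1 : ℤ) : ℝ) :=
          eval_int_ge_one (2*(k+1)) (by omega) (-1)
        have hcast : ((-1 : ℤ) : ℝ) = t := by rw [← hteq]; norm_num
        rw [hcast] at hint
        calc c^k ≤ 1 := pow_le_one₀ c_nonneg c_le_one
          _ ≤ G := hint
      · -- -1 < t < 1
        have hclaim : (t-1)/2 ≤ t^(k+1) := by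
          rcases le_or_gt 0 t with h0 | h0
          · have h1 : 0 ≤ t^(k+1) := pow_nonneg h0 _
            linarith
          · have h1 : |t|^(k+1) ≤ |t|^1 :=
              pow_le_pow_of_le_one (abs_nonneg t) (le_of_lt (abs_lt.mpr ⟨ht'', ht⟩)) (by omega)
            simp only [pow_one] at h1
            have h2 : -(|t|^(k+1)) ≤ t^(k+1) := by
              rw [← abs_pow]; exact neg_abs_le _
            have h3 : -|t| = t := by rw [abs_of_neg h0]; ring
            nlinarith
        have h3 : (1/2) * (t+1) ≤ G * (t+1) := by rw [← hid]; linarith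
        have h4 : (1/2 : ℝ) ≤ G :=
          le_of_mul_le_mul_right h3 (show (0:ℝ) < t + 1 by linarith)
        calc c^k ≤ 1/2 := hck
          _ ≤ G := h4

/-! ### The key lower bound -/

lemma key : ∀ n : ℕ, 3 ≤ n → ∀ t : ℝ,
    (c * max 1 |t|) ^ n.totient ≤ (cyclotomic n ℝ).eval t := by
  intro n
  induction n using Nat.strong_induction_on with
  | _ n IH =>
    intro hn t
    by_cases hsf : Squarefree n
    · by_cases hsmall : ∀ p ∈ n.primeFactors, p ≤ 5
      · -- all prime factors ≤ 5 : n ∣ 30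
        have hsub : n.primeFactors ⊆ ({2, 3, 5} : Finset ℕ) := by
          intro p hpmem
          have hpp := Nat.prime_of_mem_primeFactors hpmem
          have hle := hsmall p hpmem
          have h2 := hpp.two_le
          have h4 : p ≠ 4 := by rintro rfl; norm_num at hpp
          simp only [Finset.mem_insert, Finset.mem_singleton]
          omega
        have hdvd : n ∣ 30 := by
          have h1 : ∏ p ∈ n.primeFactors, p = n := Nat.prod_primeFactors_of_squarefree hsf
          have h2 := Finset.prod_dvd_prod_of_subset _ _ (fun p => p) hsub
          rw [h1] at h2
          have h3 : ∏ p ∈ ({2, 3, 5} : Finset ℕ), p = 30 := by decide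
          rwa [h3] at h2
        have hle30 : n ≤ 30 := Nat.le_of_dvd (by norm_num) hdvd
        have hd : ∀ m : ℕ, m < 31 → m ∣ 30 →
            m = 1 ∨ m = 2 ∨ m = 3 ∨ m = 5 ∨ m = 6 ∨ m = 10 ∨ m = 15 ∨ m = 30 := by decide
        rcases hd n (by omega) hdvd with rfl | rfl | rfl | rfl | rfl | rfl | rfl | rfl
        · exact absurd hn (by norm_num)
        · exact absurd hn (by norm_num)
        · rw [show Nat.totient 3 = 2*1 from by decide, cT_pow_even, e3]; exact b3 t
        · rw [show Nat.totient 5 = 2*2 from by decide, cT_pow_even, e5]; exact b5 t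
        · rw [show Nat.totient 6 = 2*1 from by decide, cT_pow_even, e6]; exact b6 t
        · rw [show Nat.totient 10 = 2*2 from by decide, cT_pow_even, e10]; exact b10 t
        · rw [show Nat.totient 15 = 2*4 from by decide, cT_pow_even, e15]; exact b15 t
        · rw [show Nat.totient 30 = 2*4 from by decide, cT_pow_even, e30]; exact b30 t
      · -- there is a prime factor ≥ 7
        push_neg at hsmall
        obtain ⟨p, hpmem, hp5⟩ := hsmall
        have hp : p.Prime := Nat.prime_of_mem_primeFactors hpmem
        have hpn : p ∣ n := Nat.dvd_of_mem_primeFactors hpmem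
        have hp7 : 7 ≤ p := by
          have h2 := hp.two_le
          have hne6 : p ≠ 6 := by rintro rfl; norm_num at hp
          omega
        have hrn : n / p * p = n := Nat.div_mul_cancel hpn
        set r := n / p with hrdef
        have hr0 : 0 < r := by
          rcases Nat.eq_zero_or_pos r with h | h
          · rw [h, zero_mul] at hrn; omega
          · exact h
        have hpr : ¬ p ∣ r := by
          intro hdv
          have hppn : p * p ∣ n := by
            rw [← hrn]; exact mul_dvd_mul hdv dvd_rfl
          have hu := hsf p hppn
          exact hp.one_lt.ne' (Nat.isUnit_iff.mp hu)
        have hid0 : ∀ s : ℝ, (cyclotomic r ℝ).eval (s^p)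
            = (cyclotomic n ℝ).eval s * (cyclotomic r ℝ).eval s := by
          intro s
          rw [← expand_eval, cyclotomic_expand_eq_cyclotomic_mul hp hpr ℝ, hrn, eval_mul]
        have htot : n.totient = r.totient * (p - 1) := by
          rw [← hrn, Nat.totient_mul ((hp.coprime_iff_not_dvd.mpr hpr).symm),
            Nat.totient_prime hp]
        rcases (show r = 1 ∨ r = 2 ∨ 3 ≤ r by omega) with hr1 | hr2 | hr3
        · -- n = p
          have hnp : n = p := by rw [← hrn, hr1, one_mul]
          rw [hnp, Nat.totient_prime hp]
          exact prime_case p hp hp7 t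
        · -- n = 2p
          have hnp : n = 2 * p := by rw [← hrn, hr2]
          have htot2 : n.totient = p - 1 := by
            rw [htot, hr2, Nat.totient_two, one_mul]
          have h := hid0 t
          rw [hr2, e2, e2, hnp] at h
          rw [htot2, hnp]
          exact twop_case p hp hp7 t h
        · -- main induction step
          have hrlt : r < n := by
            have h1 : r < r * p := (Nat.lt_mul_iff_one_lt_right hr0).mpr (by omega)
            rwa [hrn] at h1
          have hIH := IH r hrlt hr3 (t^p)
          rw [← T_pow] at hIH
          have hE : 0 < (cyclotomic r ℝ).eval t := cyclotomic_pos (by omega) t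
          have hEub : (cyclotomic r ℝ).eval t ≤ (2 * max 1 |t|) ^ r.totient := by
            calc (cyclotomic r ℝ).eval t ≤ (1 + |t|) ^ r.totient :=
                  eval_upper r (by omega) t
              _ ≤ (2 * max 1 |t|) ^ r.totient := by
                  apply pow_le_pow_left₀ (by positivity)
                  have h1 := T_one_le t; have h2 := T_abs_le t
                  linarith
          apply le_of_mul_le_mul_right _ hE
          obtain ⟨k, rfl⟩ : ∃ k, p = k + 1 := ⟨p - 1, by omega⟩
          have hk6 : 6 ≤ k := by omega
          have hinner : (c * max 1 |t|) ^ k * (2 * max 1 |t|) ≤ c * (max 1 |t|) ^ (k+1) := by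
            have h1 : (c * max 1 |t|) ^ k * (2 * max 1 |t|)
                = (2 * c^k) * (max 1 |t|) ^ (k+1) := by
              rw [mul_pow, pow_succ]; ring
            rw [h1]
            apply mul_le_mul_of_nonneg_right _ (pow_nonneg (T_nonneg t) _)
            calc 2 * c^k ≤ 2 * c^6 := by
                  have := pow_le_pow_of_le_one c_nonneg c_le_one hk6
                  linarith
              _ ≤ c := two_c_pow6_le_c
          have hcT0 : 0 ≤ c * max 1 |t| := mul_nonneg c_nonneg (T_nonneg t)
          have h5 : ((c * max 1 |t|) ^ k * (2 * max 1 |t|)) ^ r.totient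
              = (c * max 1 |t|) ^ (r.totient * k) * (2 * max 1 |t|) ^ r.totient := by
            rw [mul_pow, ← pow_mul, mul_comm k r.totient]
          calc (c * max 1 |t|) ^ n.totient * (cyclotomic r ℝ).eval t
              ≤ (c * max 1 |t|) ^ n.totient * (2 * max 1 |t|) ^ r.totient := by
                apply mul_le_mul_of_nonneg_left hEub (pow_nonneg hcT0 _)
            _ = ((c * max 1 |t|) ^ k * (2 * max 1 |t|)) ^ r.totient := by
                rw [htot, Nat.add_sub_cancel]
                exact h5.symm
            _ ≤ (c * (max 1 |t|) ^ (k+1)) ^ r.totient := by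
                apply pow_le_pow_left₀ _ hinner
                exact mul_nonneg (pow_nonneg hcT0 _)
                  (mul_nonneg (by norm_num) (T_nonneg t))
            _ ≤ (cyclotomic n ℝ).eval t * (cyclotomic r ℝ).eval t := by
                rw [← hid0 t]
                exact hIH
    · -- not squarefree
      rw [Nat.squarefree_iff_prime_squarefree] at hsf
      push_neg at hsf
      obtain ⟨p, hpP, hpp⟩ := hsf
      have hp : p.Prime := hpP
      have hpn : p ∣ n := dvd_trans (dvd_mul_left p p) hpp
      have hqn : n / p * p = n := Nat.div_mul_cancel hpn
      set q := n / p with hqdef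
      have hq0 : 0 < q := by
        rcases Nat.eq_zero_or_pos q with h | h
        · rw [h, zero_mul] at hqn; omega
        · exact h
      have hpq : p ∣ q := by
        have h1 : p * p ∣ q * p := by rw [hqn]; exact hpp
        exact (Nat.mul_dvd_mul_iff_right hp.pos).mp h1
      have hq2 : 2 ≤ q := le_trans hp.two_le (Nat.le_of_dvd hq0 hpq)
      have heval : (cyclotomic n ℝ).eval t = (cyclotomic q ℝ).eval (t^p) := by
        rw [← hqn, ← cyclotomic_expand_eq_cyclotomic hp hpq ℝ, expand_eval]
      have htot : n.totient = p * q.totient := by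
        rw [← hqn, mul_comm q p, Nat.totient_mul_of_prime_of_dvd hp hpq]
      rcases eq_or_lt_of_le hq2 with hq2' | hq3
      · -- q = 2, n = 4
        have hp2 : p = 2 := by
          have h1 : p ∣ 2 := by rw [hq2']; exact hpq
          exact (Nat.prime_dvd_prime_iff_eq hp Nat.prime_two).mp h1
        have hn4 : n = 4 := by rw [← hqn, ← hq2', hp2]
        rw [hn4, show Nat.totient 4 = 2*1 from by decide, cT_pow_even, e4]
        exact b4 t
      · -- 3 ≤ q
        have hqlt : q < n := by
          have h1 : q < q * p := (Nat.lt_mul_iff_one_lt_right hq0).mpr hp.one_lt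
          rwa [hqn] at h1
        have hIH := IH q hqlt hq3 (t^p)
        rw [← T_pow] at hIH
        rw [heval, htot]
        calc (c * max 1 |t|) ^ (p * q.totient)
            = c ^ (p * q.totient) * (max 1 |t|) ^ (p * q.totient) := mul_pow _ _ _
          _ ≤ c ^ q.totient * (max 1 |t|) ^ (p * q.totient) := by
              apply mul_le_mul_of_nonneg_right _ (pow_nonneg (T_nonneg t) _)
              exact pow_le_pow_of_le_one c_nonneg c_le_one
                (Nat.le_mul_of_pos_left _ hp.pos)
          _ = (c * (max 1 |t|) ^ p) ^ q.totient := by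
              rw [mul_pow, ← pow_mul]
          _ ≤ (cyclotomic q ℝ).eval (t^p) := hIH

/-! ### Integer form of the key bound -/

lemma key_int (n : ℕ) (hn : 3 ≤ n) (x y : ℤ) (m : ℕ)
    (hrep : cycBinaryForm n x y = (m : ℤ)) :
    (c * max |(x:ℝ)| |(y:ℝ)|) ^ n.totient ≤ (m : ℝ) := by
  have hφeven : Even n.totient := Nat.totient_even (by omega)
  by_cases hy : y = 0
  · subst hy
    have hform : cycBinaryForm n x 0 = x ^ n.totient := by
      unfold cycBinaryForm
      rw [Finset.sum_range_succ]
      have hz : ∀ i ∈ Finset.range n.totient,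
          (cyclotomic n ℤ).coeff i * x ^ i * (0:ℤ) ^ (n.totient - i) = 0 := by
        intro i hi
        rw [Finset.mem_range] at hi
        rw [zero_pow (by omega : n.totient - i ≠ 0)]; ring
      rw [Finset.sum_eq_zero hz, zero_add, Nat.sub_self, pow_zero, mul_one]
      have hlead : (cyclotomic n ℤ).coeff n.totient = 1 := by
        have hmono := cyclotomic.monic n ℤ
        have hdeg := natDegree_cyclotomic n ℤ
        rw [← hdeg]
        exact hmono.coeff_natDegree
      rw [hlead, one_mul]
    rw [hform] at hrep
    have hx : (m:ℝ) = |(x:ℝ)| ^ n.totient := by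
      rw [hφeven.pow_abs]
      exact_mod_cast hrep.symm
    have hmax : max |(x:ℝ)| |((0:ℤ):ℝ)| = |(x:ℝ)| := by
      simp [abs_nonneg]
    rw [hx, hmax]
    apply pow_le_pow_left₀ (mul_nonneg c_nonneg (abs_nonneg _))
    nlinarith [c_le_one, c_nonneg, abs_nonneg (x:ℝ)]
  · have hy0 : (y:ℝ) ≠ 0 := Int.cast_ne_zero.mpr hy
    have hay0 : |(y:ℝ)| ≠ 0 := abs_ne_zero.mpr hy0
    set t : ℝ := (x:ℝ) / (y:ℝ) with ht
    have hform : (m:ℝ) = (y:ℝ) ^ n.totient * (cyclotomic n ℝ).eval t := by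
      rw [show ((m:ℕ):ℝ) = ((cycBinaryForm n x y : ℤ) : ℝ) by rw [hrep]; push_cast; ring]
      rw [eval_eq_sum_range, natDegree_cyclotomic, Finset.mul_sum]
      unfold cycBinaryForm
      push_cast
      apply Finset.sum_congr rfl
      intro i hi
      rw [Finset.mem_range] at hi
      have hile : i ≤ n.totient := by omega
      have hcoeff : ((cyclotomic n ℤ).coeff i : ℝ) = (cyclotomic n ℝ).coeff i := by
        rw [← map_cyclotomic_int n ℝ, coeff_map]
        rfl
      rw [hcoeff, ht, div_pow]
      have hysplit : (y:ℝ) ^ n.totient = (y:ℝ) ^ (n.totient - i) * (y:ℝ) ^ i := by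
        rw [← pow_add]
        congr 1
        omega
      rw [hysplit]
      field_simp
    have hkey := key n hn t
    have habs : |(y:ℝ)| * max 1 |t| = max |(y:ℝ)| |(x:ℝ)| := by
      rw [ht, abs_div, mul_max_of_nonneg _ _ (abs_nonneg (y:ℝ)), mul_one,
        mul_div_cancel₀ _ hay0]
    calc (c * max |(x:ℝ)| |(y:ℝ)|) ^ n.totient
        = (|(y:ℝ)| * (c * max 1 |t|)) ^ n.totient := by
          rw [max_comm, ← habs]; ring_nf
      _ = |(y:ℝ)| ^ n.totient * (c * max 1 |t|) ^ n.totient := mul_pow _ _ _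
      _ ≤ |(y:ℝ)| ^ n.totient * (cyclotomic n ℝ).eval t :=
          mul_le_mul_of_nonneg_left hkey (pow_nonneg (abs_nonneg _) _)
      _ = (y:ℝ) ^ n.totient * (cyclotomic n ℝ).eval t := by rw [hφeven.pow_abs]
      _ = (m:ℝ) := hform.symm

end CBFAux

theorem stmt0 (m : ℕ) (hm : 0 < m) (n : ℕ) (x y : ℤ)
    (hn : 3 ≤ n) (hxy : 2 ≤ max |x| |y|)
    (hrep : cycBinaryForm n x y = (m : ℤ)) :
    (n.totient : ℝ) ≤ (2 / Real.log 3) * Real.log m ∧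
    ((max |x| |y| : ℤ) : ℝ) ≤ (2 / Real.sqrt 3) * (m : ℝ) ^ ((1 : ℝ) / (n.totient : ℝ)) := by
  open CBFAux in
  have hφpos : 0 < n.totient := Nat.totient_pos.mpr (by omega)
  have KI := CBFAux.key_int n hn x y m hrep
  have hMcast : ((max |x| |y| : ℤ) : ℝ) = max |(x:ℝ)| |(y:ℝ)| := by
    push_cast
    rfl
  have hM2 : (2:ℝ) ≤ max |(x:ℝ)| |(y:ℝ)| := by
    rw [← hMcast]
    exact_mod_cast hxy
  have hs3 : (0:ℝ) < Real.sqrt 3 := Real.sqrt_pos.mpr (by norm_num)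
  have hc2 : CBFAux.c * 2 = Real.sqrt 3 := by unfold CBFAux.c; ring
  constructor
  · -- degree bound
    have h1 : (Real.sqrt 3) ^ n.totient ≤ (m:ℝ) := by
      calc (Real.sqrt 3) ^ n.totient = (CBFAux.c * 2) ^ n.totient := by rw [hc2]
        _ ≤ (CBFAux.c * max |(x:ℝ)| |(y:ℝ)|) ^ n.totient := by
            apply pow_le_pow_left₀ (mul_nonneg CBFAux.c_nonneg (by norm_num))
            exact mul_le_mul_of_nonneg_left hM2 CBFAux.c_nonneg
        _ ≤ (m:ℝ) := KI
    have hlog := Real.log_le_log (by positivity) h1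
    rw [Real.log_pow, Real.log_sqrt (by norm_num)] at hlog
    have hl3 : (0:ℝ) < Real.log 3 := Real.log_pos (by norm_num)
    rw [div_mul_eq_mul_div, le_div_iff₀ hl3]
    linarith
  · -- size bound
    have hcM : (0:ℝ) < CBFAux.c * max |(x:ℝ)| |(y:ℝ)| :=
      mul_pos CBFAux.c_pos (lt_of_lt_of_le two_pos hM2)
    have hφR : (0:ℝ) < (n.totient : ℝ) := by exact_mod_cast hφpos
    have h2 : CBFAux.c * max |(x:ℝ)| |(y:ℝ)| ≤ (m:ℝ) ^ ((1:ℝ) / (n.totient : ℝ)) := by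
      have e1 : ((CBFAux.c * max |(x:ℝ)| |(y:ℝ)|) ^ n.totient) ^ ((1:ℝ) / (n.totient:ℝ))
          ≤ (m:ℝ) ^ ((1:ℝ) / (n.totient:ℝ)) :=
        Real.rpow_le_rpow (le_of_lt (pow_pos hcM _)) KI (by positivity)
      rwa [← Real.rpow_natCast (CBFAux.c * max |(x:ℝ)| |(y:ℝ)|) n.totient,
        ← Real.rpow_mul (le_of_lt hcM), mul_one_div, div_self (ne_of_gt hφR),
        Real.rpow_one] at e1
    rw [hMcast]
    have hrw : max |(x:ℝ)| |(y:ℝ)|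
        = (2 / Real.sqrt 3) * (CBFAux.c * max |(x:ℝ)| |(y:ℝ)|) := by
      unfold CBFAux.c
      field_simp
    rw [hrw]
    exact mul_le_mul_of_nonneg_left h2 (by positivity)
end

section
/- There are no integers n, x, y with n ≥ 3 and max{|x|,|y|} ≥ 2 such that Φ_n(x,y) = 1 or Φ_n(x,y) = 2. -/
open Polynomial Finset Complex

lemma B_y_one (n : ℕ) (x : ℤ) : cycBinaryForm n x 1 = eval x (cyclotomic n ℤ) := by
  unfold cycBinaryForm
  rw [eval_eq_sum_range, natDegree_cyclotomic]
  simp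

lemma B_y_neg_one (n : ℕ) (ht : Even n.totient) (x : ℤ) :
    cycBinaryForm n x (-1) = eval (-x) (cyclotomic n ℤ) := by
  unfold cycBinaryForm
  rw [eval_eq_sum_range, natDegree_cyclotomic]
  apply Finset.sum_congr rfl
  intro i hi
  have hi' : i ≤ n.totient := by simp at hi; omega
  rw [neg_pow x i]
  rcases Nat.even_or_odd i with he | ho
  · have h2 : Even (n.totient - i) := (Nat.even_sub hi').mpr ⟨fun _ => he, fun _ => ht⟩
    rw [h2.neg_one_pow, he.neg_one_pow]; ring
  · rw [(Nat.Even.sub_odd hi' ht ho).neg_one_pow, ho.neg_one_pow]; ring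

lemma B_x_zero (n : ℕ) (x : ℤ) : cycBinaryForm n x 0 = x ^ n.totient := by
  unfold cycBinaryForm
  rw [Finset.sum_eq_single n.totient]
  · rw [show (cyclotomic n ℤ).coeff n.totient = 1 by
      simpa [natDegree_cyclotomic] using (cyclotomic.monic n ℤ).coeff_natDegree]
    simp
  · intro i hi hne
    rw [zero_pow (by simp at hi; omega), mul_zero]
  · intro h; exact absurd (self_mem_range_succ _) h

lemma B_eq_eval (n : ℕ) (x y : ℤ) (hy : y ≠ 0) :
    ((cycBinaryForm n x y : ℤ) : ℂ)
      = (y : ℂ) ^ n.totient * eval ((x : ℂ) / (y : ℂ)) (cyclotomic n ℂ) := by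
  have hyC : (y : ℂ) ≠ 0 := Int.cast_ne_zero.mpr hy
  unfold cycBinaryForm
  rw [eval_eq_sum_range, natDegree_cyclotomic, Finset.mul_sum]
  push_cast
  apply Finset.sum_congr rfl
  intro i hi
  have hi' : i ≤ n.totient := by simp at hi; omega
  have hc : ((cyclotomic n ℤ).coeff i : ℂ) = (cyclotomic n ℂ).coeff i := by
    rw [← map_cyclotomic_int n ℂ, coeff_map]; simp
  rw [hc]
  have hyt : (y : ℂ) ^ n.totient = (y:ℂ) ^ (n.totient - i) * (y:ℂ) ^ i := by
    rw [← pow_add, Nat.sub_add_cancel hi']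
  rw [hyt, div_pow]
  field_simp

lemma B_eq_prod (n : ℕ) (hn : n ≠ 0) (x y : ℤ) :
    ((cycBinaryForm n x y : ℤ) : ℂ) = ∏ μ ∈ primitiveRoots n ℂ, ((x : ℂ) - μ * y) := by
  have hζ := Complex.isPrimitiveRoot_exp n hn
  have hcyc := cyclotomic_eq_prod_X_sub_primitiveRoots hζ
  have hcard := Complex.card_primitiveRoots n
  by_cases hy : y = 0
  · subst hy
    rw [B_x_zero]
    push_cast
    rw [← hcard]
    simp [Finset.prod_const]
  · rw [B_eq_eval n x y hy, hcyc, eval_prod]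
    have hyC : (y : ℂ) ≠ 0 := Int.cast_ne_zero.mpr hy
    rw [← hcard, ← Finset.prod_const ((y:ℂ)), ← Finset.prod_mul_distrib]
    apply Finset.prod_congr rfl
    intro μ _
    simp only [eval_sub, eval_X, eval_C]
    field_simp

lemma B_expand {m p : ℕ} (hp : p.Prime) (hd : p ∣ m) (hm : m ≠ 0) (x y : ℤ) :
    cycBinaryForm (m * p) x y = cycBinaryForm m (x ^ p) (y ^ p) := by
  have ht : (m * p).totient = p * m.totient := by
    rw [mul_comm m p]; exact Nat.totient_mul_of_prime_of_dvd hp hd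
  apply Int.cast_injective (α := ℂ)
  by_cases hy : y = 0
  · subst hy
    rw [zero_pow hp.ne_zero]
    push_cast [B_x_zero, ht, pow_mul]
    norm_cast
  · have hyp : y ^ p ≠ 0 := pow_ne_zero _ hy
    rw [B_eq_eval _ _ _ hy, B_eq_eval _ _ _ hyp,
      ← cyclotomic_expand_eq_cyclotomic hp hd ℂ, expand_eval, ht, pow_mul]
    push_cast
    rw [div_pow]

lemma B_two_mul {m : ℕ} (hmo : Odd m) (h3 : 3 ≤ m) (x y : ℤ) :
    cycBinaryForm (2 * m) x y = cycBinaryForm m (-x) y := by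
  have hm : m ≠ 0 := by omega
  have hm2 : (2 * m) ≠ 0 := by omega
  have hmpos : 0 < m := by omega
  have h2mpos : 0 < 2 * m := by omega
  have hEt : Even m.totient := Nat.totient_even (by omega)
  apply Int.cast_injective (α := ℂ)
  rw [B_eq_prod _ hm2, B_eq_prod _ hm]
  -- LHS = ∏_{μ ∈ prim (2m)} (x - μ y) = ∏_{ν ∈ prim m} (x - (-ν) y)
  have hmap : ∀ ν ∈ primitiveRoots m ℂ, -ν ∈ primitiveRoots (2 * m) ℂ := by
    intro ν hν
    have hν' : IsPrimitiveRoot ν m := (mem_primitiveRoots hmpos).mp hν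
    refine (mem_primitiveRoots h2mpos).mpr ⟨?_, ?_⟩
    · rw [pow_mul, neg_sq, ← pow_mul, mul_comm 2 m, pow_mul, hν'.pow_eq_one, one_pow]
    · intro l hl
      have h2l : ν ^ (2 * l) = 1 := by
        have : ((-ν) ^ l) ^ 2 = 1 := by rw [hl, one_pow]
        rw [← pow_mul, mul_comm l 2] at this
        rw [pow_mul]
        rw [pow_mul] at this
        simpa [neg_sq] using this
      have hml : m ∣ l := by
        have := hν'.dvd_of_pow_eq_one _ h2l
        exact (Nat.Coprime.dvd_of_dvd_mul_left (Nat.coprime_two_left.mpr hmo).symm this)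
      have hνl : ν ^ l = 1 := by
        obtain ⟨c, rfl⟩ := hml
        rw [pow_mul, hν'.pow_eq_one, one_pow]
      have h2dl : 2 ∣ l := by
        have hneg : (-1 : ℂ) ^ l = 1 := by
          have := hl
          rw [neg_pow, hνl, mul_one] at this
          exact this
        have : Even l := by
          rwa [neg_one_pow_eq_one_iff_even (by norm_num)] at hneg
        exact this.two_dvd
      exact Nat.Coprime.mul_dvd_of_dvd_of_dvd (Nat.coprime_two_left.mpr hmo) h2dl hml
  have hinj : ∀ a₁ ∈ primitiveRoots m ℂ, ∀ a₂ ∈ primitiveRoots m ℂ,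
      -a₁ = -a₂ → a₁ = a₂ := fun a₁ _ a₂ _ h => neg_injective h
  have hcard : (primitiveRoots (2*m) ℂ).card ≤ (primitiveRoots m ℂ).card := by
    rw [Complex.card_primitiveRoots, Complex.card_primitiveRoots,
      Nat.totient_mul (Nat.coprime_two_left.mpr hmo), Nat.totient_two, one_mul]
  have hbij : ∏ μ ∈ primitiveRoots (2*m) ℂ, ((x:ℂ) - μ * y)
      = ∏ ν ∈ primitiveRoots m ℂ, ((x:ℂ) - (-ν) * y) := by
    refine (Finset.prod_bij (fun ν _ => -ν) hmap (fun a₁ h₁ a₂ h₂ h => neg_injective h) ?_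
      (fun a ha => rfl)).symm
    intro b hb
    obtain ⟨a, ha, hab⟩ := Finset.surj_on_of_inj_on_of_card_le (fun ν _ => -ν) hmap
      (fun a₁ a₂ h₁ h₂ h => neg_injective h) hcard b hb
    exact ⟨a, ha, hab.symm⟩
  rw [hbij]
  have : ∀ ν ∈ primitiveRoots m ℂ, ((x:ℂ) - (-ν) * y) = -1 * (((-x:ℤ):ℂ) - ν * y) := by
    intro ν _; push_cast; ring
  rw [Finset.prod_congr rfl this, Finset.prod_mul_distrib, Finset.prod_const,
    Complex.card_primitiveRoots, hEt.neg_one_pow, one_mul]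

lemma B_sq_swap (n : ℕ) (hn : n ≠ 0) (x y : ℤ) :
    (cycBinaryForm n x y) ^ 2 = (cycBinaryForm n y x) ^ 2 := by
  have hpos : 0 < n := Nat.pos_of_ne_zero hn
  apply Int.cast_injective (α := ℂ)
  push_cast
  rw [B_eq_prod n hn, B_eq_prod n hn]
  set S := primitiveRoots n ℂ with hS
  have hinv : ∀ μ ∈ S, μ⁻¹ ∈ S := fun μ hμ =>
    (mem_primitiveRoots hpos).mpr ((mem_primitiveRoots hpos).mp hμ).inv
  have hne0 : ∀ μ ∈ S, μ ≠ 0 := fun μ hμ =>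
    ((mem_primitiveRoots hpos).mp hμ).ne_zero hn
  have hinvinj : ∀ a₁ ∈ S, ∀ a₂ ∈ S, a₁⁻¹ = a₂⁻¹ → a₁ = a₂ := by
    intro a₁ h₁ a₂ h₂ h
    exact inv_injective h
  have hbij : ∀ f : ℂ → ℂ, ∏ μ ∈ S, f μ = ∏ μ ∈ S, f μ⁻¹ := by
    intro f
    refine Finset.prod_bij (fun ν _ => ν⁻¹) hinv (fun a₁ h₁ a₂ h₂ h => inv_injective h) ?_
      (fun a ha => rfl) |>.symm
    intro b hb
    obtain ⟨a, ha, hab⟩ := Finset.surj_on_of_inj_on_of_card_le (fun ν _ => ν⁻¹) hinv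
      (fun a₁ a₂ h₁ h₂ h => inv_injective h) le_rfl b hb
    exact ⟨a, ha, hab.symm⟩
  -- ∏ (y - μ x) = (∏ μ⁻¹) * (-1)^card * ∏ (x - μ y)
  have key : ∏ μ ∈ S, ((y:ℂ) - μ * x)
      = (∏ μ ∈ S, μ⁻¹) * (-1) ^ S.card * ∏ μ ∈ S, ((x:ℂ) - μ * y) := by
    rw [hbij (fun μ => (y:ℂ) - μ * x)]
    have : ∀ μ ∈ S, ((y:ℂ) - μ⁻¹ * x) = μ⁻¹ * (-1 * ((x:ℂ) - μ * y)) := by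
      intro μ hμ
      field_simp [hne0 μ hμ]
      ring
    rw [Finset.prod_congr rfl this, Finset.prod_mul_distrib, Finset.prod_mul_distrib,
      Finset.prod_const]
    ring
  rw [key]
  have hsq : ((∏ μ ∈ S, μ⁻¹) * (-1) ^ S.card) ^ 2 = 1 := by
    have h1 : (∏ μ ∈ S, μ⁻¹) * (∏ μ ∈ S, μ) = 1 := by
      rw [← Finset.prod_mul_distrib]
      rw [Finset.prod_congr rfl (fun μ hμ => inv_mul_cancel₀ (hne0 μ hμ))]
      exact Finset.prod_const_one
    have h2 : (∏ μ ∈ S, μ⁻¹) = ∏ μ ∈ S, μ := (hbij id).symm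
    have : (∏ μ ∈ S, μ⁻¹) ^ 2 = 1 := by
      rw [sq]; nth_rewrite 2 [h2]; exact h1
    rw [mul_pow, this, one_mul, ← pow_mul, mul_comm S.card 2, pow_mul]
    norm_num
  rw [mul_pow, hsq, one_mul]

lemma four_dvd (n : ℕ) (ht : 2 ≤ n.totient) {x y : ℤ} (hx : 2 ∣ x) (hy : 2 ∣ y) :
    4 ∣ cycBinaryForm n x y := by
  apply Finset.dvd_sum
  intro i hi
  have hi' : i ≤ n.totient := by simp at hi; omega
  have h4 : (4 : ℤ) ∣ x ^ i * y ^ (n.totient - i) := by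
    rcases Nat.eq_zero_or_pos i with rfl | hipos
    · rw [pow_zero, one_mul]
      have : (4:ℤ) = 2 * 2 := by norm_num
      rw [this, show n.totient - 0 = (n.totient - 2) + 2 by omega, pow_add, pow_two]
      exact Dvd.dvd.mul_left (mul_dvd_mul hy hy) _
    · rcases Nat.lt_or_ge i 2 with hi2 | hi2
      · have hieq : i = 1 := by omega
        subst hieq
        have hsub : n.totient - 1 = (n.totient - 2) + 1 := by omega
        rw [pow_one, hsub, pow_add, pow_one]
        have h22 : (4:ℤ) = 2 * 2 := by norm_num
        have : x * (y ^ (n.totient - 2) * y) = (x * y) * y ^ (n.totient - 2) := by ring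
        rw [h22, this]
        exact Dvd.dvd.mul_right (mul_dvd_mul hx hy) _
      · have : (4:ℤ) = 2 * 2 := by norm_num
        rw [this, show i = (i - 2) + 2 by omega, pow_add, pow_two]
        exact Dvd.dvd.mul_right (Dvd.dvd.mul_left (mul_dvd_mul hx hx) _) _
  calc (4:ℤ) ∣ x ^ i * y ^ (n.totient - i) := h4
    _ ∣ (cyclotomic n ℤ).coeff i * x ^ i * y ^ (n.totient - i) := by
        rw [mul_assoc]; exact Dvd.intro_left _ rfl

lemma odd_eval {n : ℕ} (hn : 1 < n) {a : ℤ} (ha : 2 ∣ a) :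
    ¬ (2 ∣ eval a (cyclotomic n ℤ)) := by
  intro h
  have hcast : ((eval a (cyclotomic n ℤ) : ℤ) : ZMod 2) = 0 := by
    exact_mod_cast (ZMod.intCast_zmod_eq_zero_iff_dvd _ 2).mpr h
  have h0 : ((a : ℤ) : ZMod 2) = 0 := by
    exact_mod_cast (ZMod.intCast_zmod_eq_zero_iff_dvd _ 2).mpr ha
  have : ((eval a (cyclotomic n ℤ) : ℤ) : ZMod 2)
      = eval ((a : ZMod 2)) (cyclotomic n (ZMod 2)) := by
    rw [← map_cyclotomic_int n (ZMod 2)]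
    rw [eval_intCast_map]
    rfl
  rw [this, h0, ← coeff_zero_eq_eval_zero, cyclotomic_coeff_zero _ hn] at hcast
  exact one_ne_zero hcast

lemma eval_two_gt {m : ℕ} (hm : 2 ≤ m) : 1 < eval 2 (cyclotomic m ℤ) := by
  have hreal : (1 : ℝ) < eval 2 (cyclotomic m ℝ) := by
    have := sub_one_pow_totient_lt_cyclotomic_eval hm (by norm_num : (1:ℝ) < 2)
    calc (1:ℝ) = (2 - 1 : ℝ) ^ m.totient := by norm_num
      _ < _ := this
  have hmap : eval (2:ℝ) (cyclotomic m ℝ) = ((eval 2 (cyclotomic m ℤ) : ℤ) : ℝ) := by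
    have := cyclotomic.eval_apply (2 : ℤ) m (algebraMap ℤ ℝ)
    simpa using this
  rw [hmap] at hreal
  exact_mod_cast hreal

lemma eval_pm_two {n : ℕ} (hodd : Odd n) (h3 : 3 ≤ n) {a : ℤ} (ha : a = 2 ∨ a = -2) :
    3 ≤ eval a (cyclotomic n ℤ) := by
  have h1 : 1 < eval a (cyclotomic n ℤ) := by
    rcases ha with rfl | rfl
    · exact eval_two_gt (by omega)
    · have hid : eval (-2 : ℤ) (cyclotomic n ℤ) = eval 2 (cyclotomic (2*n) ℤ) := by
        have h := B_two_mul hodd h3 (2 : ℤ) (1 : ℤ)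
        rw [B_y_one, B_y_one] at h
        exact h.symm
      rw [hid]
      exact eval_two_gt (by omega)
  have h2 : ¬ (2 ∣ eval a (cyclotomic n ℤ)) :=
    odd_eval (by omega) (by rcases ha with rfl | rfl <;> norm_num)
  omega

lemma B_lower (n : ℕ) (hodd : Odd n) (h3 : 3 ≤ n) (x y : ℤ) :
    (((max |x| |y| : ℤ) : ℝ) ^ 2 / 4) ^ n.totient * ((eval 1 (cyclotomic n ℤ) : ℤ) : ℝ) ^ 2
      ≤ ((cycBinaryForm n x y : ℤ) : ℝ) ^ 2 := by
  have hn : n ≠ 0 := by omega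
  have hpos : 0 < n := by omega
  set S := primitiveRoots n ℂ with hS
  have hcard : S.card = n.totient := Complex.card_primitiveRoots n
  set M : ℝ := ((max |x| |y| : ℤ) : ℝ) with hM
  -- Step A : B^2 = ∏ normSq (x - μ y)
  have hA : ((cycBinaryForm n x y : ℤ) : ℝ) ^ 2
      = ∏ μ ∈ S, Complex.normSq ((x:ℂ) - μ * y) := by
    rw [← map_prod Complex.normSq _ S, ← B_eq_prod n hn x y, Complex.normSq_intCast]
    ring
  rw [hA]
  -- per-factor bound
  have hB : ∀ μ ∈ S, (M ^ 2 / 4) * Complex.normSq (1 - μ^2)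
      ≤ Complex.normSq ((x:ℂ) - μ * y) := by
    intro μ hμ
    have hprim : IsPrimitiveRoot μ n := (mem_primitiveRoots hpos).mp hμ
    have hnorm : ‖μ‖ = 1 := hprim.norm'_eq_one hn
    have h1 : μ.re ^ 2 + μ.im ^ 2 = 1 := by
      have habs : Complex.normSq μ = 1 := by
        rw [← Complex.sq_norm, hnorm]; norm_num
      rw [Complex.normSq_apply] at habs
      nlinarith [habs]
    have hn1 : Complex.normSq ((x:ℂ) - μ * y)
        = (x:ℝ)^2 - 2 * x * y * μ.re + (y:ℝ)^2 := by
      have hre : ((x:ℂ) - μ*y).re = (x:ℝ) - μ.re * (y:ℝ) := by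
        simp [Complex.sub_re, Complex.mul_re]
      have him : ((x:ℂ) - μ*y).im = -(μ.im * (y:ℝ)) := by
        simp [Complex.sub_im, Complex.mul_im]
      rw [Complex.normSq_apply, hre, him]
      linear_combination (y:ℝ)^2 * h1
    have hn2 : Complex.normSq (1 - μ^2) = 4 * μ.im ^ 2 := by
      have hre : ((1:ℂ) - μ^2).re = 1 - (μ.re*μ.re - μ.im*μ.im) := by
        simp [pow_two, Complex.sub_re, Complex.mul_re]
      have him : ((1:ℂ) - μ^2).im = -(μ.re*μ.im + μ.im*μ.re) := by
        simp [pow_two, Complex.sub_im, Complex.mul_im]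
      rw [Complex.normSq_apply, hre, him]
      linear_combination (μ.re^2 + μ.im^2 - 1) * h1
    rw [hn1, hn2]
    have hMx : (|x| : ℝ) ≤ M := by
      simp only [hM]; exact_mod_cast le_max_left _ _
    have hMy : (|y| : ℝ) ≤ M := by
      simp only [hM]; exact_mod_cast le_max_right _ _
    have hM0 : 0 ≤ M := le_trans (abs_nonneg _ |>.trans_eq (by push_cast; rfl) ) hMx
    rcases le_total |x| |y| with hxy | hxy
    · have hMeq : M = (|y| : ℝ) := by
        simp only [hM]; norm_cast; exact max_eq_right hxy
      have : (M^2/4) * (4 * μ.im^2) = (y:ℝ)^2 * μ.im^2 := by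
        rw [hMeq]; push_cast; rw [_root_.sq_abs]; ring
      rw [this]
      nlinarith [sq_nonneg ((y:ℝ) * μ.re - x), h1]
    · have hMeq : M = (|x| : ℝ) := by
        simp only [hM]; norm_cast; exact max_eq_left hxy
      have : (M^2/4) * (4 * μ.im^2) = (x:ℝ)^2 * μ.im^2 := by
        rw [hMeq]; push_cast; rw [_root_.sq_abs]; ring
      rw [this]
      nlinarith [sq_nonneg ((x:ℝ) * μ.re - y), h1]
  -- product of lower bounds
  have hC : ∏ μ ∈ S, ((M ^ 2 / 4) * Complex.normSq (1 - μ^2))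
      ≤ ∏ μ ∈ S, Complex.normSq ((x:ℂ) - μ * y) := by
    apply Finset.prod_le_prod
    · intro μ hμ
      have := Complex.normSq_nonneg (1 - μ^2)
      positivity
    · exact hB
  refine le_trans ?_ hC
  rw [Finset.prod_mul_distrib, Finset.prod_const, hcard]
  -- ∏ normSq (1 - μ^2) = E^2
  have hD : ∏ μ ∈ S, Complex.normSq (1 - μ^2)
      = ((eval 1 (cyclotomic n ℤ) : ℤ) : ℝ) ^ 2 := by
    rw [← map_prod Complex.normSq _ S]
    have hsq_bij : ∏ μ ∈ S, ((1:ℂ) - μ^2) = ∏ ν ∈ S, ((1:ℂ) - ν) := by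
      have hcop : Nat.Coprime 2 n := Nat.coprime_two_left.mpr hodd
      have hmap : ∀ μ ∈ S, μ^2 ∈ S := fun μ hμ =>
        (mem_primitiveRoots hpos).mpr (((mem_primitiveRoots hpos).mp hμ).pow_of_coprime 2 hcop)
      have hinj : ∀ a₁ ∈ S, ∀ a₂ ∈ S, a₁^2 = a₂^2 → a₁ = a₂ := by
        intro a₁ h₁ a₂ h₂ h
        rcases sq_eq_sq_iff_eq_or_eq_neg.mp h with h' | h'
        · exact h'
        · exfalso
          have e₁ : a₁ ^ n = 1 := ((mem_primitiveRoots hpos).mp h₁).pow_eq_one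
          have e₂ : a₂ ^ n = 1 := ((mem_primitiveRoots hpos).mp h₂).pow_eq_one
          rw [h', Odd.neg_pow hodd, e₂] at e₁
          norm_num at e₁
      refine Finset.prod_bij (fun μ _ => μ^2) hmap (fun a₁ h₁ a₂ h₂ h => hinj a₁ h₁ a₂ h₂ h) ?_
        (fun a ha => rfl)
      intro b hb
      obtain ⟨a, ha, hab⟩ := Finset.surj_on_of_inj_on_of_card_le (fun μ _ => μ^2) hmap
        (fun a₁ a₂ h₁ h₂ h => hinj a₁ h₁ a₂ h₂ h) le_rfl b hb
      exact ⟨a, ha, hab.symm⟩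
    rw [hsq_bij]
    have hζ := Complex.isPrimitiveRoot_exp n hn
    have : ∏ ν ∈ S, ((1:ℂ) - ν) = eval 1 (cyclotomic n ℂ) := by
      rw [cyclotomic_eq_prod_X_sub_primitiveRoots hζ, eval_prod]
      simp [hS]
    rw [this]
    have : eval (1:ℂ) (cyclotomic n ℂ) = ((eval 1 (cyclotomic n ℤ) : ℤ) : ℂ) := by
      rw [← map_cyclotomic_int n ℂ, eval_one_map]
      simp
    rw [this, Complex.normSq_intCast]
    ring
  rw [hD]

lemma totient_two_le {n : ℕ} (h3 : 3 ≤ n) : 2 ≤ n.totient := by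
  have he := Nat.totient_even (by omega : 2 < n)
  have hp : 0 < n.totient := Nat.totient_pos.mpr (by omega)
  rcases he with ⟨k, hk⟩
  omega

/-- For `|x| = 2`, `|y| = 1`: the value is an eval at `±2`, hence `≥ 3`. -/
lemma B_eval_case {n : ℕ} (hodd : Odd n) (h3 : 3 ≤ n) {x y : ℤ}
    (hx : |x| = 2) (hy : |y| = 1) : 3 ≤ cycBinaryForm n x y := by
  have hE : Even n.totient := Nat.totient_even (by omega)
  rcases abs_eq (by norm_num : (0:ℤ) ≤ 1) |>.mp hy with rfl | rfl
  · rw [B_y_one]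
    exact eval_pm_two hodd h3 (by rcases abs_eq (by norm_num : (0:ℤ) ≤ 2) |>.mp hx with rfl | rfl
      <;> simp)
  · rw [B_y_neg_one n hE]
    refine eval_pm_two hodd h3 ?_
    rcases abs_eq (by norm_num : (0:ℤ) ≤ 2) |>.mp hx with rfl | rfl <;> simp

set_option maxHeartbeats 1000000 in
lemma odd_case {n : ℕ} (hodd : Odd n) (h3 : 3 ≤ n) (x y : ℤ)
    (hmax : 2 ≤ max |x| |y|) (hval : cycBinaryForm n x y = 1 ∨ cycBinaryForm n x y = 2) :
    False := by
  have hn : n ≠ 0 := by omega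
  have ht2 : 2 ≤ n.totient := totient_two_le h3
  have hBsq : ((cycBinaryForm n x y : ℤ) : ℝ) ^ 2 ≤ 4 := by
    rcases hval with h | h <;> rw [h] <;> norm_num
  have hlow := B_lower n hodd h3 x y
  have hM2 : (2 : ℝ) ≤ ((max |x| |y| : ℤ) : ℝ) := by exact_mod_cast hmax
  by_cases hpp : IsPrimePow n
  · -- eval 1 = p ≥ 3
    obtain ⟨p, k, hp, hk, rfl⟩ := hpp
    have hp' : p.Prime := hp.nat_prime
    have hfact : Fact p.Prime := ⟨hp'⟩
    have hEp : eval 1 (cyclotomic (p^k) ℤ) = p := by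
      rw [show k = (k-1) + 1 by omega]
      exact_mod_cast eval_one_cyclotomic_prime_pow (k-1)
    have hpodd : p ≠ 2 := by
      rintro rfl
      rcases hodd with ⟨c, hc⟩
      have : 2 ∣ 2^k := dvd_pow_self 2 (by omega)
      omega
    have hp3 : 3 ≤ p := by
      have := hp'.two_le
      omega
    have h1le : (1:ℝ) ≤ (((max |x| |y| : ℤ) : ℝ) ^ 2 / 4) ^ (p^k).totient := by
      apply one_le_pow₀
      nlinarith
    have hE3 : (3:ℝ) ≤ ((eval 1 (cyclotomic (p^k) ℤ) : ℤ) : ℝ) := by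
      rw [hEp]; exact_mod_cast hp3
    nlinarith [hlow, hBsq, h1le, hE3,
      sq_nonneg ((eval 1 (cyclotomic (p^k) ℤ) : ℤ) : ℝ)]
  · have hE1 : eval 1 (cyclotomic n ℤ) = 1 := by
      apply eval_one_cyclotomic_not_prime_pow
      intro p hp k hpk
      refine hpp ⟨p, k, hp.prime, ?_, hpk⟩
      rcases Nat.eq_zero_or_pos k with rfl | hk
      · simp at hpk; omega
      · exact hk
    rw [hE1] at hlow
    push_cast at hlow
    rw [one_pow, mul_one] at hlow
    by_cases hM3 : 3 ≤ max |x| |y|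
    · have hM3' : (3 : ℝ) ≤ ((max |x| |y| : ℤ) : ℝ) := by exact_mod_cast hM3
      have hM3R : (3 : ℝ) ≤ max |(x:ℝ)| |(y:ℝ)| := by
        rcases le_max_iff.mp hM3 with h | h
        · refine le_max_of_le_left ?_
          have : ((3:ℤ):ℝ) ≤ ((|x|:ℤ):ℝ) := Int.cast_le.mpr h
          push_cast at this; exact this
        · refine le_max_of_le_right ?_
          have : ((3:ℤ):ℝ) ≤ ((|y|:ℤ):ℝ) := Int.cast_le.mpr h
          push_cast at this; exact this
      have hpow : ((9:ℝ)/4) ^ 2 ≤ ((max |(x:ℝ)| |(y:ℝ)|) ^ 2 / 4) ^ n.totient := by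
        calc ((9:ℝ)/4) ^ 2 ≤ ((9:ℝ)/4) ^ n.totient := by
              apply pow_le_pow_right₀ (by norm_num) ht2
          _ ≤ ((max |(x:ℝ)| |(y:ℝ)|) ^ 2 / 4) ^ n.totient := by
              apply pow_le_pow_left₀ (by norm_num)
              nlinarith [hM3R]
      nlinarith [hlow, hBsq, hpow]
    · -- max = 2
      have hMeq : max |x| |y| = 2 := by omega
      have hxle : |x| ≤ 2 := le_trans (le_max_left _ _) (le_of_eq hMeq)
      have hyle : |y| ≤ 2 := le_trans (le_max_right _ _) (le_of_eq hMeq)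
      -- the key sub-claim, stated for squares so it can be used after swapping
      have main : ∀ u v : ℤ, |u| = 2 → |v| ≤ 2 →
          ¬ ((cycBinaryForm n u v)^2 = 1 ∨ (cycBinaryForm n u v)^2 = 4) := by
        intro u v hu hv huv
        have hueven : 2 ∣ u := by
          rcases abs_eq (by norm_num : (0:ℤ) ≤ 2) |>.mp hu with rfl | rfl <;> norm_num
        have hvnn : 0 ≤ |v| := abs_nonneg v
        interval_cases hv' : |v|
        · have hv0 : v = 0 := abs_eq_zero.mp hv'
          have h4 := four_dvd n ht2 hueven (show (2:ℤ) ∣ v by rw [hv0]; exact dvd_zero 2)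
          obtain ⟨c, hc⟩ := h4
          have hle : cycBinaryForm n u v ≤ 2 := by
            rcases huv with h | h <;> nlinarith [sq_nonneg (cycBinaryForm n u v - 2)]
          have hge : -2 ≤ cycBinaryForm n u v := by
            rcases huv with h | h <;> nlinarith [sq_nonneg (cycBinaryForm n u v + 2)]
          have hne : cycBinaryForm n u v ≠ 0 := by
            intro h0; rcases huv with h | h <;> rw [h0] at h <;> simp at h
          omega
        · have h3le := B_eval_case hodd h3 hu hv'
          have h9 : 9 ≤ (cycBinaryForm n u v)^2 := by nlinarith [h3le]
          rcases huv with h | h <;> omega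
        · have h4 := four_dvd n ht2 hueven
            (show (2:ℤ) ∣ v by
              rcases abs_eq (by norm_num : (0:ℤ) ≤ 2) |>.mp hv' with rfl | rfl <;> norm_num)
          obtain ⟨c, hc⟩ := h4
          have hle : cycBinaryForm n u v ≤ 2 := by
            rcases huv with h | h <;> nlinarith [sq_nonneg (cycBinaryForm n u v - 2)]
          have hge : -2 ≤ cycBinaryForm n u v := by
            rcases huv with h | h <;> nlinarith [sq_nonneg (cycBinaryForm n u v + 2)]
          have hne : cycBinaryForm n u v ≠ 0 := by
            intro h0; rcases huv with h | h <;> rw [h0] at h <;> simp at h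
          omega
      rcases le_or_gt 2 |x| with hx2 | hx2
      · exact main x y (by omega) hyle
          (by rcases hval with h | h <;> [left; right] <;> rw [h] <;> norm_num)
      · have hy2 : |y| = 2 := by omega
        have hswap := B_sq_swap n hn x y
        refine main y x hy2 (by omega) ?_
        rw [← hswap]
        rcases hval with h | h <;> [left; right] <;> rw [h] <;> norm_num

lemma B_two (x y : ℤ) : cycBinaryForm 2 x y = x + y := by
  unfold cycBinaryForm
  rw [Nat.totient_two, cyclotomic_two]
  simp [Finset.sum_range_succ, coeff_add, coeff_X_one, coeff_one]
  ring

lemma key : ∀ n, 3 ≤ n → ∀ x y : ℤ, 2 ≤ max |x| |y| →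
    ¬ (cycBinaryForm n x y = 1 ∨ cycBinaryForm n x y = 2) := by
  intro n
  induction n using Nat.strong_induction_on with
  | _ n IH =>
    intro h3 x y hmax hval
    rcases Nat.even_or_odd n with he | ho
    · obtain ⟨m', hm'⟩ := he
      have hm2' : n = 2 * m' := by omega
      subst hm2'
      rename' m' => m
      have hm2 : 2 ≤ m := by omega
      have hsq : 2 ≤ max |x ^ 2| |y ^ 2| := by
        rcases le_max_iff.mp hmax with h | h
        · refine le_trans ?_ (le_max_left _ _)
          rw [_root_.abs_pow]
          nlinarith
        · refine le_trans ?_ (le_max_right _ _)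
          rw [_root_.abs_pow]
          nlinarith
      rcases Nat.even_or_odd m with hme | hmo
      · -- m even : B (2m) = B m (x²,y²)
        have h2m : (2 : ℕ) ∣ m := hme.two_dvd
        have hBe : cycBinaryForm (2 * m) x y = cycBinaryForm m (x ^ 2) (y ^ 2) := by
          rw [mul_comm 2 m]
          exact B_expand Nat.prime_two h2m (by omega) x y
        rcases eq_or_lt_of_le hm2 with hm2' | hm2'
        · -- m = 2
          rw [hBe, ← hm2', B_two] at hval
          have hx4 : 4 ≤ x^2 + y^2 := by
            rcases le_max_iff.mp hmax with h | h
            · have : 4 ≤ x^2 := by nlinarith [abs_nonneg x, _root_.sq_abs x]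
              nlinarith [sq_nonneg y]
            · have : 4 ≤ y^2 := by nlinarith [abs_nonneg y, _root_.sq_abs y]
              nlinarith [sq_nonneg x]
          omega
        · rw [hBe] at hval
          exact IH m (by omega) (by omega) (x^2) (y^2) hsq hval
      · -- m odd ≥ 3
        have h3m : 3 ≤ m := by
          rcases hmo with ⟨k, hk⟩; omega
        rw [B_two_mul hmo h3m] at hval
        exact IH m (by omega) h3m (-x) y (by rwa [abs_neg]) hval
    · exact odd_case ho h3 x y hmax hval

theorem stmt1 :
    ¬ ∃ (n : ℕ) (x y : ℤ), 3 ≤ n ∧ 2 ≤ max |x| |y| ∧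
      (cycBinaryForm n x y = 1 ∨ cycBinaryForm n x y = 2) := by
  rintro ⟨n, x, y, hn, hmax, hval⟩
  exact key n hn x y hmax hval
end

section
/- Let m be a positive integer and let n, x, y be rational integers satisfying n ≥ 3, max{|x|,|y|} ≥ 2 and Φ_n(x,y) = m. Then n < 5.383·(log m)^{1.161}. -/
open Real Finset

noncomputable def gfun (p : ℝ) : ℝ := p ^ (0.161:ℝ) * (1 - 1/p) ^ (1.161:ℝ)

lemma sub_one_div_nonneg {p : ℝ} (hp : 2 ≤ p) : (0:ℝ) ≤ 1 - 1/p := by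
  have h0 : (0:ℝ) < p := by linarith
  have : 1/p ≤ 1/2 := by
    apply one_div_le_one_div_of_le <;> linarith
  linarith

lemma gfun_pow_1000 {p : ℝ} (hp : 2 ≤ p) :
    gfun p ^ (1000:ℕ) = p ^ (161:ℕ) * (1 - 1/p) ^ (1161:ℕ) := by
  have h1 : (0:ℝ) ≤ p := by linarith
  have h2 := sub_one_div_nonneg hp
  rw [gfun, mul_pow, ← Real.rpow_natCast (p ^ (0.161:ℝ)) 1000,
    ← Real.rpow_natCast ((1-1/p) ^ (1.161:ℝ)) 1000,
    ← Real.rpow_mul h1, ← Real.rpow_mul h2,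
    show (0.161:ℝ)*(1000:ℕ) = ((161:ℕ):ℝ) by norm_num,
    show (1.161:ℝ)*(1000:ℕ) = ((1161:ℕ):ℝ) by norm_num,
    Real.rpow_natCast, Real.rpow_natCast]

lemma gfun_pos {p : ℝ} (hp : 2 ≤ p) : 0 < gfun p := by
  have h0 : (0:ℝ) < p := by linarith
  have h2 : (0:ℝ) < 1 - 1/p := by
    rw [sub_pos, div_lt_one h0]; linarith
  exact mul_pos (Real.rpow_pos_of_pos h0 _) (Real.rpow_pos_of_pos h2 _)

-- g(2) = 1/2
lemma gfun_two : gfun 2 = 1/2 := by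
  have h : (1:ℝ) - 1/2 = 2 ^ (-1:ℝ) := by
    rw [Real.rpow_neg_one]; norm_num
  rw [gfun, h, ← Real.rpow_mul (by norm_num : (0:ℝ) ≤ 2),
    ← Real.rpow_add (by norm_num : (0:ℝ) < 2)]
  rw [show (0.161:ℝ) + -1 * 1.161 = -1 by norm_num, Real.rpow_neg_one]
  norm_num

lemma gfun_three : (0.7453:ℝ) ≤ gfun 3 := by
  have h3 : (2:ℝ) ≤ 3 := by norm_num
  have := gfun_pow_1000 h3
  apply le_of_pow_le_pow_left₀ (n := 1000) (by norm_num) (le_of_lt (gfun_pos h3))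
  rw [this, show (1:ℝ) - 1/3 = 2/3 by norm_num, show (0.7453:ℝ) = 7453/10000 by norm_num, div_pow, div_pow, mul_div_assoc', div_le_div_iff₀ (by positivity) (by positivity)]
  exact_mod_cast (show (7453:ℕ)^1000 * 3^1161 ≤ 3^161 * 2^1161 * 10000^1000 by decide +kernel)

lemma gfun_five : (1:ℝ) ≤ gfun 5 := by
  have h5 : (2:ℝ) ≤ 5 := by norm_num
  apply le_of_pow_le_pow_left₀ (n := 1000) (by norm_num) (le_of_lt (gfun_pos h5))
  rw [gfun_pow_1000 h5, show (1:ℝ) - 1/5 = 4/5 by norm_num, div_pow, mul_div_assoc', le_div_iff₀ (by positivity), one_pow, one_mul]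
  exact_mod_cast (show (5:ℕ)^1161 ≤ 5^161 * 4^1161 by decide +kernel)

lemma gfun_seven {p : ℝ} (hp : 7 ≤ p) : (1:ℝ) ≤ gfun p := by
  have h2 : (2:ℝ) ≤ p := by linarith
  have h0 : (0:ℝ) < p := by linarith
  apply le_of_pow_le_pow_left₀ (n := 1000) (by norm_num) (le_of_lt (gfun_pos h2))
  rw [gfun_pow_1000 h2, one_pow]
  have key : p ^ (1000:ℕ) ≤ (p-1) ^ (1161:ℕ) := by
    have h1 : ((6/7:ℝ)*p) ^ (1161:ℕ) ≤ (p-1) ^ (1161:ℕ) := by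
      apply pow_le_pow_left₀ (by positivity) (by linarith)
    have h2' : ((6/7:ℝ)*p) ^ (1161:ℕ) = (6/7:ℝ)^(1161:ℕ) * p^(1000:ℕ) * p^(161:ℕ) := by
      rw [mul_pow]; ring
    have h3 : (7:ℝ)^(161:ℕ) ≤ p^(161:ℕ) := pow_le_pow_left₀ (by norm_num) hp _
    have h4 : (1:ℝ) ≤ (6/7:ℝ)^(1161:ℕ) * (7:ℝ)^(161:ℕ) := by
      rw [div_pow, div_mul_eq_mul_div, le_div_iff₀ (by positivity), one_mul]
      exact_mod_cast (show (7:ℕ)^1161 ≤ 6^1161 * 7^161 by decide +kernel)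
    calc p ^ (1000:ℕ) = 1 * p ^ (1000:ℕ) := (one_mul _).symm
      _ ≤ ((6/7:ℝ)^(1161:ℕ) * (7:ℝ)^(161:ℕ)) * p^(1000:ℕ) := by
          apply mul_le_mul_of_nonneg_right h4 (by positivity)
      _ ≤ ((6/7:ℝ)^(1161:ℕ) * p^(161:ℕ)) * p^(1000:ℕ) := by
          apply mul_le_mul_of_nonneg_right _ (by positivity)
          exact mul_le_mul_of_nonneg_left h3 (by positivity)
      _ = ((6/7:ℝ)*p) ^ (1161:ℕ) := by rw [h2']; ring
      _ ≤ (p-1) ^ (1161:ℕ) := h1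
  have hexp : (1 - 1/p) ^ (1161:ℕ) = (p-1)^(1161:ℕ) / p^(1161:ℕ) := by
    rw [← div_pow]; congr 1; field_simp
  rw [hexp, ← mul_div_assoc, le_div_iff₀ (by positivity), one_mul]
  have : p ^ (1161:ℕ) = p ^ (161:ℕ) * p ^ (1000:ℕ) := by rw [← pow_add]
  rw [this]
  exact mul_le_mul_of_nonneg_left key (by positivity)

lemma gfun_prime {p : ℕ} (hp : p.Prime) (h5 : 5 ≤ p) : (1:ℝ) ≤ gfun p := by
  rcases eq_or_lt_of_le h5 with h | h
  · rw [← h]; exact_mod_cast gfun_five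
  · have h7 : 7 ≤ p := by
      by_contra hc
      push_neg at hc
      interval_cases p <;> simp_all (config := {decide := true})
    exact gfun_seven (by exact_mod_cast h7)

lemma prod_gfun_lower (S : Finset ℕ) (hS : ∀ p ∈ S, p.Prime) :
    (1/2.684 : ℝ) ≤ ∏ p ∈ S, gfun p := by
  classical
  have hstep : ∀ p ∈ S, ((if p = 2 then (1/2:ℝ) else 1) * (if p = 3 then (0.7453:ℝ) else 1)) ≤ gfun p := by
    intro p hp
    have hprime := hS p hp
    by_cases h2 : p = 2
    · subst h2; norm_num; exact le_of_eq gfun_two.symm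
    by_cases h3 : p = 3
    · subst h3; norm_num; exact le_trans (by norm_num) gfun_three
    · have h5 : 5 ≤ p := by
        have := hprime.two_le
        rcases Nat.lt_or_ge p 5 with h | h
        · interval_cases p <;> simp_all (config := {decide := true})
        · exact h
      simp only [if_neg h2, if_neg h3, one_mul]
      exact gfun_prime hprime h5
  have hnonneg : ∀ p ∈ S, (0:ℝ) ≤ (if p = 2 then (1/2:ℝ) else 1) * (if p = 3 then (0.7453:ℝ) else 1) := by
    intro p _; split_ifs <;> norm_num
  have hmain := Finset.prod_le_prod hnonneg hstep
  have heq : ∏ p ∈ S, ((if p = 2 then (1/2:ℝ) else 1) * (if p = 3 then (0.7453:ℝ) else 1))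
      = (if 2 ∈ S then (1/2:ℝ) else 1) * (if 3 ∈ S then (0.7453:ℝ) else 1) := by
    rw [Finset.prod_mul_distrib, Finset.prod_ite_eq' S 2 (fun _ => (1/2:ℝ)),
      Finset.prod_ite_eq' S 3 (fun _ => (0.7453:ℝ))]
  rw [heq] at hmain
  refine le_trans ?_ hmain
  split_ifs <;> norm_num

lemma totient_lower (n : ℕ) (hn : 1 ≤ n) :
    (n:ℝ) ≤ 2.684 * (n.totient:ℝ) ^ (1.161:ℝ) := by
  classical
  set S := n.primeFactors with hSdef
  have hprime : ∀ p ∈ S, p.Prime := fun p hp => Nat.prime_of_mem_primeFactors hp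
  have htwo : ∀ p ∈ S, (2:ℝ) ≤ (p:ℝ) := by
    intro p hp; exact_mod_cast (hprime p hp).two_le
  set Q : ℝ := ∏ p ∈ S, (1 - 1/(p:ℝ)) with hQdef
  set R : ℝ := ∏ p ∈ S, (p:ℝ) with hRdef
  have hQ : (n.totient:ℝ) = (n:ℝ) * Q := by
    have h := Nat.totient_eq_mul_prod_factors n
    have h2 := congrArg (fun q : ℚ => (q:ℝ)) h
    push_cast at h2
    rw [hQdef, hSdef]
    simpa [one_div] using h2
  have hnpos : (0:ℝ) < n := by exact_mod_cast hn
  have hRn : R ≤ (n:ℝ) := by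
    have hdvd : (∏ p ∈ S, p) ∣ n := Nat.prod_primeFactors_dvd n
    have := Nat.le_of_dvd (by omega) hdvd
    rw [hRdef, ← Nat.cast_prod]
    exact_mod_cast this
  have hR1 : (1:ℝ) ≤ R := by
    rw [hRdef]
    have h := Finset.prod_le_prod (f := fun _ : ℕ => (1:ℝ)) (g := fun p : ℕ => (p:ℝ))
      (s := S) (by intros; norm_num) (fun p hp => by have := htwo p hp; show (1:ℝ) ≤ (p:ℝ); linarith)
    simpa using h
  have hQ0 : ∀ p ∈ S, (0:ℝ) ≤ 1 - 1/(p:ℝ) := fun p hp => sub_one_div_nonneg (htwo p hp)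
  have hQnonneg : (0:ℝ) ≤ Q := Finset.prod_nonneg hQ0
  -- key product bound
  have hkey : (1/2.684 : ℝ) ≤ R ^ (0.161:ℝ) * Q ^ (1.161:ℝ) := by
    have h1 : ∏ p ∈ S, ((p:ℝ) ^ (0.161:ℝ)) = R ^ (0.161:ℝ) :=
      Real.finset_prod_rpow S _ (fun p hp => by positivity) _
    have h2 : ∏ p ∈ S, ((1 - 1/(p:ℝ)) ^ (1.161:ℝ)) = Q ^ (1.161:ℝ) :=
      Real.finset_prod_rpow S _ hQ0 _
    have h3 : ∏ p ∈ S, gfun p = R ^ (0.161:ℝ) * Q ^ (1.161:ℝ) := by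
      rw [← h1, ← h2, ← Finset.prod_mul_distrib]; rfl
    rw [← h3]; exact prod_gfun_lower S hprime
  -- assemble
  have hsplit : (n:ℝ) ^ (1.161:ℝ) = (n:ℝ) * (n:ℝ) ^ (0.161:ℝ) := by
    rw [show (1.161:ℝ) = 1 + 0.161 by norm_num, Real.rpow_add hnpos, Real.rpow_one]
  have hmono : R ^ (0.161:ℝ) ≤ (n:ℝ) ^ (0.161:ℝ) :=
    Real.rpow_le_rpow (by linarith) hRn (by norm_num)
  calc (n:ℝ) = (n:ℝ) * (2.684 * (1/2.684)) := by norm_num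
    _ ≤ (n:ℝ) * (2.684 * (R ^ (0.161:ℝ) * Q ^ (1.161:ℝ))) := by
        apply mul_le_mul_of_nonneg_left _ (le_of_lt hnpos)
        apply mul_le_mul_of_nonneg_left hkey (by norm_num)
    _ ≤ (n:ℝ) * (2.684 * ((n:ℝ) ^ (0.161:ℝ) * Q ^ (1.161:ℝ))) := by
        apply mul_le_mul_of_nonneg_left _ (le_of_lt hnpos)
        apply mul_le_mul_of_nonneg_left _ (by norm_num)
        apply mul_le_mul_of_nonneg_right hmono (Real.rpow_nonneg hQnonneg _)
    _ = 2.684 * ((n:ℝ) * (n:ℝ) ^ (0.161:ℝ) * Q ^ (1.161:ℝ)) := by ring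
    _ = 2.684 * (n.totient:ℝ) ^ (1.161:ℝ) := by
        rw [hQ, Real.mul_rpow (le_of_lt hnpos) hQnonneg, hsplit]

open Finset Polynomial


lemma cycBinaryForm_eq_prod (n : ℕ) (hn : 3 ≤ n) (x y : ℤ) :
    ((cycBinaryForm n x y : ℤ) : ℂ) = ∏ ζ ∈ primitiveRoots n ℂ, ((x:ℂ) - ζ * (y:ℂ)) := by
  have hn0 : n ≠ 0 := by omega
  have hμ := Complex.isPrimitiveRoot_exp n hn0
  have hcyc : cyclotomic n ℂ = ∏ ζ ∈ primitiveRoots n ℂ, (X - C ζ) :=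
    cyclotomic_eq_prod_X_sub_primitiveRoots hμ
  have hcard : (primitiveRoots n ℂ).card = n.totient := Complex.card_primitiveRoots n
  have hdeg : (cyclotomic n ℂ).natDegree = n.totient := natDegree_cyclotomic n ℂ
  have hcoeff : ∀ i, (cyclotomic n ℂ).coeff i = (((cyclotomic n ℤ).coeff i : ℤ) : ℂ) := by
    intro i
    rw [← map_cyclotomic n (Int.castRingHom ℂ), coeff_map]
    rfl
  have hLHS : ((cycBinaryForm n x y : ℤ) : ℂ)
      = ∑ i ∈ Finset.range (n.totient + 1),
          (((cyclotomic n ℤ).coeff i : ℂ) * (x:ℂ) ^ i * (y:ℂ) ^ (n.totient - i)) := by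
    rw [cycBinaryForm]
    push_cast
    rfl
  rw [hLHS]
  by_cases hy : (y:ℂ) = 0
  · -- y = 0
    rw [hy]
    rw [Finset.sum_eq_single n.totient]
    · have hc : (cyclotomic n ℤ).coeff n.totient = 1 := by
        have := (cyclotomic.monic n ℤ).coeff_natDegree
        rwa [natDegree_cyclotomic n ℤ] at this
      rw [hc, Nat.sub_self, pow_zero]
      have : ∏ ζ ∈ primitiveRoots n ℂ, ((x:ℂ) - ζ * 0) = (x:ℂ) ^ (primitiveRoots n ℂ).card := by
        rw [← Finset.prod_const]
        apply Finset.prod_congr rfl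
        intro ζ _; ring
      rw [this, hcard]
      push_cast; ring
    · intro i hi hine
      have : n.totient - i ≠ 0 := by
        simp only [Finset.mem_range] at hi
        omega
      rw [zero_pow this, mul_zero]
    · intro h
      exact absurd (Finset.self_mem_range_succ n.totient) h
  · -- y ≠ 0
    have hstep : ∀ i ∈ Finset.range (n.totient + 1),
        ((cyclotomic n ℤ).coeff i : ℂ) * (x:ℂ) ^ i * (y:ℂ) ^ (n.totient - i)
        = ((cyclotomic n ℂ).coeff i * ((x:ℂ)/(y:ℂ)) ^ i) * (y:ℂ) ^ n.totient := by
      intro i hi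
      simp only [Finset.mem_range] at hi
      have hile : i ≤ n.totient := by omega
      rw [hcoeff i]
      have : ((x:ℂ)/(y:ℂ)) ^ i * (y:ℂ) ^ n.totient = (x:ℂ) ^ i * (y:ℂ) ^ (n.totient - i) := by
        rw [div_pow, div_mul_eq_mul_div, mul_div_assoc, div_eq_mul_inv, ← pow_sub₀ (y:ℂ) hy hile]
      rw [mul_assoc, ← this]
      ring
    rw [Finset.sum_congr rfl hstep, ← Finset.sum_mul]
    have heval : ∑ i ∈ Finset.range (n.totient + 1),
        (cyclotomic n ℂ).coeff i * ((x:ℂ)/(y:ℂ)) ^ i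
        = eval ((x:ℂ)/(y:ℂ)) (cyclotomic n ℂ) := by
      rw [eval_eq_sum_range, hdeg]
    rw [heval, hcyc, eval_prod]
    simp only [eval_sub, eval_X, eval_C]
    rw [← hcard, ← Finset.prod_const (b := (y:ℂ)), ← Finset.prod_mul_distrib]
    apply Finset.prod_congr rfl
    intro ζ _
    field_simp

lemma eval_cyclotomic_ne_zero (n : ℕ) (hn : 3 ≤ n) (e : ℤ) (he : e = 1 ∨ e = -1) :
    (Polynomial.cyclotomic n ℤ).eval e ≠ 0 := by
  intro h0
  have hn0 : n ≠ 0 := by omega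
  have hC : eval ((e:ℤ):ℂ) (cyclotomic n ℂ) = 0 := by
    have := cyclotomic.eval_apply (S := ℂ) e n (Int.castRingHom ℂ)
    simp only [Int.coe_castRingHom] at this
    rw [this, h0]
    simp
  have : NeZero ((n:ℕ) : ℂ) := ⟨by exact_mod_cast hn0⟩
  have hroot : IsPrimitiveRoot ((e:ℤ):ℂ) n := by
    rw [← Polynomial.isRoot_cyclotomic_iff (R := ℂ) (n := n)]
    exact hC
  have hpow : (((e:ℤ):ℂ)) ^ 2 = 1 := by
    rcases he with h | h <;> subst h <;> norm_num
  have hdvd := hroot.dvd_of_pow_eq_one 2 hpow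
  have := Nat.le_of_dvd (by norm_num) hdvd
  omega

lemma prod_normSq_ge_one (n : ℕ) (hn : 3 ≤ n) (e : ℤ) (he : e = 1 ∨ e = -1) :
    (1:ℝ) ≤ ∏ ζ ∈ primitiveRoots n ℂ, Complex.normSq ((e:ℂ) - ζ) := by
  have hn0 : n ≠ 0 := by omega
  have hμ := Complex.isPrimitiveRoot_exp n hn0
  have hcyc : cyclotomic n ℂ = ∏ ζ ∈ primitiveRoots n ℂ, (X - C ζ) :=
    cyclotomic_eq_prod_X_sub_primitiveRoots hμ
  have h1 : ∏ ζ ∈ primitiveRoots n ℂ, Complex.normSq ((e:ℂ) - ζ)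
      = Complex.normSq (∏ ζ ∈ primitiveRoots n ℂ, ((e:ℂ) - ζ)) :=
    (map_prod Complex.normSq _ _).symm
  have h2 : ∏ ζ ∈ primitiveRoots n ℂ, ((e:ℂ) - ζ) = eval ((e:ℤ):ℂ) (cyclotomic n ℂ) := by
    rw [hcyc, eval_prod]
    simp
  have h3 : eval ((e:ℤ):ℂ) (cyclotomic n ℂ) = (((cyclotomic n ℤ).eval e : ℤ) : ℂ) := by
    have := cyclotomic.eval_apply (S := ℂ) e n (Int.castRingHom ℂ)
    simp only [Int.coe_castRingHom] at this
    exact this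
  rw [h1, h2, h3, Complex.normSq_intCast]
  have hne := eval_cyclotomic_ne_zero n hn e he
  set k := (cyclotomic n ℤ).eval e
  have : (1:ℤ) ≤ k * k := by
    rcases lt_or_gt_of_ne hne with h | h <;> nlinarith
  exact_mod_cast this

open Finset in
lemma prod_factor_lower {α : Type*} (S : Finset α) (s : α → ℝ) (D P : ℝ)
    (hs : ∀ a ∈ S, 0 ≤ s a) (hD : 0 ≤ D)
    (hprod : 1 ≤ ∏ a ∈ S, (2 * s a))
    (hcase : 3 ≤ P ∨ (P = 2 ∧ 1 ≤ D) ∨ (P = 0 ∧ 3 ≤ D)) :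
    (3:ℝ) ^ S.card ≤ ∏ a ∈ S, (D + 2 * P * s a) := by
  rcases hcase with hP | ⟨hP, hD1⟩ | ⟨hP, hD3⟩
  · have h1 : ∏ a ∈ S, (3 * (2 * s a)) ≤ ∏ a ∈ S, (D + 2 * P * s a) := by
      apply Finset.prod_le_prod
      · intro a ha; have := hs a ha; positivity
      · intro a ha; have := hs a ha; nlinarith
    have h2 : ∏ a ∈ S, (3 * (2 * s a)) = 3 ^ S.card * ∏ a ∈ S, (2 * s a) := by
      rw [Finset.prod_mul_distrib, Finset.prod_const]
    nlinarith [pow_pos (show (0:ℝ) < 3 by norm_num) S.card]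
  · subst hP
    have hF : ∀ a ∈ S, (0:ℝ) ≤ D + 2 * 2 * s a := by
      intro a ha; have := hs a ha; nlinarith
    have hFprod : (0:ℝ) ≤ ∏ a ∈ S, (D + 2 * 2 * s a) := Finset.prod_nonneg hF
    apply le_of_pow_le_pow_left₀ (n := 3) (by norm_num) hFprod
    have key : ∏ a ∈ S, (27 * (2 * s a) ^ 2) ≤ ∏ a ∈ S, (D + 2 * 2 * s a) ^ 3 := by
      apply Finset.prod_le_prod
      · intro a ha; have := hs a ha; positivity
      · intro a ha
        have h := hs a ha
        have he1 : (1 + 4 * s a) ^ 3 ≤ (D + 2 * 2 * s a) ^ 3 := by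
          apply pow_le_pow_left₀ (by linarith) (by linarith)
        have he2 : 27 * (2 * s a) ^ 2 ≤ (1 + 4 * s a) ^ 3 := by
          nlinarith [mul_nonneg (sq_nonneg (2 * s a - 1)) (by linarith : (0:ℝ) ≤ 16 * s a + 1)]
        linarith
    have e1 : ∏ a ∈ S, (27 * (2 * s a) ^ 2) = 27 ^ S.card * (∏ a ∈ S, (2 * s a)) ^ 2 := by
      rw [Finset.prod_mul_distrib, Finset.prod_const, Finset.prod_pow]
    have e2 : ∏ a ∈ S, (D + 2 * 2 * s a) ^ 3 = (∏ a ∈ S, (D + 2 * 2 * s a)) ^ 3 := by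
      rw [Finset.prod_pow]
    have h27 : ((3:ℝ) ^ S.card) ^ 3 = 27 ^ S.card := by
      rw [← pow_mul, pow_mul']; norm_num
    rw [h27]
    have : (1:ℝ) ≤ (∏ a ∈ S, (2 * s a)) ^ 2 := one_le_pow₀ hprod
    nlinarith [pow_pos (show (0:ℝ) < 27 by norm_num) S.card]
  · subst hP
    have : ∏ a ∈ S, (3:ℝ) ≤ ∏ a ∈ S, (D + 2 * 0 * s a) := by
      apply Finset.prod_le_prod
      · intros; norm_num
      · intro a ha; nlinarith
    simpa using this

set_option maxHeartbeats 2000000 in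
lemma three_pow_le_sq (m : ℕ) (n : ℕ) (x y : ℤ) (hn : 3 ≤ n)
    (hxy : 2 ≤ max |x| |y|) (hrep : cycBinaryForm n x y = (m:ℤ)) :
    (3:ℝ) ^ n.totient ≤ (m:ℝ) ^ 2 := by
  have hn0 : n ≠ 0 := by omega
  have hnpos : 0 < n := by omega
  set K := primitiveRoots n ℂ with hK
  have hcard : K.card = n.totient := Complex.card_primitiveRoots n
  set e : ℤ := if 0 ≤ x*y then 1 else -1 with hedef
  have he : e = 1 ∨ e = -1 := by
    rw [hedef]; split_ifs <;> simp
  have he2 : ((e:ℝ))^2 = 1 := by rcases he with h | h <;> rw [h] <;> norm_num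
  set X : ℝ := (x:ℝ) with hX
  set Y : ℝ := (y:ℝ) with hY
  set P : ℝ := |X| * |Y| with hP
  set D : ℝ := (|X| - |Y|)^2 with hD
  have hEP : (e:ℝ) * P = X * Y := by
    rw [hedef]
    split_ifs with hsgn
    · have : (0:ℝ) ≤ X * Y := by rw [hX, hY]; exact_mod_cast hsgn
      rw [hP, ← abs_mul, abs_of_nonneg this]; push_cast; ring
    · push_neg at hsgn
      have : X * Y < 0 := by rw [hX, hY]; exact_mod_cast hsgn
      rw [hP, ← abs_mul, abs_of_neg this]; push_cast; ring
  have hnormζ : ∀ ζ ∈ K, ζ.re^2 + ζ.im^2 = 1 := by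
    intro ζ hζ
    have hprim : IsPrimitiveRoot ζ n := (mem_primitiveRoots hnpos).mp hζ
    have h1 : ‖ζ‖ = 1 := hprim.norm'_eq_one hn0
    have h2 : Complex.normSq ζ = 1 := by
      rw [Complex.normSq_eq_norm_sq, h1]; norm_num
    rw [Complex.normSq_apply] at h2
    nlinarith [h2]
  have hfac : ∀ ζ ∈ K, Complex.normSq ((x:ℂ) - ζ * (y:ℂ)) = D + 2 * P * (1 - (e:ℝ) * ζ.re) := by
    intro ζ hζ
    have hsum := hnormζ ζ hζ
    have hre : ((x:ℂ) - ζ * (y:ℂ)).re = X - ζ.re * Y := by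
      simp [Complex.sub_re, Complex.mul_re, hX, hY]
    have him : ((x:ℂ) - ζ * (y:ℂ)).im = -(ζ.im * Y) := by
      simp [Complex.sub_im, Complex.mul_im, hY]
    have haX : |X|^2 = X^2 := sq_abs X
    have haY : |Y|^2 = Y^2 := sq_abs Y
    rw [Complex.normSq_apply, hre, him, hD, hP]
    linear_combination Y^2 * hsum - haX - haY + 2*ζ.re*hEP
  have h2s : ∀ ζ ∈ K, 2 * (1 - (e:ℝ) * ζ.re) = Complex.normSq ((e:ℂ) - ζ) := by
    intro ζ hζ
    have hsum := hnormζ ζ hζ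
    have hre : ((e:ℂ) - ζ).re = (e:ℝ) - ζ.re := by simp
    have him : ((e:ℂ) - ζ).im = -ζ.im := by simp
    rw [Complex.normSq_apply, hre, him]
    linear_combination -he2 - hsum
  have hprod2s : (1:ℝ) ≤ ∏ ζ ∈ K, (2 * (1 - (e:ℝ) * ζ.re)) := by
    rw [Finset.prod_congr rfl h2s]
    exact prod_normSq_ge_one n hn e he
  have hsnn : ∀ ζ ∈ K, (0:ℝ) ≤ 1 - (e:ℝ) * ζ.re := by
    intro ζ hζ
    have hprim : IsPrimitiveRoot ζ n := (mem_primitiveRoots hnpos).mp hζ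
    have h1 : ‖ζ‖ = 1 := hprim.norm'_eq_one hn0
    have h2 : |ζ.re| ≤ 1 := by
      have := Complex.abs_re_le_norm ζ
      rw [h1] at this
      exact this
    have h3 := abs_le.mp h2
    rcases he with h | h <;> rw [h] <;> push_cast <;> nlinarith [h3.1, h3.2]
  have hDnn : 0 ≤ D := sq_nonneg _
  have hcase : 3 ≤ P ∨ (P = 2 ∧ 1 ≤ D) ∨ (P = 0 ∧ 3 ≤ D) := by
    have habsX : |X| = ((|x| : ℤ) : ℝ) := by rw [hX]; push_cast; rfl
    have habsY : |Y| = ((|y| : ℤ) : ℝ) := by rw [hY]; push_cast; rfl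
    by_cases hx0 : x = 0
    · right; right
      refine ⟨by rw [hP, habsX, hx0]; simp, ?_⟩
      have hy2 : 2 ≤ |y| := by
        rw [hx0] at hxy; simpa using hxy
      have hy2' : (2:ℝ) ≤ ((|y|:ℤ):ℝ) := by exact_mod_cast hy2
      rw [hD, habsX, habsY, hx0]
      simp only [abs_zero, Int.cast_zero, zero_sub, neg_sq]
      nlinarith
    by_cases hy0 : y = 0
    · right; right
      refine ⟨by rw [hP, habsY, hy0]; simp, ?_⟩
      have hx2 : 2 ≤ |x| := by
        rw [hy0] at hxy; simpa using hxy
      have hx2' : (2:ℝ) ≤ ((|x|:ℤ):ℝ) := by exact_mod_cast hx2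
      rw [hD, habsX, habsY, hy0]
      simp only [abs_zero, Int.cast_zero, sub_zero]
      nlinarith
    · have hx1 : 1 ≤ |x| := by have := abs_pos.mpr hx0; omega
      have hy1 : 1 ≤ |y| := by have := abs_pos.mpr hy0; omega
      have hPint : P = ((|x| * |y| : ℤ) : ℝ) := by rw [hP, habsX, habsY]; push_cast; ring
      by_cases hp3 : 3 ≤ |x| * |y|
      · left; rw [hPint]; exact_mod_cast hp3
      · right; left
        push_neg at hp3
        have hx2 : |x| ≤ 2 := by nlinarith
        have hy2 : |y| ≤ 2 := by nlinarith
        have h12 : (|x| = 1 ∧ |y| = 2) ∨ (|x| = 2 ∧ |y| = 1) := by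
          have hmax : 2 ≤ |x| ∨ 2 ≤ |y| := by
            rcases le_max_iff.mp hxy with h | h
            · left; exact h
            · right; exact h
          rcases hmax with h | h
          · right
            have hxe : |x| = 2 := by omega
            refine ⟨hxe, ?_⟩
            rw [hxe] at hp3; nlinarith
          · left
            have hye : |y| = 2 := by omega
            refine ⟨?_, hye⟩
            rw [hye] at hp3; nlinarith
        constructor
        · rcases h12 with ⟨h1, h2⟩ | ⟨h1, h2⟩ <;> rw [hPint, h1, h2] <;> norm_num
        · rcases h12 with ⟨h1, h2⟩ | ⟨h1, h2⟩ <;> rw [hD, habsX, habsY, h1, h2] <;> norm_num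
  have hmC : ((m:ℕ):ℂ) = ∏ ζ ∈ K, ((x:ℂ) - ζ * (y:ℂ)) := by
    rw [← cycBinaryForm_eq_prod n hn x y, hrep]
    push_cast; rfl
  have hm2 : (m:ℝ)^2 = ∏ ζ ∈ K, Complex.normSq ((x:ℂ) - ζ * (y:ℂ)) := by
    rw [← map_prod Complex.normSq _ _, ← hmC, Complex.normSq_natCast]
    ring
  rw [hm2, Finset.prod_congr rfl hfac, ← hcard]
  exact prod_factor_lower K (fun ζ => 1 - (e:ℝ) * ζ.re) D P hsnn hDnn hprod2s hcase

lemma log_three_gt : (1.0985:ℝ) < Real.log 3 := by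
  rw [show (1.0985:ℝ) = 2197/2000 by norm_num]
  rw [Real.lt_log_iff_exp_lt (by norm_num : (0:ℝ) < 3)]
  apply lt_of_pow_lt_pow_left₀ 2000 (by norm_num : (0:ℝ) ≤ 3)
  have h1 : Real.exp (2197/2000) ^ (2000:ℕ) = Real.exp 1 ^ (2197:ℕ) := by
    rw [← Real.exp_nat_mul, ← Real.exp_nat_mul]; norm_num
  rw [h1]
  have h3 : Real.exp 1 < 2.7182818286 := Real.exp_one_lt_d9
  calc Real.exp 1 ^ (2197:ℕ) < 2.7182818286 ^ (2197:ℕ) := by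
        apply pow_lt_pow_left₀ h3 (Real.exp_pos 1).le (by norm_num)
    _ ≤ 3 ^ 2000 := by
        norm_num
        rw [div_pow, div_le_iff₀ (by positivity)]
        exact_mod_cast (show (13591409143:ℕ)^2197 ≤ 3^2000 * 5000000000^2197 by decide +kernel)

lemma rpow_base_lt : (4000/2197:ℝ) ^ (1.161:ℝ) < 5383/2684 := by
  have h0 : (0:ℝ) ≤ (4000/2197:ℝ) := by norm_num
  have hp : ((4000/2197:ℝ) ^ (1.161:ℝ)) ^ (1000:ℕ) = (4000/2197:ℝ) ^ (1161:ℕ) := by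
    rw [← Real.rpow_natCast ((4000/2197:ℝ) ^ (1.161:ℝ)) 1000, ← Real.rpow_mul h0,
      show (1.161:ℝ) * (1000:ℕ) = ((1161:ℕ):ℝ) by norm_num, Real.rpow_natCast]
  by_contra hcon
  push_neg at hcon
  have h2 : ((5383:ℝ)/2684) ^ (1000:ℕ) ≤ ((4000/2197:ℝ) ^ (1.161:ℝ)) ^ (1000:ℕ) :=
    pow_le_pow_left₀ (by norm_num) hcon 1000
  rw [hp] at h2
  rw [div_pow, div_pow, div_le_div_iff₀ (by positivity) (by positivity)] at h2
  exact absurd (by exact_mod_cast h2 : (5383:ℕ)^1000 * 2197^1161 ≤ 4000^1161 * 2684^1000) (by decide +kernel)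

theorem stmt2 (m : ℕ) (hm : 0 < m) (n : ℕ) (x y : ℤ)
    (hn : 3 ≤ n) (hxy : 2 ≤ max |x| |y|)
    (hrep : cycBinaryForm n x y = (m : ℤ)) :
    (n : ℝ) < 5.383 * Real.log m ^ (1.161 : ℝ) := by
  have hφpos : 0 < n.totient := Nat.totient_pos.mpr (by omega)
  have hφeven : Even n.totient := Nat.totient_even (by omega)
  have hφ2 : 2 ≤ n.totient := by
    rcases hφeven with ⟨r, hr⟩; omega
  have h3m := three_pow_le_sq m n x y hn hxy hrep
  have h9 : (9:ℝ) ≤ (m:ℝ)^2 := by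
    refine le_trans ?_ h3m
    calc (9:ℝ) = 3^2 := by norm_num
      _ ≤ 3 ^ n.totient := pow_le_pow_right₀ (by norm_num) hφ2
  have hm3 : (3:ℝ) ≤ (m:ℝ) := by nlinarith [Nat.cast_nonneg (α := ℝ) m]
  have hL3 := log_three_gt
  have hL3pos : (0:ℝ) < Real.log 3 := by linarith
  have hlogm : Real.log 3 ≤ Real.log m := Real.log_le_log (by norm_num) hm3
  have hlogm_pos : 0 < Real.log m := lt_of_lt_of_le hL3pos hlogm
  -- φ log 3 ≤ 2 log m
  have key1 : (n.totient:ℝ) * Real.log 3 ≤ 2 * Real.log m := by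
    have := Real.log_le_log (by positivity) h3m
    rw [Real.log_pow, Real.log_pow] at this
    exact_mod_cast this
  have hφle : (n.totient:ℝ) ≤ (4000/2197) * Real.log m := by
    have h2197 : (2197/2000:ℝ) ≤ Real.log 3 := by
      refine le_of_lt (lt_of_le_of_lt ?_ hL3); norm_num
    have hmono : (n.totient:ℝ) * (2197/2000) ≤ (n.totient:ℝ) * Real.log 3 :=
      mul_le_mul_of_nonneg_left h2197 (Nat.cast_nonneg _)
    nlinarith [hlogm_pos]
  have hKL := totient_lower n (by omega)
  have hrpow : ((n.totient:ℝ)) ^ (1.161:ℝ) ≤ ((4000/2197) * Real.log m) ^ (1.161:ℝ) :=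
    Real.rpow_le_rpow (Nat.cast_nonneg _) hφle (by norm_num)
  have hsplit : ((4000/2197:ℝ) * Real.log m) ^ (1.161:ℝ)
      = (4000/2197:ℝ) ^ (1.161:ℝ) * Real.log m ^ (1.161:ℝ) :=
    Real.mul_rpow (by norm_num) (le_of_lt hlogm_pos)
  have hlogm_rpow_pos : 0 < Real.log m ^ (1.161:ℝ) := Real.rpow_pos_of_pos hlogm_pos _
  have hnum := rpow_base_lt
  calc (n:ℝ) ≤ 2.684 * (n.totient:ℝ) ^ (1.161:ℝ) := hKL
    _ ≤ 2.684 * ((4000/2197:ℝ) ^ (1.161:ℝ) * Real.log m ^ (1.161:ℝ)) := by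
        rw [← hsplit]
        apply mul_le_mul_of_nonneg_left hrpow (by norm_num)
    _ < 2.684 * ((5383/2684) * Real.log m ^ (1.161:ℝ)) := by
        apply mul_lt_mul_of_pos_left _ (by norm_num)
        exact mul_lt_mul_of_pos_right hnum hlogm_rpow_pos
    _ = 5.383 * Real.log m ^ (1.161:ℝ) := by ring
end

section
/- For every real number θ with 0 < θ < 1, the set of triples (n,x,y) of integers with n ≥ 3, max{|x|,|y|} ≥ 2 and Φ_n(x,y) ≤ 2^{θ·φ(n)} is finite, and every such triple satisfies max{|x|,|y|} = 2. -/
open Polynomial Finset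

namespace CBF

/-- absolute-value product form of the cyclotomic binary form -/
noncomputable def P (n : ℕ) (x y : ℤ) : ℝ :=
  ∏ ζ ∈ primitiveRoots n ℂ, ‖(x:ℂ) - ζ * y‖

lemma coeff_cast {K : Type*} [Field K] (n i : ℕ) :
    (((Polynomial.cyclotomic n ℤ).coeff i : ℤ) : K) = (Polynomial.cyclotomic n K).coeff i := by
  rw [← map_cyclotomic_int n K, coeff_map, eq_intCast]

lemma cbf_y_zero (n : ℕ) (x : ℤ) : cycBinaryForm n x 0 = x ^ n.totient := by
  rw [cycBinaryForm]
  rw [Finset.sum_eq_single_of_mem n.totient (Finset.self_mem_range_succ _)]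
  · simp [← natDegree_cyclotomic n ℤ, (cyclotomic.monic n ℤ).coeff_natDegree]
  · intro i hi hne
    have : n.totient - i ≠ 0 := by
      rw [Finset.mem_range, Nat.lt_succ_iff] at hi
      omega
    simp [this]

lemma cbf_cast {K : Type*} [Field K] (n : ℕ) (x y : ℤ) (hy : (y:K) ≠ 0) :
    ((cycBinaryForm n x y : ℤ) : K)
      = (y:K) ^ n.totient * (Polynomial.cyclotomic n K).eval ((x:K)/(y:K)) := by
  rw [eval_eq_sum_range, natDegree_cyclotomic, cycBinaryForm]
  push_cast
  rw [Finset.mul_sum]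
  refine Finset.sum_congr rfl fun i hi => ?_
  rw [Finset.mem_range, Nat.lt_succ_iff] at hi
  rw [coeff_cast, pow_sub₀ _ hy hi, div_pow]
  field_simp

lemma cbf_complex {n : ℕ} (hn : 0 < n) (x y : ℤ) :
    ((cycBinaryForm n x y : ℤ) : ℂ) = ∏ ζ ∈ primitiveRoots n ℂ, ((x:ℂ) - ζ * y) := by
  have hζ₀ : IsPrimitiveRoot (Complex.exp (2 * Real.pi * Complex.I / n)) n :=
    Complex.isPrimitiveRoot_exp n hn.ne'
  have hcard : (primitiveRoots n ℂ).card = n.totient := hζ₀.card_primitiveRoots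
  have hcyc : cyclotomic n ℂ = ∏ μ ∈ primitiveRoots n ℂ, (X - C μ) :=
    cyclotomic_eq_prod_X_sub_primitiveRoots hζ₀
  rcases eq_or_ne y 0 with rfl | hy
  · rw [cbf_y_zero]
    push_cast
    rw [← hcard]
    simp [Finset.prod_const]
  · have hy' : ((y:ℂ)) ≠ 0 := by exact_mod_cast hy
    rw [cbf_cast n x y hy', hcyc, eval_prod, ← hcard, ← Finset.prod_const ((y:ℂ)),
      ← Finset.prod_mul_distrib]
    refine Finset.prod_congr rfl fun ζ _ => ?_
    simp only [eval_sub, eval_X, eval_C]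
    field_simp

lemma cbf_pos {n : ℕ} (hn : 2 < n) {x y : ℤ} (h : ¬(x = 0 ∧ y = 0)) :
    0 < cycBinaryForm n x y := by
  have hd : Even n.totient := Nat.totient_even hn
  rcases eq_or_ne y 0 with rfl | hy
  · have hx : x ≠ 0 := by tauto
    rw [cbf_y_zero]
    exact hd.pow_pos hx
  · have hy' : ((y:ℝ)) ≠ 0 := by exact_mod_cast hy
    have : (0:ℝ) < ((cycBinaryForm n x y : ℤ) : ℝ) := by
      rw [cbf_cast n x y hy']
      exact mul_pos (hd.pow_pos hy') (cyclotomic_pos hn _)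
    exact_mod_cast this

lemma cbf_eq_P {n : ℕ} (hn : 2 < n) {x y : ℤ} (h : ¬(x = 0 ∧ y = 0)) :
    ((cycBinaryForm n x y : ℤ) : ℝ) = P n x y := by
  have h1 : ‖((cycBinaryForm n x y : ℤ) : ℂ)‖ = P n x y := by
    rw [cbf_complex (by omega) x y, norm_prod]
    rfl
  have h2 : ‖((cycBinaryForm n x y : ℤ) : ℂ)‖ = |((cycBinaryForm n x y : ℤ) : ℝ)| := by
    exact Complex.norm_intCast _
  rw [← h1, h2, abs_of_pos]
  exact_mod_cast cbf_pos hn h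

lemma one_le_P {n : ℕ} (hn : 2 < n) {x y : ℤ} (h : ¬(x = 0 ∧ y = 0)) :
    1 ≤ P n x y := by
  rw [← cbf_eq_P hn h]
  have := cbf_pos hn h
  exact_mod_cast this

lemma prim_norm_one {n : ℕ} (hn : 0 < n) {ζ : ℂ} (hζ : ζ ∈ primitiveRoots n ℂ) :
    ‖ζ‖ = 1 := by
  rw [mem_primitiveRoots hn] at hζ
  have h1 : ‖ζ‖ ^ n = 1 := by
    rw [← norm_pow, hζ.pow_eq_one, norm_one]
  have h0 : 0 ≤ ‖ζ‖ := norm_nonneg _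
  have hn' : n ≠ 0 := hn.ne'
  rcases lt_trichotomy ‖ζ‖ 1 with h | h | h
  · have := pow_lt_one₀ h0 h hn'
    simp [h1] at this
  · exact h
  · have := one_lt_pow₀ h hn'
    simp [h1] at this

lemma factor_sq {ζ : ℂ} (hζ : ‖ζ‖ = 1) (x y : ℝ) :
    ‖(x:ℂ) - ζ * y‖ ^ 2 = x^2 - 2*x*y*ζ.re + y^2 := by
  have h1 : ζ.re^2 + ζ.im^2 = 1 := by
    have h2 := congrArg (· ^ 2) hζ
    simp only [Complex.sq_norm, Complex.normSq_apply, one_pow] at h2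
    linear_combination h2
  rw [Complex.sq_norm, Complex.normSq_apply]
  simp only [Complex.sub_re, Complex.sub_im, Complex.mul_re, Complex.mul_im,
    Complex.ofReal_re, Complex.ofReal_im]
  ring_nf
  linear_combination (y^2) * h1

lemma re_le {ζ : ℂ} (hζ : ‖ζ‖ = 1) : |ζ.re| ≤ 1 := hζ ▸ Complex.abs_re_le_norm ζ

lemma P_nonneg (n : ℕ) (x y : ℤ) : 0 ≤ P n x y :=
  Finset.prod_nonneg fun _ _ => norm_nonneg _

lemma P_sq (n : ℕ) (x y : ℤ) : P n x y ^ 2 = ∏ ζ ∈ primitiveRoots n ℂ, ‖(x:ℂ) - ζ * y‖ ^ 2 := by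
  rw [P, ← Finset.prod_pow]

lemma P_y_zero {n : ℕ} (hn : 0 < n) (x : ℤ) : P n x 0 = (|x| : ℝ) ^ n.totient := by
  rw [P, ← Complex.card_primitiveRoots n]
  rw [Finset.prod_congr rfl (fun ζ _ => ?_), Finset.prod_const]
  push_cast
  simp

lemma P_x_zero {n : ℕ} (hn : 0 < n) (y : ℤ) : P n 0 y = (|y| : ℝ) ^ n.totient := by
  rw [P, ← Complex.card_primitiveRoots n]
  rw [Finset.prod_congr rfl (fun ζ hζ => ?_), Finset.prod_const]
  rw [Int.cast_zero, zero_sub, norm_neg, norm_mul,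
    prim_norm_one hn hζ, one_mul, Complex.norm_intCast]

lemma P_neg (n : ℕ) (x y : ℤ) : P n (-x) (-y) = P n x y := by
  refine Finset.prod_congr rfl fun ζ _ => ?_
  push_cast
  rw [show -(x:ℂ) - ζ * (-(y:ℂ)) = -((x:ℂ) - ζ * y) by ring, norm_neg]

lemma P_swap {n : ℕ} (hn : 0 < n) (x y : ℤ) : P n x y = P n y x := by
  rw [P, P]
  refine Finset.prod_nbij' (fun ζ => ζ⁻¹) (fun ζ => ζ⁻¹) ?_ ?_ ?_ ?_ ?_
  · intro ζ hζ
    exact (mem_primitiveRoots hn).mpr ((mem_primitiveRoots hn).mp hζ).inv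
  · intro ζ hζ
    exact (mem_primitiveRoots hn).mpr ((mem_primitiveRoots hn).mp hζ).inv
  · intro ζ _; simp
  · intro ζ _; simp
  · intro ζ hζ
    have h0 : ζ ≠ 0 := by
      intro h
      have := prim_norm_one hn hζ
      simp [h] at this
    have : (y:ℂ) - ζ⁻¹ * x = ζ⁻¹ * (ζ * y - x) := by
      field_simp
    rw [this, norm_mul, norm_inv, prim_norm_one hn hζ,
      show ζ * (y:ℂ) - x = -((x:ℂ) - ζ * y) by ring, norm_neg]
    simp

lemma P_ge_two_pow {n : ℕ} (hn : 2 < n) {x y : ℤ} (hx : x ≠ 0) (hy : y ≠ 0)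
    (h4 : 4 ≤ |x| + |y|) : (2:ℝ) ^ n.totient ≤ P n x y := by
  have hn0 : 0 < n := by omega
  set ε : ℤ := if 0 ≤ x * y then 1 else -1 with hε
  have hP1 : 1 ≤ P n 1 ε := one_le_P hn (by simp)
  have key : ∀ ζ ∈ primitiveRoots n ℂ,
      4 * ‖((1:ℤ):ℂ) - ζ * (ε:ℂ)‖ ^ 2 ≤ ‖(x:ℂ) - ζ * (y:ℂ)‖ ^ 2 := by
    intro ζ hζ
    have h1 := prim_norm_one hn0 hζ
    have hc := re_le h1
    rw [abs_le] at hc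
    have e1 : ‖(x:ℂ) - ζ * (y:ℂ)‖ ^ 2 = (x:ℝ)^2 - 2*x*y*ζ.re + (y:ℝ)^2 := by
      have := factor_sq h1 (x:ℝ) (y:ℝ)
      push_cast at this ⊢
      exact this
    have e2 : ‖((1:ℤ):ℂ) - ζ * (ε:ℂ)‖ ^ 2 = (1:ℝ)^2 - 2*1*(ε:ℝ)*ζ.re + (ε:ℝ)^2 := by
      have := factor_sq h1 (1:ℝ) (ε:ℝ)
      push_cast at this ⊢
      exact this
    rw [e1, e2]
    set c := ζ.re
    by_cases hxy : 0 ≤ x * y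
    · have hεv : ε = 1 := if_pos hxy
      have he : |x| * |y| = x * y := by rw [← abs_mul, abs_of_nonneg hxy]
      have hs : (16:ℤ) ≤ (x + y)^2 := by
        nlinarith [he, sq_abs x, sq_abs y, h4, abs_nonneg x, abs_nonneg y]
      have hs' : (16:ℝ) ≤ ((x:ℝ) + y)^2 := by exact_mod_cast hs
      rw [hεv]
      push_cast
      nlinarith [mul_nonneg (by linarith : (0:ℝ) ≤ 1 + c) (sq_nonneg ((x:ℝ) - y)),
        mul_nonneg (by linarith : (0:ℝ) ≤ 1 - c) (by linarith : (0:ℝ) ≤ ((x:ℝ) + y)^2 - 16)]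
    · have hεv : ε = -1 := if_neg hxy
      push_neg at hxy
      have he : |x| * |y| = -(x * y) := by rw [← abs_mul, abs_of_nonpos hxy.le]
      have hs : (16:ℤ) ≤ (x - y)^2 := by
        nlinarith [he, sq_abs x, sq_abs y, h4, abs_nonneg x, abs_nonneg y]
      have hs' : (16:ℝ) ≤ ((x:ℝ) - y)^2 := by exact_mod_cast hs
      rw [hεv]
      push_cast
      nlinarith [mul_nonneg (by linarith : (0:ℝ) ≤ 1 - c) (sq_nonneg ((x:ℝ) + y)),
        mul_nonneg (by linarith : (0:ℝ) ≤ 1 + c) (by linarith : (0:ℝ) ≤ ((x:ℝ) - y)^2 - 16)]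
  have hsq : ((2:ℝ) ^ n.totient) ^ 2 ≤ P n x y ^ 2 := by
    rw [P_sq]
    calc ((2:ℝ) ^ n.totient) ^ 2 = ((2:ℝ)^n.totient)^2 * 1 := by ring
    _ ≤ ((2:ℝ)^n.totient)^2 * (P n 1 ε)^2 := by
        apply mul_le_mul_of_nonneg_left _ (by positivity)
        nlinarith [P_nonneg n 1 ε]
    _ = ∏ ζ ∈ primitiveRoots n ℂ, (4 * ‖((1:ℤ):ℂ) - ζ * (ε:ℂ)‖ ^ 2) := by
        have h42 : (4:ℝ) ^ n.totient = 2 ^ (n.totient * 2) := by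
          rw [show (4:ℝ) = 2^2 by norm_num, ← pow_mul, mul_comm]
        rw [Finset.prod_mul_distrib, Finset.prod_const, Complex.card_primitiveRoots, ← P_sq,
          ← pow_mul, h42]
    _ ≤ ∏ ζ ∈ primitiveRoots n ℂ, ‖(x:ℂ) - ζ * (y:ℂ)‖ ^ 2 :=
        Finset.prod_le_prod (fun ζ _ => by positivity) key
  have h2 : (0:ℝ) ≤ 2 ^ n.totient := by positivity
  nlinarith [P_nonneg n x y]

lemma eval_complex_eq (t : ℝ) (m : ℕ) :
    ((Polynomial.eval t (cyclotomic m ℝ) : ℝ) : ℂ) = Polynomial.eval (t:ℂ) (cyclotomic m ℂ) := by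
  rw [← map_cyclotomic m (algebraMap ℝ ℂ), eval_map]
  rw [show ((t:ℂ)) = algebraMap ℝ ℂ t from rfl, eval₂_at_apply]
  rfl

lemma one_le_eval_abs {t : ℝ} (ht : 2 ≤ |t|) {m : ℕ} (hm : 0 < m) :
    1 ≤ |Polynomial.eval t (cyclotomic m ℝ)| := by
  have hζ₀ : IsPrimitiveRoot (Complex.exp (2 * Real.pi * Complex.I / m)) m :=
    Complex.isPrimitiveRoot_exp m hm.ne'
  have hcyc : cyclotomic m ℂ = ∏ μ ∈ primitiveRoots m ℂ, (X - C μ) :=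
    cyclotomic_eq_prod_X_sub_primitiveRoots hζ₀
  have : |Polynomial.eval t (cyclotomic m ℝ)| = ‖Polynomial.eval (t:ℂ) (cyclotomic m ℂ)‖ := by
    rw [← eval_complex_eq, Complex.norm_real, Real.norm_eq_abs]
  rw [this, hcyc, eval_prod]
  rw [norm_prod]
  have h1' : (1:ℝ) = ∏ _ζ ∈ primitiveRoots m ℂ, (1:ℝ) := by rw [Finset.prod_const_one]
  rw [h1']
  apply Finset.prod_le_prod (fun _ _ => by norm_num)
  intro ζ hζ
  have h1 : ‖ζ‖ = 1 := by
    rw [mem_primitiveRoots hm] at hζ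
    have h2 : ‖ζ‖ ^ m = 1 := by rw [← norm_pow, hζ.pow_eq_one, norm_one]
    have h0 : 0 ≤ ‖ζ‖ := norm_nonneg _
    rcases lt_trichotomy ‖ζ‖ 1 with h | h | h
    · have := pow_lt_one₀ h0 h hm.ne'
      simp [h2] at this
    · exact h
    · have := one_lt_pow₀ h hm.ne'
      simp [h2] at this
  have h2 : ‖(t:ℂ)‖ = |t| := Complex.norm_real t
  simp only [eval_sub, eval_X, eval_C]
  calc (1:ℝ) = 2 - 1 := by norm_num
  _ ≤ ‖(t:ℂ)‖ - ‖ζ‖ := by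
      rw [h2, h1]
      linarith
  _ ≤ ‖(t:ℂ) - ζ‖ := norm_sub_norm_le _ _

lemma geom_aux : ∀ n : ℕ, ∑ d ∈ Finset.Icc 1 n, (1/2:ℝ)^d ≤ 1 - (1/2)^n := by
  intro n
  induction n with
  | zero => simp
  | succ n ih =>
    rw [Finset.sum_Icc_succ_top (by omega)]
    have : (1/2:ℝ)^(n+1) ≤ (1/2)^n := by
      apply pow_le_pow_of_le_one <;> norm_num
    have h2 : (1/2:ℝ)^(n+1) = (1/2)*(1/2)^n := by ring
    linarith [ih]

lemma log_diff_bound {t : ℝ} (ht : |t| = 2) {b : ℕ} (hb : 0 < b) :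
    |Real.log |t^b - 1| - b * Real.log 2| ≤ 2 * (1/2)^b := by
  set x : ℝ := (1/2)^b with hxdef
  have hx0 : (0:ℝ) < x := by positivity
  have hx2 : x ≤ 1/2 := by
    rw [hxdef]
    calc ((1:ℝ)/2)^b ≤ (1/2)^1 := by
          apply pow_le_pow_of_le_one (by norm_num) (by norm_num) (by omega)
    _ = 1/2 := by norm_num
  have htb : |t^b| = 2^b := by rw [abs_pow, ht]
  have h2b : (0:ℝ) < 2^b := by positivity
  have hxe : x * 2^b = 1 := by
    rw [hxdef, ← mul_pow]
    norm_num
  have hA1 : 2^b - 1 ≤ |t^b - 1| := by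
    have := abs_sub_abs_le_abs_sub (t^b) 1
    rw [htb] at this
    simpa using this
  have hA2 : |t^b - 1| ≤ 2^b + 1 := by
    calc |t^b - 1| ≤ |t^b| + |(1:ℝ)| := abs_sub (t^b) 1
    _ = 2^b + 1 := by rw [htb, abs_one]
  have hA0 : (0:ℝ) < |t^b - 1| := by nlinarith
  set r : ℝ := |t^b - 1| / 2^b with hrdef
  have hr0 : 0 < r := by positivity
  have hr1 : 1 - x ≤ r := by
    rw [hrdef, le_div_iff₀ h2b]
    nlinarith
  have hr2 : r ≤ 1 + x := by
    rw [hrdef, div_le_iff₀ h2b]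
    nlinarith
  have hlogr : Real.log |t^b - 1| - b * Real.log 2 = Real.log r := by
    rw [hrdef, Real.log_div hA0.ne' (by positivity), Real.log_pow]
  rw [hlogr, abs_le]
  constructor
  · -- -2x ≤ log r
    have h1 : Real.log r⁻¹ ≤ r⁻¹ - 1 := Real.log_le_sub_one_of_pos (by positivity)
    rw [Real.log_inv] at h1
    have h2 : r⁻¹ ≤ (1 - x)⁻¹ := by
      apply inv_anti₀ (by linarith) hr1
    have h3 : (1 - x)⁻¹ ≤ 1 + 2*x := by
      rw [inv_eq_one_div, div_le_iff₀ (by linarith)]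
      nlinarith
    linarith
  · have h1 : Real.log r ≤ r - 1 := Real.log_le_sub_one_of_pos hr0
    linarith

lemma eval_lower {t : ℝ} (ht : |t| = 2) {n : ℕ} (hn : 0 < n) :
    Real.exp (-2) * 2 ^ n.totient ≤ |Polynomial.eval t (cyclotomic n ℝ)| := by
  have ht' : 2 ≤ |t| := ht.ge
  set F : ℕ → ℝ := fun m => Real.log |Polynomial.eval t (cyclotomic m ℝ)| with hF
  set G : ℕ → ℝ := fun m => Real.log |t^m - 1| with hG
  -- divisor-sum identity
  have hsum : ∀ m, 0 < m → ∑ d ∈ m.divisors, F d = G m := by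
    intro m hm
    have hprod := prod_cyclotomic_eq_X_pow_sub_one hm ℝ
    have heval : ∏ d ∈ m.divisors, Polynomial.eval t (cyclotomic d ℝ) = t^m - 1 := by
      rw [← eval_prod, hprod]
      simp
    have : G m = Real.log |∏ d ∈ m.divisors, Polynomial.eval t (cyclotomic d ℝ)| := by
      rw [heval]
    rw [this, Finset.abs_prod, Real.log_prod]
    intro d hd
    have hd0 : 0 < d := Nat.pos_of_mem_divisors hd
    have := one_le_eval_abs ht' hd0
    intro habs
    rw [habs] at this
    norm_num at this
  -- Möbius inversion
  have hinv : ∀ m > 0, ∑ x ∈ m.divisorsAntidiagonal, (ArithmeticFunction.moebius x.fst : ℤ) • G x.snd = F m :=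
    ArithmeticFunction.sum_eq_iff_sum_smul_moebius_eq.mp (fun m hm => hsum m hm)
  have htot : ∀ m > 0, ∑ x ∈ m.divisorsAntidiagonal, (ArithmeticFunction.moebius x.fst : ℤ) • ((x.snd : ℝ)) = (m.totient : ℝ) := by
    apply ArithmeticFunction.sum_eq_iff_sum_smul_moebius_eq.mp
    intro m hm
    exact_mod_cast congrArg (Nat.cast : ℕ → ℝ) (Nat.sum_totient m)
  have hFn := hinv n hn
  have htn := htot n hn
  -- difference bound
  have hdiff : |F n - (n.totient : ℝ) * Real.log 2| ≤ 2 := by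
    have e1 : F n - (n.totient : ℝ) * Real.log 2
        = ∑ x ∈ n.divisorsAntidiagonal, (ArithmeticFunction.moebius x.fst : ℤ) • (G x.snd - (x.snd : ℝ) * Real.log 2) := by
      rw [← hFn, ← htn, Finset.sum_mul, ← Finset.sum_sub_distrib]
      refine Finset.sum_congr rfl fun x _ => ?_
      simp only [zsmul_eq_mul]
      ring
    rw [e1]
    have hmu : ∀ a : ℕ, |((ArithmeticFunction.moebius a : ℤ) : ℝ)| ≤ 1 := by
      intro a
      by_cases hsf : Squarefree a
      · rw [ArithmeticFunction.moebius_apply_of_squarefree hsf]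
        push_cast
        rw [abs_pow, abs_neg, abs_one, one_pow]
      · rw [ArithmeticFunction.moebius_eq_zero_of_not_squarefree hsf]
        norm_num
    calc |∑ x ∈ n.divisorsAntidiagonal, (ArithmeticFunction.moebius x.fst : ℤ) • (G x.snd - (x.snd : ℝ) * Real.log 2)|
        ≤ ∑ x ∈ n.divisorsAntidiagonal, |(ArithmeticFunction.moebius x.fst : ℤ) • (G x.snd - (x.snd : ℝ) * Real.log 2)| :=
          abs_sum_le_sum_abs _ _
      _ ≤ ∑ x ∈ n.divisorsAntidiagonal, 2 * (1/2:ℝ)^x.snd := by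
          refine Finset.sum_le_sum fun x hx => ?_
          rw [Nat.mem_divisorsAntidiagonal] at hx
          have hb : 0 < x.snd := by
            rcases Nat.eq_zero_or_pos x.snd with h | h
            · exact absurd (by rw [← hx.1, h, mul_zero] : n = 0) hx.2
            · exact h
          rw [zsmul_eq_mul, abs_mul]
          calc |((ArithmeticFunction.moebius x.fst : ℤ) : ℝ)| * |G x.snd - (x.snd : ℝ) * Real.log 2|
              ≤ 1 * (2 * (1/2:ℝ)^x.snd) := by
                apply mul_le_mul (hmu _) (log_diff_bound ht hb) (abs_nonneg _) zero_le_one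
            _ = 2 * (1/2:ℝ)^x.snd := one_mul _
      _ = ∑ d ∈ n.divisors, 2 * (1/2:ℝ)^d := by
          rw [← Nat.map_div_left_divisors, Finset.sum_map]
          rfl
      _ ≤ ∑ d ∈ Finset.Icc 1 n, 2 * (1/2:ℝ)^d := by
          apply Finset.sum_le_sum_of_subset_of_nonneg
          · intro d hd
            rw [Finset.mem_Icc]
            exact ⟨Nat.pos_of_mem_divisors hd, Nat.le_of_dvd hn (Nat.dvd_of_mem_divisors hd)⟩
          · intro d _ _
            positivity
      _ = 2 * ∑ d ∈ Finset.Icc 1 n, (1/2:ℝ)^d := by rw [Finset.mul_sum]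
      _ ≤ 2 * (1 - (1/2)^n) := by
          have := geom_aux n
          linarith
      _ ≤ 2 := by
          have : (0:ℝ) ≤ (1/2)^n := by positivity
          linarith
  -- conclude
  have hpos : (0:ℝ) < |Polynomial.eval t (cyclotomic n ℝ)| := by
    have := one_le_eval_abs ht' hn
    linarith
  have hFe : |Polynomial.eval t (cyclotomic n ℝ)| = Real.exp (F n) := by
    rw [hF, Real.exp_log hpos]
  rw [hFe]
  have h1 : (n.totient : ℝ) * Real.log 2 - 2 ≤ F n := by
    rw [abs_le] at hdiff
    linarith [hdiff.1]
  calc Real.exp (-2) * 2 ^ n.totient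
      = Real.exp ((n.totient : ℝ) * Real.log 2 - 2) := by
        rw [Real.exp_sub, Real.exp_nat_mul, Real.exp_log (by norm_num : (0:ℝ) < 2),
          Real.exp_neg]
        ring
    _ ≤ Real.exp (F n) := Real.exp_le_exp.mpr h1

lemma P_two {n : ℕ} (hn : 0 < n) {s : ℤ} (hs : s = 1 ∨ s = -1) :
    P n 2 s = |Polynomial.eval (((2*s : ℤ) : ℝ)) (cyclotomic n ℝ)| := by
  have hζ₀ : IsPrimitiveRoot (Complex.exp (2 * Real.pi * Complex.I / n)) n :=
    Complex.isPrimitiveRoot_exp n hn.ne'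
  have hcyc : cyclotomic n ℂ = ∏ μ ∈ primitiveRoots n ℂ, (X - C μ) :=
    cyclotomic_eq_prod_X_sub_primitiveRoots hζ₀
  have h1 : |Polynomial.eval (((2*s : ℤ) : ℝ)) (cyclotomic n ℝ)|
      = ‖Polynomial.eval ((((2*s : ℤ) : ℝ)) : ℂ) (cyclotomic n ℂ)‖ := by
    rw [← eval_complex_eq, Complex.norm_real, Real.norm_eq_abs]
  rw [h1, hcyc, eval_prod, norm_prod]
  refine Finset.prod_congr rfl fun ζ _ => ?_
  simp only [eval_sub, eval_X, eval_C]
  rcases hs with rfl | rfl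
  · push_cast
    rw [show (2:ℂ) - ζ * 1 = 2 * 1 - ζ by ring]
    norm_num
  · push_cast
    rw [show (2:ℂ) - ζ * (-1) = -(2 * (-1) - ζ) by ring, norm_neg]
    norm_num

lemma P_two_one {n : ℕ} (hn : 0 < n) {s : ℤ} (hs : s = 1 ∨ s = -1) :
    Real.exp (-2) * 2 ^ n.totient ≤ P n 2 s := by
  rw [P_two hn hs]
  apply eval_lower _ hn
  rcases hs with rfl | rfl <;> norm_num

lemma le_two_mul_totient_sq : ∀ n : ℕ, n ≤ 2 * n.totient ^ 2 := by
  have key : ∀ n : ℕ, n ≤ 2 * n.totient ^ 2 ∧ (¬ 2 ∣ n → n ≤ n.totient ^ 2) := by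
    intro n
    induction n using Nat.recOnPosPrimePosCoprime with
    | prime_pow p k hp hk =>
      have hp' : p.Prime := hp
      rw [Nat.totient_prime_pow hp' hk]
      by_cases h2 : p = 2
      · subst h2
        constructor
        · have h1 : k ≤ (k-1)*2 + 1 := by omega
          calc (2:ℕ)^k ≤ 2^((k-1)*2+1) := Nat.pow_le_pow_right (by norm_num) h1
            _ = 2 * (2^(k-1))^2 := by rw [pow_succ, pow_mul]; ring
            _ = 2 * (2^(k-1) * (2-1))^2 := by norm_num
        · intro h
          exact absurd (dvd_pow_self 2 hk.ne') h
      · have hp3 : 3 ≤ p := by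
          have := hp'.two_le
          omega
        have hodd : p^k ≤ (p^(k-1) * (p-1))^2 := by
          rcases Nat.lt_or_ge k 2 with h1 | h1
          · have hk1 : k = 1 := by omega
            subst hk1
            simp only [pow_one, Nat.sub_self, pow_zero, one_mul]
            obtain ⟨q, rfl⟩ := Nat.exists_eq_add_of_le hp3
            have e : 3 + q - 1 = q + 2 := by omega
            rw [e]
            nlinarith
          · have h2k : k ≤ (k-1)*2 := by omega
            calc p^k ≤ p^((k-1)*2) := Nat.pow_le_pow_right (by omega) h2k
              _ = (p^(k-1))^2 := by rw [pow_mul]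
              _ ≤ (p^(k-1))^2 * (p-1)^2 := Nat.le_mul_of_pos_right _ (by
                    have : 2 ≤ p - 1 := by omega
                    positivity)
              _ = (p^(k-1) * (p-1))^2 := by ring
        exact ⟨le_trans hodd (by omega), fun _ => hodd⟩
    | zero => simp
    | one => simp
    | coprime a b ha hb hab iha ihb =>
      have htm : (a*b).totient = a.totient * b.totient := Nat.totient_mul hab
      have hboth : ¬ (2 ∣ a ∧ 2 ∣ b) := by
        rintro ⟨h2a, h2b⟩
        have hg : (2:ℕ) ∣ Nat.gcd a b := Nat.dvd_gcd h2a h2b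
        rw [Nat.Coprime] at hab
        rw [hab] at hg
        norm_num at hg
      constructor
      · rw [htm]
        by_cases h2a : 2 ∣ a
        · have h2b : ¬ 2 ∣ b := fun h => hboth ⟨h2a, h⟩
          calc a * b ≤ (2 * a.totient^2) * (b.totient^2) :=
                Nat.mul_le_mul iha.1 (ihb.2 h2b)
            _ = 2 * (a.totient * b.totient)^2 := by ring
        · calc a * b ≤ (a.totient^2) * (2 * b.totient^2) :=
                Nat.mul_le_mul (iha.2 h2a) ihb.1
            _ = 2 * (a.totient * b.totient)^2 := by ring
      · intro h2
        rw [htm]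
        have h2a : ¬ 2 ∣ a := fun h => h2 (h.mul_right b)
        have h2b : ¬ 2 ∣ b := fun h => h2 (h.mul_left a)
        calc a * b ≤ (a.totient^2) * (b.totient^2) :=
              Nat.mul_le_mul (iha.2 h2a) (ihb.2 h2b)
          _ = (a.totient * b.totient)^2 := by ring
  exact fun n => (key n).1

end CBF

namespace CBF

lemma bound_ge {n : ℕ} (hn : 2 < n) {x y : ℤ} (h3 : 3 ≤ max |x| |y|) :
    (2:ℝ) ^ n.totient ≤ P n x y := by
  have hn0 : 0 < n := by omega
  by_cases hy : y = 0
  · subst hy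
    rw [P_y_zero hn0]
    have hx3 : 3 ≤ |x| := by
      rw [abs_zero, max_eq_left (abs_nonneg x)] at h3
      exact h3
    apply pow_le_pow_left₀ (by norm_num)
    exact_mod_cast by linarith
  · by_cases hx : x = 0
    · subst hx
      rw [P_x_zero hn0]
      have hy3 : 3 ≤ |y| := by
        rw [abs_zero, max_eq_right (abs_nonneg y)] at h3
        exact h3
      apply pow_le_pow_left₀ (by norm_num)
      exact_mod_cast by linarith
    · have hx1 : 1 ≤ |x| := Int.one_le_abs hx
      have hy1 : 1 ≤ |y| := Int.one_le_abs hy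
      have h4 : 4 ≤ |x| + |y| := by
        rcases le_max_iff.mp h3 with h | h <;> omega
      exact P_ge_two_pow hn hx hy h4

lemma bound_e2 {n : ℕ} (hn : 2 < n) {x y : ℤ} (hmax : max |x| |y| = 2) :
    Real.exp (-2) * 2 ^ n.totient ≤ P n x y := by
  have hn0 : 0 < n := by omega
  have hexp1 : Real.exp (-2) ≤ 1 := by
    rw [Real.exp_le_one_iff]
    norm_num
  have h2pow : (0:ℝ) ≤ 2 ^ n.totient := by positivity
  have hx2 : |x| ≤ 2 := by
    have := le_max_left |x| |y|
    omega
  have hy2 : |y| ≤ 2 := by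
    have := le_max_right |x| |y|
    omega
  by_cases hy : y = 0
  · subst hy
    rw [P_y_zero hn0]
    have hxv : |x| = 2 := by
      rw [abs_zero, max_eq_left (abs_nonneg x)] at hmax
      exact hmax
    have hcast : |(x:ℝ)| = 2 := by
      rw [← Int.cast_abs, hxv]
      norm_num
    rw [hcast]
    nlinarith
  · by_cases hx : x = 0
    · subst hx
      rw [P_x_zero hn0]
      have hyv : |y| = 2 := by
        rw [abs_zero, max_eq_right (abs_nonneg y)] at hmax
        exact hmax
      have hcast : |(y:ℝ)| = 2 := by
        rw [← Int.cast_abs, hyv]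
        norm_num
      rw [hcast]
      nlinarith
    · by_cases h4 : 4 ≤ |x| + |y|
      · calc Real.exp (-2) * 2 ^ n.totient ≤ 1 * 2 ^ n.totient := by nlinarith
          _ = 2 ^ n.totient := one_mul _
          _ ≤ P n x y := P_ge_two_pow hn hx hy h4
      · have hx1 : 1 ≤ |x| := Int.one_le_abs hx
        have hy1 : 1 ≤ |y| := Int.one_le_abs hy
        have hm : |x| = 2 ∨ |y| = 2 := by
          rcases max_cases |x| |y| with ⟨h1, _⟩ | ⟨h1, _⟩
          · left; rw [← h1, hmax]
          · right; rw [← h1, hmax]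
        have hcases : (|x| = 2 ∧ |y| = 1) ∨ (|x| = 1 ∧ |y| = 2) := by omega
        have e21 : P n (-2) 1 = P n 2 (-1) := by
          have := P_neg n 2 (-1)
          simpa using this
        have e22 : P n (-2) (-1) = P n 2 1 := by
          have := P_neg n 2 1
          simpa using this
        rcases hcases with ⟨hxe, hye⟩ | ⟨hxe, hye⟩
        · rcases (abs_eq (by norm_num : (0:ℤ) ≤ 2)).mp hxe with rfl | rfl <;>
            rcases (abs_eq (by norm_num : (0:ℤ) ≤ 1)).mp hye with rfl | rfl
          · exact P_two_one hn0 (Or.inl rfl)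
          · exact P_two_one hn0 (Or.inr rfl)
          · rw [e21]; exact P_two_one hn0 (Or.inr rfl)
          · rw [e22]; exact P_two_one hn0 (Or.inl rfl)
        · rcases (abs_eq (by norm_num : (0:ℤ) ≤ 1)).mp hxe with rfl | rfl <;>
            rcases (abs_eq (by norm_num : (0:ℤ) ≤ 2)).mp hye with rfl | rfl
          · rw [P_swap hn0]; exact P_two_one hn0 (Or.inl rfl)
          · rw [P_swap hn0, e21]; exact P_two_one hn0 (Or.inr rfl)
          · rw [P_swap hn0]; exact P_two_one hn0 (Or.inr rfl)
          · rw [P_swap hn0, e22]; exact P_two_one hn0 (Or.inl rfl)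

end CBF

theorem stmt4 (θ : ℝ) (hθ0 : 0 < θ) (hθ1 : θ < 1) :
    {T : ℕ × ℤ × ℤ | 3 ≤ T.1 ∧ 2 ≤ max |T.2.1| |T.2.2| ∧
      (cycBinaryForm T.1 T.2.1 T.2.2 : ℝ) ≤ 2 ^ (θ * T.1.totient)}.Finite ∧
    ∀ T : ℕ × ℤ × ℤ, 3 ≤ T.1 → 2 ≤ max |T.2.1| |T.2.2| →
      (cycBinaryForm T.1 T.2.1 T.2.2 : ℝ) ≤ 2 ^ (θ * T.1.totient) →
      max |T.2.1| |T.2.2| = 2 := by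
  classical
  set K : ℕ := ⌈2 / ((1 - θ) * Real.log 2)⌉₊ with hK
  have main : ∀ n : ℕ, ∀ x y : ℤ, 3 ≤ n → 2 ≤ max |x| |y| →
      (cycBinaryForm n x y : ℝ) ≤ 2 ^ (θ * n.totient) →
      max |x| |y| = 2 ∧ n.totient ≤ K ∧ |x| ≤ 2 ∧ |y| ≤ 2 := by
    intro n x y hn3 hmax hle
    have hn2 : 2 < n := hn3
    have hd1 : 1 ≤ n.totient := Nat.totient_pos.mpr (by omega)
    have hnz : ¬(x = 0 ∧ y = 0) := by
      rintro ⟨rfl, rfl⟩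
      simp at hmax
    have hVP : ((cycBinaryForm n x y : ℤ) : ℝ) = CBF.P n x y := CBF.cbf_eq_P hn2 hnz
    rw [hVP] at hle
    have hM2 : max |x| |y| = 2 := by
      by_contra hne
      have h3 : 3 ≤ max |x| |y| := by omega
      have h1 := CBF.bound_ge hn2 h3
      have hdlt : θ * (n.totient : ℝ) < (n.totient : ℝ) := by
        have hc : (1:ℝ) ≤ (n.totient : ℝ) := by exact_mod_cast hd1
        nlinarith
      have h2 : (2:ℝ) ^ (θ * (n.totient:ℝ)) < 2 ^ ((n.totient : ℕ):ℝ) :=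
        (Real.rpow_lt_rpow_left_iff (by norm_num)).mpr hdlt
      rw [Real.rpow_natCast] at h2
      linarith
    refine ⟨hM2, ?_, ?_, ?_⟩
    · have hb := CBF.bound_e2 hn2 hM2
      have hle2 : Real.exp (-2) * 2 ^ n.totient ≤ (2:ℝ) ^ (θ * (n.totient:ℝ)) :=
        le_trans hb hle
      have hlog2 : (0:ℝ) < Real.log 2 := Real.log_pos (by norm_num)
      have hposL : (0:ℝ) < Real.exp (-2) * 2 ^ n.totient := by positivity
      have h3 : Real.log (Real.exp (-2) * 2 ^ n.totient)
          ≤ Real.log ((2:ℝ) ^ (θ * (n.totient:ℝ))) := Real.log_le_log hposL hle2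
      rw [Real.log_mul (Real.exp_ne_zero _) (by positivity), Real.log_exp, Real.log_pow,
        Real.log_rpow (by norm_num)] at h3
      have h4 : (n.totient : ℝ) ≤ 2 / ((1-θ) * Real.log 2) := by
        rw [le_div_iff₀ (by nlinarith)]
        nlinarith
      have h5 : (n.totient : ℝ) ≤ (K:ℝ) := le_trans h4 (Nat.le_ceil _)
      exact_mod_cast h5
    · have := le_max_left |x| |y|
      omega
    · have := le_max_right |x| |y|
      omega
  constructor
  · apply Set.Finite.subset
      (((Set.finite_Iic (2*K^2)).prod
        ((Set.finite_Icc (-2:ℤ) 2).prod (Set.finite_Icc (-2:ℤ) 2))))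
    rintro ⟨n, x, y⟩ ⟨hn3, hmax, hle⟩
    obtain ⟨hM2, hdK, hx2, hy2⟩ := main n x y hn3 hmax hle
    have hxa := abs_le.mp hx2
    have hya := abs_le.mp hy2
    refine ⟨?_, ⟨?_, ?_⟩⟩
    · simp only [Set.mem_Iic]
      calc n ≤ 2 * n.totient^2 := CBF.le_two_mul_totient_sq n
        _ ≤ 2 * K^2 := Nat.mul_le_mul_left 2 (Nat.pow_le_pow_left hdK 2)
    · simp only [Set.mem_Icc]
      exact hxa
    · simp only [Set.mem_Icc]
      exact hya
  · intro T hn3 hmax hle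
    exact (main T.1 T.2.1 T.2.2 hn3 hmax hle).1
end

section
/- Let f(X) ∈ ℤ[X] be a nonzero polynomial of degree d with positive leading coefficient and with no real root, let g(X) = X^d·f(1/X), and let F(X,Y) = Y^d·f(X/Y). Define γ_1 = inf_{t∈ℝ} f(t), γ_2 = inf_{t∈ℝ} g(t) and γ' = min{inf_{−1≤t≤1} f(t), inf_{−1≤t≤1} g(t)}. Then: (i) for every real c_1 > γ_1 there are infinitely many pairs (x,y) ∈ ℤ² with y > 0 and F(x,y) < c_1·y^d; (ii) for every real c_2 > γ_2 there are infinitely many pairs (x,y) ∈ ℤ² with x > 0 and F(x,y) < c_2·x^d; (iii) for every real c > γ' there are infinitely many pairs (x,y) ∈ ℤ² with F(x,y) < c·max{|x|^d, |y|^d}. -/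
/-- The binary form `F(X,Y) = Y^d f(X/Y)` associated with an integer polynomial `f`
of degree `d`, evaluated at real numbers. -/
noncomputable def binForm (f : Polynomial ℤ) (d : ℕ) (x y : ℝ) : ℝ :=
  ∑ i ∈ Finset.range (d + 1), (f.coeff i : ℝ) * x ^ i * y ^ (d - i)

lemma binForm_smul (f : Polynomial ℤ) (d : ℕ) (m x y : ℝ) :
    binForm f d (m * x) (m * y) = m ^ d * binForm f d x y := by
  unfold binForm
  rw [Finset.mul_sum]
  refine Finset.sum_congr rfl fun i hi => ?_
  rw [Finset.mem_range, Nat.lt_succ_iff] at hi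
  have h : m ^ i * m ^ (d - i) = m ^ d := by
    rw [← pow_add, Nat.add_sub_cancel' hi]
  calc (f.coeff i : ℝ) * (m * x) ^ i * (m * y) ^ (d - i)
      = (m ^ i * m ^ (d - i)) * ((f.coeff i : ℝ) * x ^ i * y ^ (d - i)) := by
        rw [mul_pow, mul_pow]; ring
    _ = m ^ d * ((f.coeff i : ℝ) * x ^ i * y ^ (d - i)) := by rw [h]

lemma binForm_cont1 (f : Polynomial ℤ) (d : ℕ) :
    Continuous fun t : ℝ => binForm f d t 1 := by
  unfold binForm
  exact continuous_finset_sum _ fun i _ => by fun_prop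

lemma binForm_cont2 (f : Polynomial ℤ) (d : ℕ) :
    Continuous fun t : ℝ => binForm f d 1 t := by
  unfold binForm
  exact continuous_finset_sum _ fun i _ => by fun_prop

lemma cast_num_eq (q : ℚ) (k : ℕ) :
    (((k + 1 : ℤ) * q.num : ℤ) : ℝ) = (((k : ℝ) + 1) * (q.den : ℝ)) * (q : ℝ) := by
  have hden : (q.den : ℝ) ≠ 0 := Nat.cast_ne_zero.2 q.den_nz
  rw [Rat.cast_def]
  push_cast
  field_simp

lemma cast_den_eq (q : ℚ) (k : ℕ) :
    (((k + 1 : ℤ) * (q.den : ℤ) : ℤ) : ℝ) = (((k : ℝ) + 1) * (q.den : ℝ)) * 1 := by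
  push_cast; ring

lemma keyA (f : Polynomial ℤ) (d : ℕ) (q : ℚ) (k : ℕ) :
    binForm f d (((k + 1 : ℤ) * q.num : ℤ) : ℝ) (((k + 1 : ℤ) * (q.den : ℤ) : ℤ) : ℝ)
      = (((k : ℝ) + 1) * (q.den : ℝ)) ^ d * binForm f d (q : ℝ) 1 := by
  rw [cast_num_eq, cast_den_eq, binForm_smul]

lemma keyB (f : Polynomial ℤ) (d : ℕ) (q : ℚ) (k : ℕ) :
    binForm f d (((k + 1 : ℤ) * (q.den : ℤ) : ℤ) : ℝ) (((k + 1 : ℤ) * q.num : ℤ) : ℝ)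
      = (((k : ℝ) + 1) * (q.den : ℝ)) ^ d * binForm f d 1 (q : ℝ) := by
  rw [cast_num_eq, cast_den_eq, binForm_smul]

lemma Kpos (q : ℚ) (k : ℕ) : (0 : ℝ) < ((k : ℝ) + 1) * (q.den : ℝ) := by
  have : (0 : ℝ) < (q.den : ℝ) := by exact_mod_cast q.pos
  positivity

/-- From continuity and an open condition at `t₀`, get a rational close by,
staying inside `[-1,1]` when `t₀` does. -/
lemma exists_rat_near1 {F : ℝ → ℝ} (hF : Continuous F) {c t₀ : ℝ}
    (ht : F t₀ < c) (h1 : t₀ ∈ Set.Icc (-1 : ℝ) 1) :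
    ∃ q : ℚ, F q < c ∧ |(q : ℝ)| ≤ 1 := by
  have hopen : IsOpen {t : ℝ | F t < c} := isOpen_lt hF continuous_const
  obtain ⟨ε, hε, hball⟩ := Metric.isOpen_iff.1 hopen t₀ ht
  set a := max (-1 : ℝ) (t₀ - ε) with ha
  set b := min (1 : ℝ) (t₀ + ε) with hb
  have hab : a < b := by
    rcases h1 with ⟨h1l, h1r⟩
    rw [ha, hb]
    rcases lt_or_ge t₀ 1 with h | h
    · rcases lt_or_ge (-1 : ℝ) t₀ with h' | h'
      · exact max_lt (lt_min (by linarith) (by linarith))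
          (lt_min (by linarith) (by linarith))
      · have : t₀ = -1 := le_antisymm (le_of_not_gt (fun hc => h'.not_gt hc)) h1l
        subst this
        exact max_lt (lt_min (by linarith) (by linarith))
          (lt_min (by linarith) (by linarith))
    · have : t₀ = 1 := le_antisymm h1r h
      subst this
      exact max_lt (lt_min (by linarith) (by linarith))
        (lt_min (by linarith) (by linarith))
  obtain ⟨q, hq1, hq2⟩ := exists_rat_btwn hab
  refine ⟨q, ?_, ?_⟩
  · have : (q : ℝ) ∈ Metric.ball t₀ ε := by
      rw [Metric.mem_ball, Real.dist_eq, abs_lt]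
      constructor
      · have := le_max_right (-1 : ℝ) (t₀ - ε); linarith [lt_of_le_of_lt this hq1]
      · have := min_le_right (1 : ℝ) (t₀ + ε); linarith [lt_of_lt_of_le hq2 this]
    exact hball this
  · rw [abs_le]
    constructor
    · have := le_max_left (-1 : ℝ) (t₀ - ε); linarith [lt_of_le_of_lt this hq1]
    · have := min_le_left (1 : ℝ) (t₀ + ε); linarith [lt_of_lt_of_le hq2 this]

lemma exists_rat_lt' {F : ℝ → ℝ} (hF : Continuous F) {c t₀ : ℝ}
    (ht : F t₀ < c) : ∃ q : ℚ, F q < c := by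
  have hopen : IsOpen {t : ℝ | F t < c} := isOpen_lt hF continuous_const
  obtain ⟨ε, hε, hball⟩ := Metric.isOpen_iff.1 hopen t₀ ht
  obtain ⟨q, hq1, hq2⟩ := exists_rat_btwn (sub_lt_self t₀ hε)
  refine ⟨q, hball ?_⟩
  rw [Metric.mem_ball, Real.dist_eq, abs_lt]
  constructor <;> linarith

lemma fam_inj (q : ℚ) :
    Function.Injective (fun k : ℕ => (((k + 1 : ℤ) * q.num, (k + 1 : ℤ) * (q.den : ℤ)) : ℤ × ℤ)) := by
  intro a b h
  have hden : (0 : ℤ) < (q.den : ℤ) := by exact_mod_cast q.pos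
  have h2 : ((a : ℤ) + 1) * (q.den : ℤ) = ((b : ℤ) + 1) * (q.den : ℤ) :=
    congrArg Prod.snd h
  have := mul_right_cancel₀ hden.ne' h2
  omega

theorem stmt11 (f : Polynomial ℤ) (d : ℕ) (hf0 : f ≠ 0) (hdeg : f.natDegree = d)
    (hlead : 0 < f.leadingCoeff)
    (hnoroot : ∀ t : ℝ, Polynomial.eval t (f.map (Int.castRingHom ℝ)) ≠ 0)
    (γ₁ γ₂ γ' : ℝ)
    (hγ₁ : γ₁ = sInf (Set.range fun t : ℝ => binForm f d t 1))
    (hγ₂ : γ₂ = sInf (Set.range fun t : ℝ => binForm f d 1 t))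
    (hγ' : γ' = min (sInf ((fun t : ℝ => binForm f d t 1) '' Set.Icc (-1) 1))
                    (sInf ((fun t : ℝ => binForm f d 1 t) '' Set.Icc (-1) 1))) :
    (∀ c₁ : ℝ, γ₁ < c₁ →
      {p : ℤ × ℤ | 0 < p.2 ∧ binForm f d (p.1 : ℝ) (p.2 : ℝ) < c₁ * (p.2 : ℝ) ^ d}.Infinite) ∧
    (∀ c₂ : ℝ, γ₂ < c₂ →
      {p : ℤ × ℤ | 0 < p.1 ∧ binForm f d (p.1 : ℝ) (p.2 : ℝ) < c₂ * (p.1 : ℝ) ^ d}.Infinite) ∧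
    (∀ c : ℝ, γ' < c →
      {p : ℤ × ℤ |
        binForm f d (p.1 : ℝ) (p.2 : ℝ) <
          c * max (|(p.1 : ℝ)| ^ d) (|(p.2 : ℝ)| ^ d)}.Infinite) := by
  refine ⟨?_, ?_, ?_⟩
  · -- part (i)
    intro c₁ hc₁
    rw [hγ₁] at hc₁
    have ht : ∃ t₀ : ℝ, binForm f d t₀ 1 < c₁ := by
      by_contra h
      push_neg at h
      exact absurd (le_csInf (Set.range_nonempty _) (by rintro x ⟨t, rfl⟩; exact h t)) hc₁.not_ge
    obtain ⟨t₀, ht₀⟩ := ht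
    obtain ⟨q, hq⟩ := exists_rat_lt' (binForm_cont1 f d) ht₀
    apply Set.infinite_of_injective_forall_mem (fam_inj q)
    intro k
    refine ⟨by positivity, ?_⟩
    have hK := Kpos q k
    have := keyA f d q k
    simp only [Set.mem_setOf_eq]
    rw [this]
    have h2 : (((k + 1 : ℤ) * (q.den : ℤ) : ℤ) : ℝ) = ((k : ℝ) + 1) * (q.den : ℝ) := by
      push_cast; ring
    rw [h2]
    exact (mul_lt_mul_iff_right₀ (pow_pos hK d)).2 hq |>.trans_eq (mul_comm _ _)
  · -- part (ii)
    intro c₂ hc₂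
    rw [hγ₂] at hc₂
    have ht : ∃ t₀ : ℝ, binForm f d 1 t₀ < c₂ := by
      by_contra h
      push_neg at h
      exact absurd (le_csInf (Set.range_nonempty _) (by rintro x ⟨t, rfl⟩; exact h t)) hc₂.not_ge
    obtain ⟨t₀, ht₀⟩ := ht
    obtain ⟨q, hq⟩ := exists_rat_lt' (binForm_cont2 f d) ht₀
    have hinj : Function.Injective
        (fun k : ℕ => (((k + 1 : ℤ) * (q.den : ℤ), (k + 1 : ℤ) * q.num) : ℤ × ℤ)) := by
      intro a b h
      have hden : (0 : ℤ) < (q.den : ℤ) := by exact_mod_cast q.pos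
      have h2 : ((a : ℤ) + 1) * (q.den : ℤ) = ((b : ℤ) + 1) * (q.den : ℤ) :=
        congrArg Prod.fst h
      have := mul_right_cancel₀ hden.ne' h2
      omega
    apply Set.infinite_of_injective_forall_mem hinj
    intro k
    refine ⟨by positivity, ?_⟩
    have hK := Kpos q k
    have := keyB f d q k
    simp only [Set.mem_setOf_eq]
    rw [this]
    have h2 : (((k + 1 : ℤ) * (q.den : ℤ) : ℤ) : ℝ) = ((k : ℝ) + 1) * (q.den : ℝ) := by
      push_cast; ring
    rw [h2]
    exact (mul_lt_mul_iff_right₀ (pow_pos hK d)).2 hq |>.trans_eq (mul_comm _ _)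
  · -- part (iii)
    intro c hc
    rw [hγ'] at hc
    rcases min_lt_iff.1 hc with h | h
    · -- case via f
      have ht : ∃ t₀ ∈ Set.Icc (-1 : ℝ) 1, binForm f d t₀ 1 < c := by
        by_contra hcon
        push_neg at hcon
        refine absurd (le_csInf (((Set.nonempty_Icc (a := (-1:ℝ)) (b := 1)).2 (by norm_num)).image _) ?_) h.not_ge
        rintro x ⟨t, ht, rfl⟩
        exact hcon t ht
      obtain ⟨t₀, ht₀m, ht₀⟩ := ht
      obtain ⟨q, hq, hq1⟩ := exists_rat_near1 (binForm_cont1 f d) ht₀ ht₀m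
      apply Set.infinite_of_injective_forall_mem (fam_inj q)
      intro k
      have hK := Kpos q k
      simp only [Set.mem_setOf_eq]
      rw [keyA f d q k]
      have hnumden : |(q.num : ℝ)| ≤ (q.den : ℝ) := by
        have hden : (0 : ℝ) < (q.den : ℝ) := by exact_mod_cast q.pos
        have : |(q : ℝ)| * (q.den : ℝ) ≤ 1 * (q.den : ℝ) :=
          mul_le_mul_of_nonneg_right hq1 hden.le
        rw [one_mul] at this
        calc |(q.num : ℝ)| = |(q : ℝ) * (q.den : ℝ)| := by
              rw [Rat.cast_def]; field_simp
          _ = |(q : ℝ)| * (q.den : ℝ) := by rw [abs_mul, abs_of_pos hden]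
          _ ≤ (q.den : ℝ) := this
      have habs : |(((k + 1 : ℤ) * q.num : ℤ) : ℝ)| ≤ |(((k + 1 : ℤ) * (q.den : ℤ) : ℤ) : ℝ)| := by
        push_cast
        rw [abs_mul, abs_mul]
        apply mul_le_mul_of_nonneg_left _ (abs_nonneg _)
        rwa [abs_of_nonneg (by positivity : (0:ℝ) ≤ (q.den : ℝ))]
      have hmax : max (|(((k + 1 : ℤ) * q.num : ℤ) : ℝ)| ^ d)
          (|(((k + 1 : ℤ) * (q.den : ℤ) : ℤ) : ℝ)| ^ d)
          = (((k : ℝ) + 1) * (q.den : ℝ)) ^ d := by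
        rw [max_eq_right (pow_le_pow_left₀ (abs_nonneg _) habs d)]
        congr 1
        rw [abs_of_pos]
        · push_cast; ring
        · have : (0:ℝ) < ((k : ℝ) + 1) * (q.den : ℝ) := hK
          calc (0:ℝ) < ((k : ℝ) + 1) * (q.den : ℝ) := hK
            _ = (((k + 1 : ℤ) * (q.den : ℤ) : ℤ) : ℝ) := by push_cast; ring
      rw [hmax]
      exact (mul_lt_mul_iff_right₀ (pow_pos hK d)).2 hq |>.trans_eq (mul_comm _ _)
    · -- case via g
      have ht : ∃ t₀ ∈ Set.Icc (-1 : ℝ) 1, binForm f d 1 t₀ < c := by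
        by_contra hcon
        push_neg at hcon
        refine absurd (le_csInf (((Set.nonempty_Icc (a := (-1:ℝ)) (b := 1)).2 (by norm_num)).image _) ?_) h.not_ge
        rintro x ⟨t, ht, rfl⟩
        exact hcon t ht
      obtain ⟨t₀, ht₀m, ht₀⟩ := ht
      obtain ⟨q, hq, hq1⟩ := exists_rat_near1 (binForm_cont2 f d) ht₀ ht₀m
      have hinj : Function.Injective
          (fun k : ℕ => (((k + 1 : ℤ) * (q.den : ℤ), (k + 1 : ℤ) * q.num) : ℤ × ℤ)) := by
        intro a b h'
        have hden : (0 : ℤ) < (q.den : ℤ) := by exact_mod_cast q.pos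
        have h2 : ((a : ℤ) + 1) * (q.den : ℤ) = ((b : ℤ) + 1) * (q.den : ℤ) :=
          congrArg Prod.fst h'
        have := mul_right_cancel₀ hden.ne' h2
        omega
      apply Set.infinite_of_injective_forall_mem hinj
      intro k
      have hK := Kpos q k
      simp only [Set.mem_setOf_eq]
      rw [keyB f d q k]
      have hnumden : |(q.num : ℝ)| ≤ (q.den : ℝ) := by
        have hden : (0 : ℝ) < (q.den : ℝ) := by exact_mod_cast q.pos
        have : |(q : ℝ)| * (q.den : ℝ) ≤ 1 * (q.den : ℝ) :=
          mul_le_mul_of_nonneg_right hq1 hden.le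
        rw [one_mul] at this
        calc |(q.num : ℝ)| = |(q : ℝ) * (q.den : ℝ)| := by
              rw [Rat.cast_def]; field_simp
          _ = |(q : ℝ)| * (q.den : ℝ) := by rw [abs_mul, abs_of_pos hden]
          _ ≤ (q.den : ℝ) := this
      have habs : |(((k + 1 : ℤ) * q.num : ℤ) : ℝ)| ≤ |(((k + 1 : ℤ) * (q.den : ℤ) : ℤ) : ℝ)| := by
        push_cast
        rw [abs_mul, abs_mul]
        apply mul_le_mul_of_nonneg_left _ (abs_nonneg _)
        rwa [abs_of_nonneg (by positivity : (0:ℝ) ≤ (q.den : ℝ))]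
      have hmax : max (|(((k + 1 : ℤ) * (q.den : ℤ) : ℤ) : ℝ)| ^ d)
          (|(((k + 1 : ℤ) * q.num : ℤ) : ℝ)| ^ d)
          = (((k : ℝ) + 1) * (q.den : ℝ)) ^ d := by
        rw [max_eq_left (pow_le_pow_left₀ (abs_nonneg _) habs d)]
        congr 1
        rw [abs_of_pos]
        · push_cast; ring
        · calc (0:ℝ) < ((k : ℝ) + 1) * (q.den : ℝ) := hK
            _ = (((k + 1 : ℤ) * (q.den : ℤ) : ℤ) : ℝ) := by push_cast; ring
      rw [hmax]
      exact (mul_lt_mul_iff_right₀ (pow_pos hK d)).2 hq |>.trans_eq (mul_comm _ _)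
end

section
/- For any odd squarefree integer n = p_1⋯p_r with p_1 < p_2 < ⋯ < p_r odd primes, satisfying n ≥ 11 and n ≠ 15, one has φ(n) > 2^{r+1}·log p_1. -/
private lemma totient_sf (n : ℕ) (hsf : Squarefree n) (hn : n ≠ 0) :
    n.totient = ∏ p ∈ n.primeFactors, (p - 1) := by
  rw [Nat.totient_eq_prod_factorization hn, Nat.prod_factorization_eq_prod_primeFactors]
  refine Finset.prod_congr rfl fun p hp => ?_
  have h1 : n.factorization p = 1 := by
    have := hsf.natFactorization_le_one p
    have := ((Nat.support_factorization n) ▸ hp : p ∈ n.factorization.support)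
    have := Finsupp.mem_support_iff.mp this
    omega
  rw [h1]; simp

private lemma log_bound {x : ℝ} (hx : 11 ≤ x) : 4 * Real.log x < x - 1 := by
  have l2 : Real.log 2 < 0.6931471808 := Real.log_two_lt_d9
  have h121 : Real.log 121 < Real.log 128 := Real.log_lt_log (by norm_num) (by norm_num)
  have e121 : Real.log 121 = 2 * Real.log 11 := by
    rw [show (121 : ℝ) = 11 ^ 2 by norm_num, Real.log_pow]; push_cast; ring
  have e128 : Real.log 128 = 7 * Real.log 2 := by
    rw [show (128 : ℝ) = 2 ^ 7 by norm_num, Real.log_pow]; push_cast; ring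
  have hd : Real.log x - Real.log 11 = Real.log (x / 11) :=
    (Real.log_div (by linarith) (by norm_num)).symm
  have hs : Real.log (x / 11) ≤ x / 11 - 1 := Real.log_le_sub_one_of_pos (by linarith)
  nlinarith

theorem stmt14 (n : ℕ) (hodd : Odd n) (hsf : Squarefree n)
    (h11 : 11 ≤ n) (h15 : n ≠ 15) :
    (2 : ℝ) ^ (n.primeFactors.card + 1) * Real.log n.minFac < (n.totient : ℝ) := by
  have hn0 : n ≠ 0 := by omega
  have hn1 : 1 < n := by omega
  have hmem : ∀ p ∈ n.primeFactors, 3 ≤ p := by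
    intro p hp
    have hpp := Nat.prime_of_mem_primeFactors hp
    have hpd := Nat.dvd_of_mem_primeFactors hp
    have : p ≠ 2 := by
      rintro rfl
      exact (Nat.not_even_iff_odd.mpr hodd) ((even_iff_two_dvd).mpr hpd)
    have := hpp.two_le
    omega
  have hne : n.primeFactors.Nonempty := Nat.nonempty_primeFactors.mpr hn1
  have hr1 : 1 ≤ n.primeFactors.card := Finset.card_pos.mpr hne
  obtain ⟨q, hqmem, hqmax⟩ := n.primeFactors.exists_max_image id hne
  by_cases hq : 11 ≤ q
  · -- large prime factor case
    have hφ : n.totient = ∏ p ∈ n.primeFactors, (p - 1) := totient_sf n hsf hn0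
    have hq3 := hmem q hqmem
    have hprod : 2 ^ (n.primeFactors.card - 1) * (q - 1) ≤ ∏ p ∈ n.primeFactors, (p - 1) := by
      rw [← Finset.prod_erase_mul n.primeFactors _ hqmem]
      have hcard : (n.primeFactors.erase q).card = n.primeFactors.card - 1 :=
        Finset.card_erase_of_mem hqmem
      have h2 : 2 ^ (n.primeFactors.card - 1) ≤ ∏ p ∈ n.primeFactors.erase q, (p - 1) := by
        rw [← hcard]
        apply Finset.pow_card_le_prod
        intro x hx
        have := hmem x (Finset.mem_of_mem_erase hx)
        omega
      exact Nat.mul_le_mul_right _ h2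
    have hφR : (2 : ℝ) ^ (n.primeFactors.card - 1) * ((q : ℝ) - 1) ≤ (n.totient : ℝ) := by
      rw [hφ]
      have h1 : ((2 ^ (n.primeFactors.card - 1) * (q - 1) : ℕ) : ℝ)
          ≤ ((∏ p ∈ n.primeFactors, (p - 1) : ℕ) : ℝ) := by exact_mod_cast hprod
      have : ((2 ^ (n.primeFactors.card - 1) * (q - 1) : ℕ) : ℝ)
          = (2 : ℝ) ^ (n.primeFactors.card - 1) * ((q : ℝ) - 1) := by
        push_cast [show 1 ≤ q by omega]; ring
      linarith
    have hlogle : Real.log n.minFac ≤ Real.log q := by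
      apply Real.log_le_log (by exact_mod_cast n.minFac_pos)
      have hmf : n.minFac ∈ n.primeFactors :=
        Nat.mem_primeFactors.mpr ⟨Nat.minFac_prime (by omega), n.minFac_dvd, hn0⟩
      exact_mod_cast hqmax _ hmf
    have hlb : 4 * Real.log q < (q : ℝ) - 1 := log_bound (by exact_mod_cast hq)
    have hpow : (2 : ℝ) ^ (n.primeFactors.card + 1) = 4 * 2 ^ (n.primeFactors.card - 1) := by
      rw [show n.primeFactors.card + 1 = (n.primeFactors.card - 1) + 2 by omega, pow_add]; ring
    have hpos : (0 : ℝ) < 2 ^ (n.primeFactors.card - 1) := by positivity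
    calc (2:ℝ) ^ (n.primeFactors.card + 1) * Real.log n.minFac
        ≤ 2 ^ (n.primeFactors.card + 1) * Real.log q :=
          mul_le_mul_of_nonneg_left hlogle (by positivity)
      _ = 2 ^ (n.primeFactors.card - 1) * (4 * Real.log q) := by rw [hpow]; ring
      _ < 2 ^ (n.primeFactors.card - 1) * ((q : ℝ) - 1) := mul_lt_mul_of_pos_left hlb hpos
      _ ≤ (n.totient : ℝ) := hφR
  · -- all prime factors ≤ 10, so n ∣ 105
    have hsub : n.primeFactors ⊆ ({3, 5, 7} : Finset ℕ) := by
      intro p hp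
      have h3 := hmem p hp
      have hle : p ≤ q := hqmax p hp
      have hpp := Nat.prime_of_mem_primeFactors hp
      have h10 : p ≤ 10 := by omega
      interval_cases p <;> revert hpp <;> decide
    have hdvd : n ∣ 105 := by
      have hprodn : ∏ p ∈ n.primeFactors, p = n := Nat.prod_primeFactors_of_squarefree hsf
      rw [← hprodn]
      calc ∏ p ∈ n.primeFactors, p ∣ ∏ p ∈ ({3,5,7} : Finset ℕ), p :=
            Finset.prod_dvd_prod_of_subset _ _ _ hsub
        _ = 105 := by decide
    have hcase : n = 21 ∨ n = 35 ∨ n = 105 := by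
      have : n ≤ 105 := Nat.le_of_dvd (by norm_num) hdvd
      interval_cases n <;> first | (exact absurd rfl h15) | (revert hdvd; decide)
    have l2 : Real.log 2 < 0.6931471808 := Real.log_two_lt_d9
    have h34 : Real.log 3 < 2 * Real.log 2 := by
      rw [show (2:ℝ) * Real.log 2 = Real.log (2^2) by rw [Real.log_pow]; push_cast; ring]
      exact Real.log_lt_log (by norm_num) (by norm_num)
    have h58 : Real.log 5 < 3 * Real.log 2 := by
      rw [show (3:ℝ) * Real.log 2 = Real.log (2^3) by rw [Real.log_pow]; push_cast; ring]
      exact Real.log_lt_log (by norm_num) (by norm_num)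
    have hlog2pos : 0 < Real.log 2 := Real.log_pos (by norm_num)
    rcases hcase with rfl | rfl | rfl
    · have hc : (Nat.primeFactors 21).card = 2 := by
        rw [show (21:ℕ) = 3 * 7 by norm_num, Nat.primeFactors_mul (by norm_num) (by norm_num),
          Nat.Prime.primeFactors (by norm_num), Nat.Prime.primeFactors (by norm_num)]
        decide
      have hm : Nat.minFac 21 = 3 := by norm_num
      have ht : Nat.totient 21 = 12 := by decide
      rw [hc, hm, ht]
      push_cast
      nlinarith
    · have hc : (Nat.primeFactors 35).card = 2 := by
        rw [show (35:ℕ) = 5 * 7 by norm_num, Nat.primeFactors_mul (by norm_num) (by norm_num),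
          Nat.Prime.primeFactors (by norm_num), Nat.Prime.primeFactors (by norm_num)]
        decide
      have hm : Nat.minFac 35 = 5 := by norm_num
      have ht : Nat.totient 35 = 24 := by decide
      rw [hc, hm, ht]
      push_cast
      nlinarith
    · have hc : (Nat.primeFactors 105).card = 3 := by
        rw [show (105:ℕ) = 3 * (5 * 7) by norm_num,
          Nat.primeFactors_mul (by norm_num) (by norm_num),
          Nat.primeFactors_mul (by norm_num) (by norm_num),
          Nat.Prime.primeFactors (by norm_num), Nat.Prime.primeFactors (by norm_num),
          Nat.Prime.primeFactors (by norm_num)]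
        decide
      have hm : Nat.minFac 105 = 3 := by norm_num
      have ht : Nat.totient 105 = 48 := by decide
      rw [hc, hm, ht]
      push_cast
      nlinarith
end

section
/- For every n ≥ 3, one has c_n ≥ (√3/2)^{φ(n)}. This lower bound is best possible, with equality for n = 3 (where c_3 = 3/4). -/
open Polynomial Finset



section Aux

lemma evalC (n : ℕ) (t : ℝ) :
    (cyclotomic n ℂ).eval (t : ℂ) = (((cyclotomic n ℝ).eval t : ℝ) : ℂ) := by
  have := eval₂_at_apply (p := cyclotomic n ℝ) (algebraMap ℝ ℂ) t
  rw [← map_cyclotomic n (algebraMap ℝ ℂ), eval_map]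
  exact_mod_cast this

lemma evalProd {n : ℕ} (hn : n ≠ 0) (z : ℂ) :
    (cyclotomic n ℂ).eval z = ∏ μ ∈ primitiveRoots n ℂ, (z - μ) := by
  rw [cyclotomic_eq_prod_X_sub_primitiveRoots (Complex.isPrimitiveRoot_exp n hn)]
  simp [eval_prod]

lemma cyclo_le {n : ℕ} (hn : n ≠ 0) {t : ℝ} (ht : |t| ≤ 1) :
    (cyclotomic n ℝ).eval t ≤ 2 ^ n.totient := by
  have h1 : (((cyclotomic n ℝ).eval t : ℝ) : ℂ) = ∏ μ ∈ primitiveRoots n ℂ, ((t:ℂ) - μ) := by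
    rw [← evalC, evalProd hn]
  calc (cyclotomic n ℝ).eval t ≤ |(cyclotomic n ℝ).eval t| := le_abs_self _
    _ = ‖(((cyclotomic n ℝ).eval t : ℝ) : ℂ)‖ := by rw [Complex.norm_real]; rfl
    _ = ‖∏ μ ∈ primitiveRoots n ℂ, ((t:ℂ) - μ)‖ := by rw [h1]
    _ ≤ ∏ μ ∈ primitiveRoots n ℂ, ‖(t:ℂ) - μ‖ := norm_prod_le _ _
    _ ≤ ∏ _μ ∈ primitiveRoots n ℂ, (2:ℝ) := by
        apply Finset.prod_le_prod (fun _ _ => norm_nonneg _)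
        intro μ hμ
        calc ‖(t:ℂ) - μ‖ ≤ ‖(t:ℂ)‖ + ‖μ‖ := norm_sub_le _ _
          _ ≤ 1 + 1 := by
              rw [(isPrimitiveRoot_of_mem_primitiveRoots hμ).norm'_eq_one hn, Complex.norm_real]
              exact add_le_add ht le_rfl
          _ = 2 := by norm_num
    _ = 2 ^ n.totient := by rw [prod_const, Complex.card_primitiveRoots]

lemma prim_neg_of_prim {m : ℕ} (hm : Odd m) {η : ℂ}
    (h : IsPrimitiveRoot η m) : IsPrimitiveRoot (-η) (2 * m) := by
  have hco : Nat.Coprime 2 m := (Nat.coprime_two_left).mpr hm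
  constructor
  · rw [pow_mul, neg_sq, ← pow_mul, mul_comm 2 m, pow_mul, h.pow_eq_one, one_pow]
  · intro l hl
    have h2 : η ^ (2 * l) = 1 := by
      have : ((-η) ^ 2) ^ l = 1 := by rw [pow_right_comm, hl, one_pow]
      rwa [neg_sq, ← pow_mul] at this
    have hml : m ∣ l := hco.symm.dvd_of_dvd_mul_left (h.dvd_of_pow_eq_one _ h2)
    have hηl : η ^ l = 1 := (h.pow_eq_one_iff_dvd l).mpr hml
    have h2l : (2:ℕ) ∣ l := by
      have : ((-1:ℂ)) ^ l = 1 := by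
        have := hl
        rw [neg_pow, hηl, mul_one] at this
        exact this
      exact (Even.two_dvd ((neg_one_pow_eq_one_iff_even (by norm_num)).mp this))
    exact Nat.Coprime.mul_dvd_of_dvd_of_dvd hco h2l hml

lemma prim_neg_of_prim2 {m : ℕ} (hm : Odd m) (hm1 : 1 < m) {μ : ℂ}
    (h : IsPrimitiveRoot μ (2 * m)) : IsPrimitiveRoot (-μ) m := by
  have hm0 : 0 < m := by omega
  constructor
  · have hsq : (μ ^ m) * (μ ^ m) = 1 := by
      rw [← pow_add]
      have : m + m = 2 * m := by ring
      rw [this, h.pow_eq_one]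
    have : μ ^ m = 1 ∨ μ ^ m = -1 := mul_self_eq_one_iff.mp hsq
    have hne : μ ^ m ≠ 1 := h.pow_ne_one_of_pos_of_lt hm0.ne' (by omega)
    rw [neg_pow, Odd.neg_one_pow hm, this.resolve_left hne]
    ring
  · intro l hl
    have h2 : μ ^ (2 * l) = 1 := by
      have : ((-μ) ^ 2) ^ l = 1 := by rw [pow_right_comm, hl, one_pow]
      rwa [neg_sq, ← pow_mul] at this
    have := h.dvd_of_pow_eq_one _ h2
    exact (mul_dvd_mul_iff_left (two_ne_zero)).mp this

lemma primRoots_two_mul {m : ℕ} (hm : Odd m) (hm1 : 1 < m) :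
    primitiveRoots (2 * m) ℂ = (primitiveRoots m ℂ).image (fun x => -x) := by
  have hm0 : 0 < m := by omega
  have h2m0 : 0 < 2 * m := by omega
  apply Finset.Subset.antisymm
  · intro μ hμ
    have h := isPrimitiveRoot_of_mem_primitiveRoots hμ
    refine Finset.mem_image.mpr ⟨-μ, ?_, by ring⟩
    exact (mem_primitiveRoots hm0).mpr (prim_neg_of_prim2 hm hm1 h)
  · intro μ hμ
    obtain ⟨η, hη, rfl⟩ := Finset.mem_image.mp hμ
    exact (mem_primitiveRoots h2m0).mpr
      (prim_neg_of_prim hm (isPrimitiveRoot_of_mem_primitiveRoots hη))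

lemma cyclo_two_mul {m : ℕ} (hm : Odd m) (hm1 : 1 < m) (t : ℝ) :
    (cyclotomic (2 * m) ℝ).eval t = (cyclotomic m ℝ).eval (-t) := by
  have hm0 : m ≠ 0 := by omega
  have h2m0 : 2 * m ≠ 0 := by omega
  have hm2 : 2 < m := by
    rcases hm with ⟨k, rfl⟩; omega
  have heven : Even m.totient := Nat.totient_even hm2
  have key : (((cyclotomic (2*m) ℝ).eval t : ℝ) : ℂ) = (((cyclotomic m ℝ).eval (-t) : ℝ) : ℂ) := by
    rw [← evalC, ← evalC, evalProd h2m0, evalProd hm0, primRoots_two_mul hm hm1,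
      Finset.prod_image (fun x _ y _ h => neg_injective h)]
    push_cast
    have : ∀ x ∈ primitiveRoots m ℂ, (-(t:ℂ) - x) = (-1) * ((t:ℂ) - -x) := fun x _ => by ring
    rw [Finset.prod_congr rfl this, Finset.prod_mul_distrib, Finset.prod_const,
      Complex.card_primitiveRoots, heven.neg_one_pow, one_mul]
  exact_mod_cast key

lemma primRoots_inv {n : ℕ} (hn : n ≠ 0) :
    (primitiveRoots n ℂ).image (fun x => x⁻¹) = primitiveRoots n ℂ := by
  apply Finset.eq_of_subset_of_card_le
  · intro μ hμ
    obtain ⟨η, hη, rfl⟩ := Finset.mem_image.mp hμ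
    exact (mem_primitiveRoots (Nat.pos_of_ne_zero hn)).mpr
      (isPrimitiveRoot_of_mem_primitiveRoots hη).inv
  · rw [Finset.card_image_of_injective _ inv_injective]

lemma prod_primRoots {n : ℕ} (hn : 3 ≤ n) : ∏ μ ∈ primitiveRoots n ℂ, μ = 1 := by
  have hn0 : n ≠ 0 := by omega
  have heven : Even n.totient := Nat.totient_even (by omega)
  have h0 : (cyclotomic n ℂ).eval 0 = 1 := by
    rw [← coeff_zero_eq_eval_zero, cyclotomic_coeff_zero ℂ (by omega : 1 < n)]
  rw [evalProd hn0 0] at h0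
  have : ∀ x ∈ primitiveRoots n ℂ, ((0:ℂ) - x) = (-1) * x := fun x _ => by ring
  rwa [Finset.prod_congr rfl this, Finset.prod_mul_distrib, Finset.prod_const,
    Complex.card_primitiveRoots, heven.neg_one_pow, one_mul] at h0

lemma cyclo_recip {n : ℕ} (hn : 3 ≤ n) {t : ℝ} (ht : t ≠ 0) :
    (cyclotomic n ℝ).eval t = t ^ n.totient * (cyclotomic n ℝ).eval t⁻¹ := by
  have hn0 : n ≠ 0 := by omega
  have heven : Even n.totient := Nat.totient_even (by omega)
  have key : (((cyclotomic n ℝ).eval t : ℝ) : ℂ)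
      = (t:ℂ) ^ n.totient * (((cyclotomic n ℝ).eval t⁻¹ : ℝ) : ℂ) := by
    rw [← evalC, ← evalC, evalProd hn0, evalProd hn0]
    push_cast
    calc ∏ μ ∈ primitiveRoots n ℂ, ((t:ℂ) - μ)
        = ∏ μ ∈ primitiveRoots n ℂ, (μ - (t:ℂ)) := by
          have : ∀ x ∈ primitiveRoots n ℂ, ((t:ℂ) - x) = (-1) * (x - (t:ℂ)) :=
            fun x _ => by ring
          rw [Finset.prod_congr rfl this, Finset.prod_mul_distrib, Finset.prod_const,
            Complex.card_primitiveRoots, heven.neg_one_pow, one_mul]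
      _ = ∏ μ ∈ primitiveRoots n ℂ, (μ⁻¹ * (μ - (t:ℂ))) := by
          rw [Finset.prod_mul_distrib, Finset.prod_inv_distrib, prod_primRoots hn]
          norm_num
      _ = ∏ μ ∈ primitiveRoots n ℂ, ((1:ℂ) - (t:ℂ) * μ⁻¹) := by
          apply Finset.prod_congr rfl
          intro μ hμ
          have hμ0 : μ ≠ 0 :=
            (isPrimitiveRoot_of_mem_primitiveRoots hμ).ne_zero hn0
          field_simp
      _ = ∏ μ ∈ (primitiveRoots n ℂ).image (fun x => x⁻¹), ((1:ℂ) - (t:ℂ) * μ) := by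
          rw [Finset.prod_image (fun x hx y hy h => inv_injective h)]
      _ = ∏ μ ∈ primitiveRoots n ℂ, ((1:ℂ) - (t:ℂ) * μ) := by rw [primRoots_inv hn0]
      _ = ∏ μ ∈ primitiveRoots n ℂ, ((t:ℂ) * ((t:ℂ)⁻¹ - μ)) := by
          apply Finset.prod_congr rfl
          intro μ _
          have hz : (t:ℂ) ≠ 0 := by exact_mod_cast ht
          field_simp
      _ = (t:ℂ) ^ n.totient * ∏ μ ∈ primitiveRoots n ℂ, ((t:ℂ)⁻¹ - μ) := by
          rw [Finset.prod_mul_distrib, Finset.prod_const, Complex.card_primitiveRoots]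
  have h2 := key
  push_cast at h2
  exact_mod_cast h2

lemma cyclotomic_three' : cyclotomic 3 ℝ = X^2 + X + 1 := by
  haveI : Fact (Nat.Prime 3) := ⟨by norm_num⟩
  rw [cyclotomic_prime]
  simp [Finset.sum_range_succ]
  ring

lemma cyclotomic_five' : cyclotomic 5 ℝ = X^4 + X^3 + X^2 + X + 1 := by
  haveI : Fact (Nat.Prime 5) := ⟨by norm_num⟩
  rw [cyclotomic_prime]
  simp [Finset.sum_range_succ]
  ring

lemma cyclotomic_fifteen : cyclotomic 15 ℝ = X^8 - X^7 + X^5 - X^4 + X^3 - X + 1 := by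
  have h : ∏ i ∈ (15:ℕ).divisors, cyclotomic i ℝ = X ^ 15 - 1 :=
    prod_cyclotomic_eq_X_pow_sub_one (by norm_num) ℝ
  have hdiv : (15:ℕ).divisors = {1, 3, 5, 15} := by decide
  rw [hdiv] at h
  rw [show ({1, 3, 5, 15} : Finset ℕ) = insert 1 (insert 3 (insert 5 ({15} : Finset ℕ))) from rfl] at h
  rw [Finset.prod_insert (by decide), Finset.prod_insert (by decide),
    Finset.prod_insert (by decide), Finset.prod_singleton] at h
  rw [cyclotomic_one, cyclotomic_three', cyclotomic_five'] at h
  have hg : ((X:ℝ[X]) - 1) * ((X^2 + X + 1) * ((X^4 + X^3 + X^2 + X + 1))) ≠ 0 := by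
    intro hc
    have := congrArg (eval 0) hc
    simp at this
  apply mul_left_cancel₀ hg
  rw [show ((X:ℝ[X]) - 1) * ((X^2 + X + 1) * ((X^4 + X^3 + X^2 + X + 1))) *
      ((cyclotomic 15 ℝ)) = (X - 1) * ((X^2+X+1) * ((X^4+X^3+X^2+X+1) * cyclotomic 15 ℝ)) from by
    ring, h]
  ring

end Aux


lemma sqrt3_facts : (0:ℝ) < Real.sqrt 3 / 2 ∧ Real.sqrt 3 / 2 ≤ 1 ∧
    (Real.sqrt 3 / 2)^2 = 3/4 ∧ (Real.sqrt 3/2)^5 ≤ 1/2 := by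
  have hs : Real.sqrt 3 ^ 2 = 3 := Real.sq_sqrt (by norm_num)
  have h0 : 0 < Real.sqrt 3 := Real.sqrt_pos.mpr (by norm_num)
  have h2 : Real.sqrt 3 ≤ 16/9 := by nlinarith
  have h5 : (Real.sqrt 3/2)^5 = 9 * Real.sqrt 3 / 32 := by
    have : Real.sqrt 3 ^ 5 = (Real.sqrt 3^2)^2 * Real.sqrt 3 := by ring
    rw [div_pow, this, hs]
    ring
  refine ⟨by positivity, by nlinarith, by rw [div_pow, hs]; norm_num, ?_⟩
  rw [h5]; nlinarith

lemma key_s15 : ∀ n : ℕ, 3 ≤ n → ∀ t : ℝ, |t| ≤ 1 →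
    (Real.sqrt 3 / 2) ^ n.totient ≤ (cyclotomic n ℝ).eval t := by
  intro n
  induction n using Nat.strong_induction_on with
  | _ n ih =>
  intro hn t ht
  obtain ⟨hb0, hb1, hb2, hb5⟩ := sqrt3_facts
  have hble : ∀ k l : ℕ, k ≤ l → (Real.sqrt 3/2)^l ≤ (Real.sqrt 3/2)^k :=
    fun k l h => pow_le_pow_of_le_one hb0.le hb1 h
  have ht1 : -1 ≤ t := (abs_le.mp ht).1
  have ht2 : t ≤ 1 := (abs_le.mp ht).2
  by_cases h3 : n = 3
  · subst h3
    rw [cyclotomic_three', show Nat.totient 3 = 2 from by decide, hb2]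
    simp only [eval_add, eval_pow, eval_X, eval_one]
    nlinarith [sq_nonneg (t + 1/2)]
  by_cases h5 : n = 5
  · subst h5
    rw [cyclotomic_five', show Nat.totient 5 = 4 from by decide,
      show (4:ℕ) = 2*2 from rfl, pow_mul, hb2]
    simp only [eval_add, eval_pow, eval_X, eval_one]
    nlinarith [sq_nonneg (t^2 + t/2), sq_nonneg (t + 2/3)]
  by_cases h15 : n = 15
  · subst h15
    rw [cyclotomic_fifteen, show Nat.totient 15 = 8 from by decide,
      show (8:ℕ) = 2*4 from rfl, pow_mul, hb2]
    simp only [eval_add, eval_sub, eval_pow, eval_X, eval_one]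
    have ha : (0:ℝ) ≤ 1 - t := by linarith
    have hb : (0:ℝ) ≤ 1 + t := by linarith
    nlinarith [mul_nonneg ha hb, mul_nonneg (mul_nonneg ha hb) (sq_nonneg t),
      mul_nonneg (mul_nonneg ha hb) (sq_nonneg (t^2)),
      mul_nonneg (mul_nonneg ha hb) (sq_nonneg (t^3)),
      mul_nonneg (mul_nonneg ha hb) (sq_nonneg (t^2 - t)),
      mul_nonneg (mul_nonneg ha hb) (sq_nonneg (t^3 - t)),
      sq_nonneg (t^4 - t^3), sq_nonneg (t^3 - t^2), sq_nonneg (t^2 - t), sq_nonneg (t - 1),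
      sq_nonneg (t^4 - t^3 - t^2 + t), sq_nonneg (t^2 + t), sq_nonneg (t^3 + t^2)]
  by_cases hprime : Nat.Prime n
  · haveI : Fact (Nat.Prime n) := ⟨hprime⟩
    have hn46 : n ≠ 4 ∧ n ≠ 6 := by
      constructor <;> rintro rfl <;> norm_num at hprime
    have hn7 : 7 ≤ n := by omega
    have hodd : Odd n := hprime.odd_of_ne_two (by omega)
    rw [cyclotomic_prime, eval_geom_sum, Nat.totient_prime hprime]
    have hhalf : (Real.sqrt 3/2)^(n-1) ≤ 1/2 :=
      le_trans (hble 5 (n-1) (by omega)) hb5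
    refine hhalf.trans ?_
    rcases le_or_gt 0 t with h0 | h0
    · have hge : (1:ℝ) ≤ ∑ i ∈ Finset.range n, t ^ i := by
        have hs := Finset.single_le_sum (f := fun i => t ^ i)
          (fun i _ => pow_nonneg h0 i) (Finset.mem_range.mpr (show 0 < n by omega))
        simpa using hs
      linarith
    · have hmul := geom_sum_mul t n
      have h1t : (0:ℝ) < 1 - t := by linarith
      have hprod : (∑ i ∈ Finset.range n, t ^ i) * (1 - t) = 1 - t^n := by
        linear_combination -hmul
      have htn : t ^ n ≤ 0 := hodd.pow_nonpos h0.le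
      nlinarith [hprod, htn, h1t]
  rcases Nat.even_or_odd n with he | ho
  · -- even n
    have h2n : 2 ∣ n := he.two_dvd
    set m := n / 2 with hmdef
    have hnm : n = 2 * m := by omega
    by_cases hme : 2 ∣ m
    · have hexp := cyclotomic_expand_eq_cyclotomic Nat.prime_two hme ℝ
      have heval : (cyclotomic n ℝ).eval t = (cyclotomic m ℝ).eval (t^2) := by
        rw [hnm, mul_comm 2 m, ← hexp, expand_eval]
      rw [heval]
      by_cases hm2 : m = 2
      · rw [hm2, cyclotomic_two]
        simp only [eval_add, eval_X, eval_one]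
        have h1 : (Real.sqrt 3/2)^n.totient ≤ 1 := pow_le_one₀ hb0.le hb1
        nlinarith [sq_nonneg t]
      · have hm3 : 3 ≤ m := by omega
        have hrec := ih m (by omega) hm3 (t^2)
          (by rw [abs_pow]; exact pow_le_one₀ (abs_nonneg t) ht)
        refine le_trans ?_ hrec
        exact hble _ _ (Nat.le_of_dvd (Nat.totient_pos.mpr (by omega))
          (Nat.totient_dvd_of_dvd ⟨2, by omega⟩))
    · have hmo : Odd m := Nat.odd_iff.mpr (by omega)
      have hm1 : 1 < m := by omega
      rw [hnm, cyclo_two_mul hmo hm1 t]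
      have htot : (2*m).totient = m.totient := by
        rw [Nat.totient_mul (Nat.coprime_two_left.mpr hmo), Nat.totient_two, one_mul]
      rw [htot]
      exact ih m (by omega) (by omega) (-t) (by rwa [abs_neg])
  · -- odd composite n
    by_cases hsf : Squarefree n
    · have hne : n.primeFactors.Nonempty := Nat.nonempty_primeFactors.mpr (by omega)
      set p := n.primeFactors.max' hne with hpdef
      have hpmem : p ∈ n.primeFactors := Finset.max'_mem _ hne
      have hp : p.Prime := Nat.prime_of_mem_primeFactors hpmem
      have hpn : p ∣ n := Nat.dvd_of_mem_primeFactors hpmem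
      set m := n / p with hmdef
      have hmp : n = m * p := (Nat.div_mul_cancel hpn).symm
      have hpm : ¬ p ∣ m := by
        intro hc
        obtain ⟨k, hk⟩ := hc
        have : p * p ∣ n := ⟨k, by rw [hmp, hk]; ring⟩
        exact hp.not_isUnit (hsf p this)
      have hm1 : m ≠ 1 := by
        intro hc
        rw [hc, one_mul] at hmp
        exact hprime (hmp ▸ hp)
      have hm0 : 0 < m := Nat.div_pos (Nat.le_of_dvd (by omega) hpn) hp.pos
      have hmodd : Odd m := by
        rcases Nat.even_or_odd m with hev | hod
        · exact absurd (hmp ▸ hev.mul_right p) (Nat.not_even_iff_odd.mpr ho)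
        · exact hod
      have hm3 : 3 ≤ m := by
        have := Nat.odd_iff.mp hmodd; omega
      have hmlt : m < n := hmdef ▸ Nat.div_lt_self (by omega) hp.one_lt
      have hcop : Nat.Coprime m p := (hp.coprime_iff_not_dvd.mpr hpm).symm
      have htot : n.totient = m.totient * (p - 1) := by
        rw [hmp, Nat.totient_mul hcop, Nat.totient_prime hp]
      by_cases hp7 : 7 ≤ p
      · have hexp := cyclotomic_expand_eq_cyclotomic_mul hp hpm ℝ
        have heval : (cyclotomic m ℝ).eval (t^p)
            = (cyclotomic n ℝ).eval t * (cyclotomic m ℝ).eval t := by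
          rw [← expand_eval, hexp, eval_mul, ← hmp]
        have hup : (cyclotomic m ℝ).eval t ≤ 2 ^ m.totient := cyclo_le (by omega) ht
        have hlow := ih m hmlt hm3 (t^p)
          (by rw [abs_pow]; exact pow_le_one₀ (abs_nonneg t) ht)
        have hposn : 0 < (cyclotomic n ℝ).eval t := cyclotomic_pos (by omega) t
        have hbp : 2 * (Real.sqrt 3/2)^(p-1) ≤ Real.sqrt 3/2 := by
          have h6 : (Real.sqrt 3/2)^(p-1) ≤ (Real.sqrt 3/2)^6 := hble 6 (p-1) (by omega)
          have h65 : (Real.sqrt 3/2)^6 = (Real.sqrt 3/2)^5 * (Real.sqrt 3/2) := by ring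
          nlinarith
        have hkey : (2:ℝ)^m.totient * (Real.sqrt 3/2)^n.totient
            ≤ (cyclotomic n ℝ).eval t * 2^m.totient := by
          calc (2:ℝ)^m.totient * (Real.sqrt 3/2)^n.totient
              = (2 * (Real.sqrt 3/2)^(p-1))^m.totient := by
                rw [htot, mul_comm m.totient (p-1), pow_mul, ← mul_pow]
            _ ≤ (Real.sqrt 3/2)^m.totient := pow_le_pow_left₀ (by positivity) hbp _
            _ ≤ (cyclotomic m ℝ).eval (t^p) := hlow
            _ = (cyclotomic n ℝ).eval t * (cyclotomic m ℝ).eval t := heval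
            _ ≤ (cyclotomic n ℝ).eval t * 2^m.totient :=
                mul_le_mul_of_nonneg_left hup hposn.le
        have h2pos : (0:ℝ) < 2^m.totient := by positivity
        have hkey' : (2:ℝ)^m.totient * (Real.sqrt 3/2)^n.totient
            ≤ 2^m.totient * ((cyclotomic n ℝ).eval t) := by linarith [hkey]
        exact le_of_mul_le_mul_left hkey' h2pos
      · exfalso
        have hsub : n.primeFactors ⊆ ({3, 5} : Finset ℕ) := by
          intro q hq
          have hqp : q.Prime := Nat.prime_of_mem_primeFactors hq
          have hqn : q ∣ n := Nat.dvd_of_mem_primeFactors hq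
          have hqle : q ≤ p := Finset.le_max' _ q hq
          have hq2 : q ≠ 2 := by
            rintro rfl
            rw [Nat.odd_iff] at ho
            omega
          have hq25 : 2 ≤ q := hqp.two_le
          have hq6 : q ≤ 6 := by omega
          have : q = 3 ∨ q = 5 := by
            interval_cases q
            · exact absurd rfl hq2
            · exact Or.inl rfl
            · exact absurd hqp (by decide)
            · exact Or.inr rfl
            · exact absurd hqp (by decide)
          rcases this with rfl | rfl <;> decide
        have hdvd : n ∣ 15 := by
          have hprod := Nat.prod_primeFactors_of_squarefree hsf
          calc n = ∏ q ∈ n.primeFactors, q := hprod.symm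
            _ ∣ ∏ q ∈ ({3,5} : Finset ℕ), q := Finset.prod_dvd_prod_of_subset _ _ _ hsub
            _ = 15 := by decide
        have hmem : n ∈ Nat.divisors 15 := Nat.mem_divisors.mpr ⟨hdvd, by norm_num⟩
        rw [show Nat.divisors 15 = {1,3,5,15} from by decide] at hmem
        fin_cases hmem
        · omega
        · exact h3 rfl
        · exact h5 rfl
        · exact h15 rfl
    · rw [Nat.squarefree_iff_prime_squarefree] at hsf
      push_neg at hsf
      obtain ⟨p, hp, hpp⟩ := hsf
      have hpn : p ∣ n := dvd_trans (dvd_mul_right p p) hpp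
      set m := n / p with hmdef
      have hmp : n = m * p := (Nat.div_mul_cancel hpn).symm
      have hpm : p ∣ m := by
        have h1 : p * p ∣ m * p := hmp ▸ hpp
        exact (mul_dvd_mul_iff_right (show p ≠ 0 by have := hp.pos; omega)).mp h1
      have hp2 : p ≠ 2 := by
        rintro rfl
        rw [Nat.odd_iff] at ho
        omega
      have hp3 : 3 ≤ p := by have := hp.two_le; omega
      have hm0 : 0 < m := Nat.div_pos (Nat.le_of_dvd (by omega) hpn) hp.pos
      have hm3 : 3 ≤ m := le_trans hp3 (Nat.le_of_dvd hm0 hpm)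
      have hmlt : m < n := hmdef ▸ Nat.div_lt_self (by omega) hp.one_lt
      have hexp := cyclotomic_expand_eq_cyclotomic hp hpm ℝ
      have heval : (cyclotomic n ℝ).eval t = (cyclotomic m ℝ).eval (t^p) := by
        rw [hmp, ← hexp, expand_eval]
      rw [heval]
      refine le_trans (hble _ _ (Nat.le_of_dvd (Nat.totient_pos.mpr (by omega))
        (Nat.totient_dvd_of_dvd ⟨p, hmp⟩))) (ih m hmlt hm3 (t^p)
        (by rw [abs_pow]; exact pow_le_one₀ (abs_nonneg t) ht))


lemma main_all (n : ℕ) (hn : 3 ≤ n) (t : ℝ) :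
    (Real.sqrt 3 / 2) ^ n.totient ≤ (cyclotomic n ℝ).eval t := by
  obtain ⟨hb0, hb1, hb2, hb5⟩ := sqrt3_facts
  rcases le_or_gt |t| 1 with h | h
  · exact key_s15 n hn t h
  · have ht0 : t ≠ 0 := by
      intro h0; rw [h0, abs_zero] at h; linarith
    have hinv : |t⁻¹| ≤ 1 := by
      rw [abs_inv]
      exact inv_le_one_of_one_le₀ h.le
    have h2 := key_s15 n hn t⁻¹ hinv
    have hpow : (1:ℝ) ≤ t ^ n.totient := by
      rw [← (Nat.totient_even (by omega : 2 < n)).pow_abs t]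
      exact one_le_pow₀ h.le
    rw [cyclo_recip hn ht0]
    have hnn : (0:ℝ) ≤ (cyclotomic n ℝ).eval t⁻¹ := le_trans (by positivity) h2
    calc (Real.sqrt 3 / 2) ^ n.totient ≤ (cyclotomic n ℝ).eval t⁻¹ := h2
      _ = 1 * (cyclotomic n ℝ).eval t⁻¹ := (one_mul _).symm
      _ ≤ t ^ n.totient * (cyclotomic n ℝ).eval t⁻¹ := mul_le_mul_of_nonneg_right hpow hnn

/-- `cₙ`: the infimum over the reals of the cyclotomic polynomial `φₙ`. -/
noncomputable def cycInf (n : ℕ) : ℝ :=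
  sInf (Set.range fun t : ℝ => (Polynomial.cyclotomic n ℝ).eval t)

theorem stmt15 :
    (∀ n : ℕ, 3 ≤ n → (Real.sqrt 3 / 2) ^ n.totient ≤ cycInf n) ∧
    cycInf 3 = (Real.sqrt 3 / 2) ^ Nat.totient 3 ∧ cycInf 3 = 3 / 4 := by
  have h34 : (Real.sqrt 3 / 2) ^ Nat.totient 3 = 3 / 4 := by
    rw [show Nat.totient 3 = 2 from by decide, (sqrt3_facts).2.2.1]
  have hlow : ∀ n : ℕ, 3 ≤ n → (Real.sqrt 3 / 2) ^ n.totient ≤ cycInf n := by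
    intro n hn
    apply le_csInf (Set.range_nonempty _)
    rintro y ⟨t, rfl⟩
    exact main_all n hn t
  have hc3 : cycInf 3 = 3/4 := by
    apply le_antisymm
    · apply csInf_le
      · refine ⟨3/4, ?_⟩
        rintro y ⟨t, rfl⟩
        have h := main_all 3 (by norm_num) t
        rwa [h34] at h
      · refine ⟨-(1/2), ?_⟩
        rw [cyclotomic_three']
        simp only [eval_add, eval_pow, eval_X, eval_one]
        norm_num
    · apply le_csInf (Set.range_nonempty _)
      rintro y ⟨t, rfl⟩
      have h := main_all 3 (by norm_num) t
      rwa [h34] at h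
  exact ⟨hlow, by rw [hc3, h34], hc3⟩
end
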